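/- arXiv:1006.2712 — 5 statements merged into one kernel-verified Lean document; each statement's English description precedes it below -/
import Mathlib

section
/- For every β > 0 and t ≥ 0, the absolute survival probability averaged over an exponentially distributed initial surplus satisfies ∫_0^∞ β e^{−βx} P(τ_0 > t | X_0 = x) dx = exp( − ∫_0^t φ(β e^{−rs}) ds ). -/
open MeasureTheory ProbabilityTheory Filter
open scoped ENNReal

open Classical in
/-- The Lebesgue–Stieltjes measure associated to a path `g : ℝ → ℝ`, when `g` is
nondecreasing and right-continuous (and the zero measure otherwise). -/
noncomputable def stMeasure (g : ℝ → ℝ) : Measure ℝ :=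
  if h : Monotone g ∧ ∀ x, ContinuousWithinAt g (Set.Ici x) x then
    StieltjesFunction.measure ⟨g, h.1, h.2⟩
  else 0

/-- The pathwise Lebesgue–Stieltjes integral `∫_0^t f(s) dg(s)`. -/
noncomputable def lsInt (g : ℝ → ℝ) (f : ℝ → ℝ) (t : ℝ) : ℝ :=
  ∫ s in Set.Ioc 0 t, f s ∂(stMeasure g)

/-- The OU-type risk process at time `t`, started at `x`, driven by the path `g`:
`X_t = e^{rt} (x - ∫_0^t e^{-rs} dg(s))`. -/
noncomputable def OU (r x : ℝ) (g : ℝ → ℝ) (t : ℝ) : ℝ :=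
  Real.exp (r * t) * (x - lsInt g (fun s => Real.exp (-(r * s))) t)

/-- The absolute ruin time `τ₀ = inf {s > 0 : X_s < 0}`, valued in `ℝ≥0∞`
(with `τ₀ = ∞` if ruin never occurs). -/
noncomputable def ruinTime (r x : ℝ) (g : ℝ → ℝ) : ℝ≥0∞ :=
  ⨅ s ∈ {s : ℝ | 0 < s ∧ OU r x g s < 0}, ENNReal.ofReal s

namespace Stmt1Aux
lemma prob_eq_one_of_ae {Ω : Type*} [MeasurableSpace Ω] (μ : Measure Ω)
    [IsProbabilityMeasure μ] {s : Set Ω} (h : ∀ᵐ ω ∂μ, ω ∈ s) : μ s = 1 := by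
  have h0 : μ sᶜ = 0 := by
    have := ae_iff.1 h
    exact this
  have h2 : (1:ℝ≥0∞) ≤ μ s := by
    have h3 := measure_union_le (μ := μ) s sᶜ
    rw [Set.union_compl_self, measure_univ, h0, add_zero] at h3
    exact h3
  exact le_antisymm prob_le_one h2

variable {g : ℝ → ℝ}

lemma stMeasure_Ioc (hg : Monotone g ∧ ∀ x, ContinuousWithinAt g (Set.Ici x) x)
    (a b : ℝ) : stMeasure g (Set.Ioc a b) = ENNReal.ofReal (g b - g a) := by
  rw [stMeasure, dif_pos hg]
  exact StieltjesFunction.measure_Ioc ⟨g, hg.1, hg.2⟩ a b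

lemma isFinite_restrict (hg : Monotone g ∧ ∀ x, ContinuousWithinAt g (Set.Ici x) x)
    (a b : ℝ) : IsFiniteMeasure ((stMeasure g).restrict (Set.Ioc a b)) := by
  constructor
  rw [Measure.restrict_apply_univ, stMeasure_Ioc hg]
  exact ENNReal.ofReal_lt_top

lemma integrableOn_of_bounded (hg : Monotone g ∧ ∀ x, ContinuousWithinAt g (Set.Ici x) x)
    {f : ℝ → ℝ} {a b C : ℝ} (hf : Measurable f)
    (hC : ∀ s ∈ Set.Ioc a b, |f s| ≤ C) :
    IntegrableOn f (Set.Ioc a b) (stMeasure g) := by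
  haveI := isFinite_restrict hg a b
  refine Integrable.mono' (integrable_const C) hf.aestronglyMeasurable ?_
  exact (ae_restrict_iff' measurableSet_Ioc).2 (Filter.Eventually.of_forall fun s hs => by
    simpa [Real.norm_eq_abs] using hC s hs)

lemma integrableOn_exp (hg : Monotone g ∧ ∀ x, ContinuousWithinAt g (Set.Ici x) x)
    {r : ℝ} (hr : 0 < r) {a b : ℝ} (ha : 0 ≤ a) :
    IntegrableOn (fun s => Real.exp (-(r * s))) (Set.Ioc a b) (stMeasure g) := by
  refine integrableOn_of_bounded hg (by fun_prop) (C := 1) fun s hs => ?_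
  rw [abs_of_pos (Real.exp_pos _)]
  refine Real.exp_le_one_iff.2 ?_
  have : (0:ℝ) < s := lt_of_le_of_lt ha hs.1
  nlinarith

lemma lsInt_zero (f : ℝ → ℝ) : lsInt g f 0 = 0 := by
  rw [lsInt, Set.Ioc_self, Measure.restrict_empty, integral_zero_measure]

lemma lsInt_nonneg (r t : ℝ) : 0 ≤ lsInt g (fun s => Real.exp (-(r * s))) t :=
  setIntegral_nonneg measurableSet_Ioc fun s _ => (Real.exp_pos _).le

lemma lsInt_mono (hg : Monotone g ∧ ∀ x, ContinuousWithinAt g (Set.Ici x) x)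
    {r : ℝ} (hr : 0 < r) {s t : ℝ} (hst : s ≤ t) :
    lsInt g (fun u => Real.exp (-(r * u))) s ≤ lsInt g (fun u => Real.exp (-(r * u))) t := by
  refine setIntegral_mono_set (integrableOn_exp hg hr le_rfl)
    (Filter.Eventually.of_forall fun u => (Real.exp_pos _).le) ?_
  exact HasSubset.Subset.eventuallyLE (Set.Ioc_subset_Ioc le_rfl hst)

lemma lsInt_le_add (hg : Monotone g ∧ ∀ x, ContinuousWithinAt g (Set.Ici x) x)
    {r : ℝ} (hr : 0 < r) {t u : ℝ} (ht : 0 ≤ t) (htu : t ≤ u) :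
    lsInt g (fun s => Real.exp (-(r * s))) u
      ≤ lsInt g (fun s => Real.exp (-(r * s))) t + (g u - g t) := by
  have hsplit : Set.Ioc (0:ℝ) u = Set.Ioc 0 t ∪ Set.Ioc t u :=
    (Set.Ioc_union_Ioc_eq_Ioc ht htu).symm
  have hint2 : IntegrableOn (fun s => Real.exp (-(r * s))) (Set.Ioc t u) (stMeasure g) :=
    integrableOn_exp hg hr ht
  rw [lsInt, lsInt, hsplit,
    setIntegral_union (Set.Ioc_disjoint_Ioc_of_le le_rfl) measurableSet_Ioc
      (integrableOn_exp hg hr le_rfl) hint2]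
  have h1 : ∫ s in Set.Ioc t u, Real.exp (-(r * s)) ∂(stMeasure g) ≤ g u - g t := by
    calc ∫ s in Set.Ioc t u, Real.exp (-(r * s)) ∂(stMeasure g)
        ≤ ∫ _ in Set.Ioc t u, (1:ℝ) ∂(stMeasure g) := by
          refine setIntegral_mono_on hint2
            (integrableOn_of_bounded hg measurable_const (C := 1)
              (fun s _ => by simp)) measurableSet_Ioc fun s hs => ?_
          refine Real.exp_le_one_iff.2 ?_
          have h0 : (0:ℝ) < s := lt_of_le_of_lt ht hs.1
          nlinarith
      _ = (stMeasure g (Set.Ioc t u)).toReal := by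
          rw [setIntegral_const, smul_eq_mul, mul_one]; rfl
      _ = g u - g t := by
          rw [stMeasure_Ioc hg, ENNReal.toReal_ofReal (sub_nonneg.2 (hg.1 htu))]
  linarith

lemma ruinTime_gt (hg : Monotone g ∧ ∀ x, ContinuousWithinAt g (Set.Ici x) x)
    {r x t : ℝ} (hr : 0 < r) (hx : 0 < x) (ht : 0 ≤ t)
    (h : lsInt g (fun s => Real.exp (-(r * s))) t < x) :
    ENNReal.ofReal t < ruinTime r x g := by
  obtain ⟨u, hu1, hu2⟩ :
      ∃ u, (g u - g t < x - lsInt g (fun s => Real.exp (-(r * s))) t) ∧ u ∈ Set.Ioi t := by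
    have h1 : Tendsto (fun s => g s - g t) (nhdsWithin t (Set.Ioi t)) (nhds 0) := by
      have h2 : Tendsto g (nhdsWithin t (Set.Ioi t)) (nhds (g t)) :=
        (hg.2 t).mono_left (nhdsWithin_mono _ Set.Ioi_subset_Ici_self)
      simpa using h2.sub (tendsto_const_nhds (x := g t))
    have h3 : ∀ᶠ s in nhdsWithin t (Set.Ioi t),
        g s - g t < x - lsInt g (fun s => Real.exp (-(r * s))) t :=
      h1.eventually_lt_const (by linarith)
    exact (h3.and (eventually_mem_nhdsWithin)).exists
  have hu0 : 0 ≤ u := ht.trans (le_of_lt hu2)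
  have hAu : lsInt g (fun s => Real.exp (-(r * s))) u < x := by
    have := lsInt_le_add hg hr ht (le_of_lt hu2)
    linarith
  have hle : ENNReal.ofReal u ≤ ruinTime r x g := by
    unfold ruinTime
    refine le_iInf₂ fun s hs => ?_
    have hs2 : x < lsInt g (fun v => Real.exp (-(r * v))) s := by
      have h4 := hs.2
      rw [OU] at h4
      nlinarith [Real.exp_pos (r * s)]
    have hus : u ≤ s := by
      by_contra hcon
      push_neg at hcon
      have := lsInt_mono hg hr (le_of_lt hcon)
      linarith
    exact ENNReal.ofReal_le_ofReal hus
  refine lt_of_lt_of_le ?_ hle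
  exact (ENNReal.ofReal_lt_ofReal_iff (lt_of_le_of_lt ht hu2)).2 hu2

lemma ruinTime_le {r x t : ℝ} (hx : 0 < x)
    (h : x < lsInt g (fun s => Real.exp (-(r * s))) t) :
    ruinTime r x g ≤ ENNReal.ofReal t := by
  have ht : 0 < t := by
    by_contra hcon
    push_neg at hcon
    rw [lsInt, Set.Ioc_eq_empty (not_lt.2 hcon), Measure.restrict_empty, integral_zero_measure] at h
    linarith
  unfold ruinTime
  exact iInf₂_le t ⟨ht, by rw [OU]; exact mul_neg_of_pos_of_neg (Real.exp_pos _) (by linarith)⟩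

lemma integral_Ioi_exp {β : ℝ} (hβ : 0 < β) (a : ℝ) :
    ∫ x in Set.Ioi a, β * Real.exp (-(β * x)) = Real.exp (-(β * a)) := by
  have hint : IntegrableOn (fun x => β * Real.exp (-(β * x))) (Set.Ioi a) := by
    have := (exp_neg_integrableOn_Ioi a hβ).const_mul β
    simpa [neg_mul, IntegrableOn] using this
  have hderiv : ∀ x ∈ Set.Ioi a,
      HasDerivAt (fun x => -Real.exp (-(β * x))) (β * Real.exp (-(β * x))) x := by
    intro x _
    have h1 : HasDerivAt (fun x : ℝ => -(β * x)) (-β) x := by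
      have := ((hasDerivAt_id x).const_mul β).neg; rwa [mul_one] at this
    have h2 := (Real.hasDerivAt_exp (-(β * x))).comp x h1
    have h3 := h2.neg
    have e : -(Real.exp (-(β * x)) * -β) = β * Real.exp (-(β * x)) := by ring
    rw [e] at h3; exact h3
  have htend : Tendsto (fun x => -Real.exp (-(β * x))) atTop (nhds 0) := by
    have h1 : Tendsto (fun x : ℝ => -(β * x)) atTop atBot := by
      apply tendsto_neg_atBot_iff.2
      exact Tendsto.const_mul_atTop hβ tendsto_id
    have h2 := Real.tendsto_exp_atBot.comp h1
    simpa using h2.neg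
  have := integral_Ioi_of_hasDerivAt_of_tendsto
    (f := fun x => -Real.exp (-(β * x))) (f' := fun x => β * Real.exp (-(β * x)))
    (by fun_prop : Continuous fun x => -Real.exp (-(β * x))).continuousWithinAt
    hderiv hint htend
  rw [this]; ring

lemma inner_exp {β : ℝ} (hβ : 0 < β) {a : ℝ} (ha : 0 ≤ a) :
    ∫⁻ x in Set.Ioi (0:ℝ),
        ENNReal.ofReal (β * Real.exp (-(β * x))) * (if a ≤ x then (1:ℝ≥0∞) else 0)
      = ENNReal.ofReal (Real.exp (-(β * a))) := by
  have h1 : ∀ x : ℝ, ENNReal.ofReal (β * Real.exp (-(β * x))) * (if a ≤ x then (1:ℝ≥0∞) else 0)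
      = Set.indicator (Set.Ici a) (fun x => ENNReal.ofReal (β * Real.exp (-(β * x)))) x := by
    intro x; by_cases h : a ≤ x <;> simp [h, Set.indicator_apply, Set.mem_Ici]
  rw [lintegral_congr h1, lintegral_indicator measurableSet_Ici,
    Measure.restrict_restrict measurableSet_Ici]
  have hset : (Set.Ici a ∩ Set.Ioi 0 : Set ℝ) =ᵐ[volume] (Set.Ioi a : Set ℝ) := by
    rw [MeasureTheory.ae_eq_set]
    constructor
    · refine measure_mono_null (t := {a}) (fun x hx => ?_) Real.volume_singleton
      rcases hx with ⟨⟨hx1, _⟩, hx3⟩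
      simp only [Set.mem_Ioi, not_lt] at hx3
      exact Set.mem_singleton_iff.2 (le_antisymm hx3 hx1)
    · have : (Set.Ioi a \ (Set.Ici a ∩ Set.Ioi 0) : Set ℝ) = ∅ := by
        ext x
        simp only [Set.mem_diff, Set.mem_Ioi, Set.mem_inter_iff, Set.mem_Ici,
          Set.mem_empty_iff_false, iff_false, not_and, and_imp]
        intro hx h2
        exact h2 hx.le (lt_of_le_of_lt ha hx)
      rw [this]; exact measure_empty
  rw [Measure.restrict_congr_set hset]
  have hint : IntegrableOn (fun x => β * Real.exp (-(β * x))) (Set.Ioi a) := by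
    have := (exp_neg_integrableOn_Ioi a hβ).const_mul β
    simpa [neg_mul, IntegrableOn] using this
  rw [← ofReal_integral_eq_lintegral_ofReal hint
    (Filter.Eventually.of_forall fun x => by positivity)]
  rw [integral_Ioi_exp hβ a]

variable {ν : Measure ℝ} {φ : ℝ → ℝ}

lemma minIntegrable (hν : ∫⁻ y in Set.Ioi (0:ℝ), ENNReal.ofReal (min 1 y) ∂ν < ⊤) (C : ℝ) :
    IntegrableOn (fun y => C * min 1 y) (Set.Ioi 0) ν := by
  constructor
  · exact (measurable_const.mul (measurable_const.min measurable_id)).aestronglyMeasurable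
  · rw [hasFiniteIntegral_iff_norm]
    calc ∫⁻ y in Set.Ioi (0:ℝ), ENNReal.ofReal ‖C * min 1 y‖ ∂ν
        ≤ ∫⁻ y in Set.Ioi (0:ℝ), ENNReal.ofReal |C| * ENNReal.ofReal (min 1 y) ∂ν := by
          refine lintegral_mono_ae ((ae_restrict_iff' measurableSet_Ioi).2
            (Filter.Eventually.of_forall fun y hy => ?_))
          rw [← ENNReal.ofReal_mul (abs_nonneg C)]
          refine ENNReal.ofReal_le_ofReal ?_
          rw [Real.norm_eq_abs, abs_mul]
          have : |min 1 y| = min 1 y := abs_of_nonneg (le_min one_pos.le (le_of_lt hy))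
          rw [this]
      _ = ENNReal.ofReal |C| * ∫⁻ y in Set.Ioi (0:ℝ), ENNReal.ofReal (min 1 y) ∂ν := by
          rw [lintegral_const_mul' _ _ ENNReal.ofReal_ne_top]
      _ < ⊤ := ENNReal.mul_lt_top ENNReal.ofReal_lt_top hν

lemma exp_norm_bound {b y C : ℝ} (hb : 0 ≤ b) (hy : 0 < y) (hC : b ≤ C) (hC1 : 1 ≤ C) :
    ‖1 - Real.exp (-(b * y))‖ ≤ C * min 1 y := by
  have h0 : Real.exp (-(b * y)) ≤ 1 := Real.exp_le_one_iff.2 (by nlinarith)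
  have h1 : 1 - Real.exp (-(b * y)) ≤ b * y := by
    have := Real.add_one_le_exp (-(b * y))
    linarith
  rw [Real.norm_eq_abs, abs_of_nonneg (by linarith)]
  rcases le_total y 1 with hy1 | hy1
  · rw [min_eq_right hy1]
    calc 1 - Real.exp (-(b * y)) ≤ b * y := h1
      _ ≤ C * y := mul_le_mul_of_nonneg_right hC hy.le
  · rw [min_eq_left hy1]
    calc 1 - Real.exp (-(b * y)) ≤ 1 := by
          have := Real.exp_pos (-(b * y)); linarith
      _ ≤ C * 1 := by rw [mul_one]; exact hC1

lemma phi_integrand_integrable (hν : ∫⁻ y in Set.Ioi (0:ℝ), ENNReal.ofReal (min 1 y) ∂ν < ⊤)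
    {b : ℝ} (hb : 0 ≤ b) :
    IntegrableOn (fun y => 1 - Real.exp (-(b * y))) (Set.Ioi 0) ν := by
  refine (minIntegrable hν (max 1 b)).mono' ?_ ?_
  · exact (Continuous.aestronglyMeasurable (by fun_prop))
  · exact (ae_restrict_iff' measurableSet_Ioi).2 (Filter.Eventually.of_forall fun y hy =>
      exp_norm_bound hb hy (le_max_right 1 b) (le_max_left 1 b))

lemma phi_nonneg (hφ : ∀ b ≥ (0:ℝ), φ b = ∫ y in Set.Ioi (0:ℝ), (1 - Real.exp (-(b * y))) ∂ν)
    {b : ℝ} (hb : 0 ≤ b) : 0 ≤ φ b := by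
  rw [hφ b hb]
  refine setIntegral_nonneg measurableSet_Ioi fun y hy => ?_
  have : Real.exp (-(b * y)) ≤ 1 := Real.exp_le_one_iff.2 (by nlinarith [Set.mem_Ioi.1 hy])
  linarith

lemma phi_mono (hν : ∫⁻ y in Set.Ioi (0:ℝ), ENNReal.ofReal (min 1 y) ∂ν < ⊤)
    (hφ : ∀ b ≥ (0:ℝ), φ b = ∫ y in Set.Ioi (0:ℝ), (1 - Real.exp (-(b * y))) ∂ν)
    {b1 b2 : ℝ} (h0 : 0 ≤ b1) (h12 : b1 ≤ b2) : φ b1 ≤ φ b2 := by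
  rw [hφ _ h0, hφ _ (h0.trans h12)]
  refine setIntegral_mono_on (phi_integrand_integrable hν h0)
    (phi_integrand_integrable hν (h0.trans h12)) measurableSet_Ioi fun y hy => ?_
  have hy0 : (0:ℝ) < y := hy
  have : Real.exp (-(b2 * y)) ≤ Real.exp (-(b1 * y)) := Real.exp_le_exp.2 (by nlinarith)
  linarith

lemma phi_continuousAt (hν : ∫⁻ y in Set.Ioi (0:ℝ), ENNReal.ofReal (min 1 y) ∂ν < ⊤)
    (hφ : ∀ b ≥ (0:ℝ), φ b = ∫ y in Set.Ioi (0:ℝ), (1 - Real.exp (-(b * y))) ∂ν)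
    {b0 : ℝ} (hb0 : 0 < b0) : ContinuousAt φ b0 := by
  have key : ContinuousAt (fun b => ∫ y in Set.Ioi (0:ℝ), (1 - Real.exp (-(b * y))) ∂ν) b0 := by
    refine continuousAt_of_dominated ?_ ?_ (minIntegrable hν (max 1 (b0 + 1))) ?_
    · exact Filter.Eventually.of_forall fun b =>
        Continuous.aestronglyMeasurable (by fun_prop)
    · have hev : ∀ᶠ b in nhds b0, b ∈ Set.Ioo 0 (b0 + 1) :=
        isOpen_Ioo.eventually_mem ⟨hb0, by linarith⟩
      filter_upwards [hev] with b hb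
      exact (ae_restrict_iff' measurableSet_Ioi).2 (Filter.Eventually.of_forall fun y hy =>
        exp_norm_bound hb.1.le hy (le_max_of_le_right hb.2.le) (le_max_left _ _))
    · exact Filter.Eventually.of_forall fun y =>
        (Continuous.continuousAt (by fun_prop))
  have heq : φ =ᶠ[nhds b0] fun b => ∫ y in Set.Ioi (0:ℝ), (1 - Real.exp (-(b * y))) ∂ν := by
    filter_upwards [isOpen_Ioi.eventually_mem hb0] with b hb
    exact hφ b (le_of_lt hb)
  exact key.congr heq.symm

noncomputable def pc (r t : ℝ) (n i : ℕ) : ℝ := Real.exp (-(r * ((i : ℝ) * (t / n))))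

noncomputable def stepF (t : ℝ) (n : ℕ) (v : ℕ → ℝ) : ℝ → ℝ :=
  fun s => ∑ i ∈ Finset.range n,
    Set.indicator (Set.Ioc ((i : ℝ) * (t / n)) (((i : ℝ) + 1) * (t / n))) (fun _ => v i) s

lemma stepF_meas {t : ℝ} {n : ℕ} {v : ℕ → ℝ} : Measurable (stepF t n v) :=
  Finset.measurable_sum _ fun _ _ => measurable_const.indicator measurableSet_Ioc

lemma piece_subset {t : ℝ} (ht : 0 < t) {n : ℕ} (hn : 1 ≤ n) {i : ℕ} (hi : i < n) :
    Set.Ioc ((i : ℝ) * (t / n)) (((i : ℝ) + 1) * (t / n)) ⊆ Set.Ioc 0 t := by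
  have hn0 : (0:ℝ) < n := by exact_mod_cast hn
  apply Set.Ioc_subset_Ioc
  · positivity
  · have h1 : (i : ℝ) + 1 ≤ n := by exact_mod_cast hi
    calc ((i : ℝ) + 1) * (t / n) ≤ (n : ℝ) * (t / n) :=
          mul_le_mul_of_nonneg_right h1 (by positivity)
      _ = t := by field_simp

lemma piece_unique {t : ℝ} (ht : 0 < t) {n : ℕ} (hn : 1 ≤ n) {s : ℝ}
    (hs0 : 0 < s) (hst : s ≤ t) :
    ∃ k : ℕ, k < n ∧ ((k : ℝ) * (t / n) < s ∧ s ≤ ((k : ℝ) + 1) * (t / n)) ∧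
      ∀ j : ℕ, (j : ℝ) * (t / n) < s → s ≤ ((j : ℝ) + 1) * (t / n) → j = k := by
  have hn0 : (0:ℝ) < (n:ℝ) := by exact_mod_cast hn
  have htn : 0 < t / n := div_pos ht hn0
  set u : ℝ := s * n / t with hu
  have hu0 : 0 < u := by positivity
  have hus : u * (t / n) = s := by rw [hu]; field_simp
  have hun : u ≤ n := by
    rw [hu, div_le_iff₀ ht]
    nlinarith
  set K : ℤ := ⌈u⌉ with hK
  have hK1 : 1 ≤ K := Int.ceil_pos.mpr hu0
  have hKn : K ≤ (n : ℤ) := Int.ceil_le.mpr (by exact_mod_cast hun)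
  have hcast : (((K - 1).toNat : ℝ)) = (K : ℝ) - 1 := by
    have h0 : ((K - 1).toNat : ℤ) = K - 1 := Int.toNat_of_nonneg (by omega)
    exact_mod_cast congrArg (Int.cast : ℤ → ℝ) h0
  refine ⟨(K - 1).toNat, by omega, ⟨?_, ?_⟩, ?_⟩
  · rw [hcast, ← hus]
    have hlt : (K : ℝ) - 1 < u := by
      have := Int.ceil_lt_add_one u
      rw [← hK] at this
      linarith
    exact mul_lt_mul_of_pos_right hlt htn
  · rw [show (((K - 1).toNat : ℝ)) + 1 = (K : ℝ) by rw [hcast]; ring, ← hus]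
    exact mul_le_mul_of_nonneg_right (Int.le_ceil u) htn.le
  · intro j hj1 hj2
    rw [← hus] at hj1 hj2
    have h1 : (j : ℝ) < u := lt_of_mul_lt_mul_right hj1 htn.le
    have h2 : u ≤ (j : ℝ) + 1 := le_of_mul_le_mul_right hj2 htn
    have hKj : K ≤ (j : ℤ) + 1 := Int.ceil_le.mpr (by push_cast; linarith)
    have hjK : (j : ℤ) < K := by
      have h3 : ((j : ℤ) : ℝ) < (K : ℝ) := lt_of_lt_of_le h1 (Int.le_ceil u)
      exact_mod_cast h3
    omega

lemma stepF_eval {t : ℝ} {n : ℕ} (v : ℕ → ℝ) {s : ℝ} {k : ℕ} (hk : k < n)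
    (hmem : (k : ℝ) * (t / n) < s ∧ s ≤ ((k : ℝ) + 1) * (t / n))
    (huniq : ∀ j : ℕ, (j : ℝ) * (t / n) < s → s ≤ ((j : ℝ) + 1) * (t / n) → j = k) :
    stepF t n v s = v k := by
  rw [stepF, Finset.sum_eq_single_of_mem k (Finset.mem_range.2 hk)]
  · exact Set.indicator_of_mem (Set.mem_Ioc.2 hmem) _
  · intro j _ hjk
    exact Set.indicator_of_notMem (fun hm => hjk (huniq j hm.1 hm.2)) _

lemma stepF_zero_outside {t : ℝ} {n : ℕ} {v : ℕ → ℝ} (ht : 0 < t) (hn : 1 ≤ n) {s : ℝ}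
    (hs : s ∉ Set.Ioc 0 t) : stepF t n v s = 0 :=
  Finset.sum_eq_zero fun i hi => Set.indicator_of_notMem
    (fun hm => hs (piece_subset ht hn (Finset.mem_range.1 hi) hm)) _

lemma stepF_integral {t : ℝ} (ht : 0 < t) {n : ℕ} (hn : 1 ≤ n) (v : ℕ → ℝ) (m : Measure ℝ)
    (hfin : ∀ i : ℕ, m (Set.Ioc ((i : ℝ) * (t / n)) (((i : ℝ) + 1) * (t / n))) < ⊤) :
    ∫ s in Set.Ioc 0 t, stepF t n v s ∂m
      = ∑ i ∈ Finset.range n,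
          v i * (m (Set.Ioc ((i : ℝ) * (t / n)) (((i : ℝ) + 1) * (t / n)))).toReal := by
  rw [setIntegral_eq_integral_of_forall_compl_eq_zero
    (fun x hx => stepF_zero_outside ht hn hx)]
  rw [show (fun s => stepF t n v s) = fun s => ∑ i ∈ Finset.range n,
      Set.indicator (Set.Ioc ((i : ℝ) * (t / n)) (((i : ℝ) + 1) * (t / n))) (fun _ => v i) s
      from rfl]
  rw [integral_finset_sum _ (fun i _ => (integrable_indicator_iff measurableSet_Ioc).2
    (integrableOn_const (hfin i).ne))]
  refine Finset.sum_congr rfl fun i _ => ?_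
  rw [integral_indicator measurableSet_Ioc, setIntegral_const, smul_eq_mul, mul_comm]; rfl

lemma pc_pos {r t : ℝ} {n i : ℕ} : 0 < pc r t n i := Real.exp_pos _

lemma pc_le_one {r t : ℝ} (hr : 0 < r) (ht : 0 ≤ t) {n i : ℕ} : pc r t n i ≤ 1 := by
  refine Real.exp_le_one_iff.2 ?_
  have h1 : (0:ℝ) ≤ (i : ℝ) * (t / n) := by positivity
  nlinarith

lemma stepA_tendsto {r t : ℝ} (hr : 0 < r) (ht : 0 < t) {s : ℝ} (hs0 : 0 < s) (hst : s ≤ t) :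
    Tendsto (fun n => stepF t n (pc r t n) s) atTop (nhds (Real.exp (-(r * s)))) := by
  rw [tendsto_iff_norm_sub_tendsto_zero]
  refine squeeze_zero' (g := fun n : ℕ => r * t / n) (Filter.Eventually.of_forall fun n => norm_nonneg _) ?_ ?_
  · -- bound by (r * t) / n eventually
    filter_upwards [eventually_ge_atTop 1] with n hn
    obtain ⟨k, hk, hmem, huniq⟩ := piece_unique ht hn hs0 hst
    rw [stepF_eval _ hk hmem huniq]
    have hn0 : (0:ℝ) < (n:ℝ) := by exact_mod_cast hn
    have htn : 0 < t / n := div_pos ht hn0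
    set a : ℝ := (k : ℝ) * (t / n) with ha
    have ha0 : 0 ≤ a := by positivity
    have has : a < s := hmem.1
    have hsa : s ≤ a + t / n := by
      have h2 := hmem.2
      have : ((k : ℝ) + 1) * (t / n) = a + t / n := by rw [ha]; ring
      linarith
    have e1 : Real.exp (-(r * s)) ≤ Real.exp (-(r * a)) := Real.exp_le_exp.2 (by nlinarith)
    have e2 : Real.exp (-(r * s)) = Real.exp (-(r * a)) * Real.exp (-(r * (s - a))) := by
      rw [← Real.exp_add]; ring_nf
    have e3 : 1 - r * (s - a) ≤ Real.exp (-(r * (s - a))) := by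
      have := Real.add_one_le_exp (-(r * (s - a)))
      linarith
    have e4 : Real.exp (-(r * a)) ≤ 1 := Real.exp_le_one_iff.2 (by nlinarith)
    have e6 : Real.exp (-(r * (s - a))) ≤ 1 := Real.exp_le_one_iff.2 (by nlinarith)
    have hdivps : r * t / (n : ℝ) = r * (t / n) := by ring
    rw [Real.norm_eq_abs, abs_of_nonneg (by rw [pc]; linarith)]
    rw [pc]
    rw [hdivps]
    have h5 : r * (s - a) ≤ r * (t / n) := by nlinarith
    nlinarith [Real.exp_pos (-(r * a))]
  · have := tendsto_const_div_atTop_nhds_zero_nat (r * t)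
    simpa [div_eq_mul_inv] using this

lemma integral_prod_indep {Ω ι : Type*} [MeasurableSpace Ω] {μ : Measure Ω}
    [IsProbabilityMeasure μ] {Y : ι → Ω → ℝ} (hY : ∀ i, Measurable (Y i))
    (hind : iIndepFun Y μ) (s : Finset ι) :
    ∫ ω, ∏ i ∈ s, Y i ω ∂μ = ∏ i ∈ s, ∫ ω, Y i ω ∂μ := by
  classical
  induction s using Finset.induction_on with
  | empty => simp
  | @insert a s' ha ih =>
    simp only [Finset.prod_insert ha]
    have hIndep : IndepFun (Y a) (∏ j ∈ s', Y j) μ :=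
      (hind.indepFun_finsetProd_of_notMem hY ha).symm
    have hPmeas : Measurable (∏ j ∈ s', Y j) := by
      rw [Finset.prod_fn]
      exact Finset.measurable_prod s' fun i _ => hY i
    have hmul := hIndep.integral_mul_eq_mul_integral (hY a).aestronglyMeasurable
      hPmeas.aestronglyMeasurable
    simp only [Pi.mul_apply, Finset.prod_apply] at hmul
    have h2 : integral μ (∏ j ∈ s', Y j) = ∫ ω, ∏ i ∈ s', Y i ω ∂μ := by
      apply integral_congr_ae
      exact Filter.Eventually.of_forall fun ω => by simp
    rw [hmul, ih]

lemma laplace_incr {Ω : Type} [MeasurableSpace Ω] (μ : Measure Ω) [IsProbabilityMeasure μ]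
    (Z : ℝ → Ω → ℝ) (φ : ℝ → ℝ) (hZmeas : ∀ t, Measurable (Z t))
    (hLaplace : ∀ β ≥ (0 : ℝ), ∀ t ≥ (0 : ℝ),
      ∫ ω, Real.exp (-(β * Z t ω)) ∂μ = Real.exp (-(t * φ β)))
    (hstat : ∀ s t : ℝ, 0 ≤ s → s ≤ t →
      Measure.map (fun ω => Z t ω - Z s ω) μ = Measure.map (Z (t - s)) μ)
    {a b c : ℝ} (ha : 0 ≤ a) (hab : a ≤ b) (hc : 0 ≤ c) :
    ∫ ω, Real.exp (-(c * (Z b ω - Z a ω))) ∂μ = Real.exp (-((b - a) * φ c)) := by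
  have hT : Measurable fun ω => Z b ω - Z a ω := (hZmeas b).sub (hZmeas a)
  have hcont : Continuous fun y : ℝ => Real.exp (-(c * y)) := by fun_prop
  calc ∫ ω, Real.exp (-(c * (Z b ω - Z a ω))) ∂μ
      = ∫ y, Real.exp (-(c * y)) ∂(Measure.map (fun ω => Z b ω - Z a ω) μ) :=
        (integral_map hT.aemeasurable hcont.aestronglyMeasurable).symm
    _ = ∫ y, Real.exp (-(c * y)) ∂(Measure.map (Z (b - a)) μ) := by rw [hstat a b ha hab]
    _ = ∫ ω, Real.exp (-(c * Z (b - a) ω)) ∂μ :=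
        integral_map (hZmeas _).aemeasurable hcont.aestronglyMeasurable
    _ = Real.exp (-((b - a) * φ c)) := hLaplace c hc (b - a) (by linarith)

end Stmt1Aux

/-- for every `β > 0` and `t ≥ 0`,
`∫_0^∞ β e^{-βx} P(τ₀ > t | X_0 = x) dx = exp(-∫_0^t φ(β e^{-rs}) ds)`. -/
theorem stmt_1
    {Ω : Type} [MeasurableSpace Ω] (μ : Measure Ω) [IsProbabilityMeasure μ]
    (Z : ℝ → Ω → ℝ) (ν : Measure ℝ) (φ : ℝ → ℝ) (r : ℝ) (hr : 0 < r)
    (hZmeas : ∀ t, Measurable (Z t))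
    (hZ0 : ∀ ω, ∀ s ≤ (0 : ℝ), Z s ω = 0)
    (hpath : ∀ᵐ ω ∂μ, Monotone (fun s => Z s ω) ∧
      ∀ x, ContinuousWithinAt (fun s => Z s ω) (Set.Ici x) x)
    (hν : ∫⁻ y in Set.Ioi (0 : ℝ), ENNReal.ofReal (min 1 y) ∂ν < ⊤)
    (hφ : ∀ β ≥ (0 : ℝ), φ β = ∫ y in Set.Ioi (0 : ℝ), (1 - Real.exp (-(β * y))) ∂ν)
    (hLaplace : ∀ β ≥ (0 : ℝ), ∀ t ≥ (0 : ℝ),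
      ∫ ω, Real.exp (-(β * Z t ω)) ∂μ = Real.exp (-(t * φ β)))
    (hindep : ∀ n : ℕ, ∀ t : Fin (n + 1) → ℝ, Monotone t → (∀ i, 0 ≤ t i) →
      iIndepFun
        (fun i : Fin n => fun ω => Z (t i.succ) ω - Z (t i.castSucc) ω) μ)
    (hstat : ∀ s t : ℝ, 0 ≤ s → s ≤ t →
      Measure.map (fun ω => Z t ω - Z s ω) μ = Measure.map (Z (t - s)) μ)
    (β t : ℝ) (hβ : 0 < β) (ht : 0 ≤ t) :
    ∫ x in Set.Ioi (0 : ℝ), β * Real.exp (-(β * x)) *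
        (μ {ω | ENNReal.ofReal t < ruinTime r x (fun s => Z s ω)}).toReal =
      Real.exp (-(∫ s in (0:ℝ)..t, φ (β * Real.exp (-(r * s))))) := by
  classical
  rw [intervalIntegral.integral_of_le ht]
  rcases eq_or_lt_of_le ht with h0 | htpos
  · -- case t = 0
    subst h0
    have hruin : ∀ x : ℝ, x ∈ Set.Ioi (0:ℝ) →
        (μ {ω | ENNReal.ofReal 0 < ruinTime r x fun s => Z s ω}).toReal = 1 := by
      intro x hx
      have h1 : μ {ω | ENNReal.ofReal 0 < ruinTime r x fun s => Z s ω} = 1 := by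
        refine Stmt1Aux.prob_eq_one_of_ae μ ?_
        filter_upwards [hpath] with ω hω
        have h2 : lsInt (fun s => Z s ω) (fun s => Real.exp (-(r * s))) 0 < x := by
          rw [Stmt1Aux.lsInt_zero]; exact hx
        exact Stmt1Aux.ruinTime_gt hω hr hx le_rfl h2
      rw [h1, ENNReal.toReal_one]
    rw [setIntegral_congr_fun measurableSet_Ioi fun x hx => by rw [hruin x hx, mul_one]]
    rw [Stmt1Aux.integral_Ioi_exp hβ 0]
    simp [Set.Ioc_self]
  · -- case 0 < t
    -- ### Riemann sum approximation of the pathwise integral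
    set Sn : ℕ → Ω → ℝ := fun n ω => ∑ i ∈ Finset.range n,
      Stmt1Aux.pc r t n i * (Z (((i:ℝ) + 1) * (t / n)) ω - Z ((i:ℝ) * (t / n)) ω) with hSndef
    have hSn_meas : ∀ n, Measurable (Sn n) := fun n =>
      Finset.measurable_sum _ fun i _ => measurable_const.mul ((hZmeas _).sub (hZmeas _))
    have hSn_tendsto : ∀ᵐ ω ∂μ, Tendsto (fun n => Sn n ω) atTop
        (nhds (lsInt (fun s => Z s ω) (fun s => Real.exp (-(r * s))) t)) := by
      filter_upwards [hpath] with ω hω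
      haveI := Stmt1Aux.isFinite_restrict hω 0 t
      have hbound : ∀ n : ℕ, ∀ᵐ s ∂((stMeasure (fun s => Z s ω)).restrict (Set.Ioc 0 t)),
          ‖Stmt1Aux.stepF t n (Stmt1Aux.pc r t n) s‖ ≤ 1 := by
        intro n
        refine (ae_restrict_iff' measurableSet_Ioc).2
          (Filter.Eventually.of_forall fun s hs => ?_)
        rcases Nat.lt_or_ge n 1 with hn | hn
        · have hn' : n = 0 := by omega
          subst hn'
          simp [Stmt1Aux.stepF]
        · obtain ⟨k, hk, hmem, huniq⟩ := Stmt1Aux.piece_unique htpos hn hs.1 hs.2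
          rw [Stmt1Aux.stepF_eval _ hk hmem huniq, Real.norm_eq_abs,
            abs_of_pos Stmt1Aux.pc_pos]
          exact Stmt1Aux.pc_le_one hr htpos.le
      have hlim : ∀ᵐ s ∂((stMeasure (fun s => Z s ω)).restrict (Set.Ioc 0 t)),
          Tendsto (fun n => Stmt1Aux.stepF t n (Stmt1Aux.pc r t n) s) atTop
            (nhds (Real.exp (-(r * s)))) := by
        refine (ae_restrict_iff' measurableSet_Ioc).2
          (Filter.Eventually.of_forall fun s hs => ?_)
        exact Stmt1Aux.stepA_tendsto hr htpos hs.1 hs.2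
      have hDCT := MeasureTheory.tendsto_integral_of_dominated_convergence
        (μ := (stMeasure (fun s => Z s ω)).restrict (Set.Ioc 0 t))
        (F := fun n => Stmt1Aux.stepF t n (Stmt1Aux.pc r t n))
        (f := fun s => Real.exp (-(r * s))) (fun _ => (1:ℝ))
        (fun n => Stmt1Aux.stepF_meas.aestronglyMeasurable)
        (integrable_const 1) hbound hlim
      refine Filter.Tendsto.congr' ?_ hDCT
      filter_upwards [eventually_ge_atTop 1] with n hn
      rw [Stmt1Aux.stepF_integral htpos hn _ (stMeasure (fun s => Z s ω))
        (fun i => by rw [Stmt1Aux.stMeasure_Ioc hω]; exact ENNReal.ofReal_lt_top)]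
      simp only [hSndef]
      refine Finset.sum_congr rfl fun i _ => ?_
      have hab : (i:ℝ) * (t / n) ≤ ((i:ℝ) + 1) * (t / n) := by
        have h8 : (0:ℝ) ≤ t / n := by positivity
        nlinarith
      rw [Stmt1Aux.stMeasure_Ioc hω, ENNReal.toReal_ofReal (sub_nonneg.2 (hω.1 hab))]
    -- ### Part B : Laplace transform of the stochastic integral
    have hEn : ∀ n : ℕ, 1 ≤ n →
        ∫ ω, Real.exp (-(β * Sn n ω)) ∂μ
          = Real.exp (-(∑ i ∈ Finset.range n, (t / n) * φ (β * Stmt1Aux.pc r t n i))) := by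
      intro n hn
      have htn : (0:ℝ) ≤ t / n := by positivity
      set Y : Fin n → Ω → ℝ := fun i ω => Real.exp (-(β * Stmt1Aux.pc r t n (i:ℕ) *
        (Z ((((i:ℕ):ℝ) + 1) * (t / n)) ω - Z (((i:ℕ):ℝ) * (t / n)) ω))) with hYdef
      have hYmeas : ∀ i, Measurable (Y i) := fun i =>
        Real.measurable_exp.comp ((measurable_const.mul ((hZmeas _).sub (hZmeas _))).neg)
      have hmono : Monotone fun i : Fin (n+1) => ((i:ℕ):ℝ) * (t / n) := by
        intro i j hij
        have h1 : ((i:ℕ):ℝ) ≤ ((j:ℕ):ℝ) := by exact_mod_cast Fin.le_def.1 hij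
        exact mul_le_mul_of_nonneg_right h1 htn
      have hnonneg : ∀ i : Fin (n+1), (0:ℝ) ≤ ((i:ℕ):ℝ) * (t / n) := fun i =>
        mul_nonneg (Nat.cast_nonneg _) htn
      have hid := hindep n (fun i : Fin (n+1) => ((i:ℕ):ℝ) * (t / n)) hmono hnonneg
      have hid2 := hid.comp
        (fun i : Fin n => fun y : ℝ => Real.exp (-(β * Stmt1Aux.pc r t n (i:ℕ) * y)))
        (fun i => by fun_prop)
      have hYeq : (fun i : Fin n => (fun y : ℝ =>
          Real.exp (-(β * Stmt1Aux.pc r t n (i:ℕ) * y))) ∘ (fun ω =>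
            Z ((((i.succ : Fin (n+1)) : ℕ):ℝ) * (t / n)) ω -
            Z ((((i.castSucc : Fin (n+1)) : ℕ):ℝ) * (t / n)) ω)) = Y := by
        funext i ω
        simp only [Function.comp_apply, Fin.val_succ, Fin.coe_castSucc, Nat.cast_add,
          Nat.cast_one, hYdef]
      have hid3 : iIndepFun Y μ := by
        rw [← hYeq]; exact hid2
      calc ∫ ω, Real.exp (-(β * Sn n ω)) ∂μ
          = ∫ ω, ∏ i : Fin n, Y i ω ∂μ := by
            refine integral_congr_ae (Filter.Eventually.of_forall fun ω => ?_)
            simp only [hYdef]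
            rw [Fin.prod_univ_eq_prod_range (fun j : ℕ => Real.exp (-(β * Stmt1Aux.pc r t n j *
              (Z (((j:ℝ) + 1) * (t / n)) ω - Z ((j:ℝ) * (t / n)) ω)))) n]
            rw [← Real.exp_sum]
            congr 1
            simp only [hSndef]
            rw [Finset.mul_sum, Finset.sum_neg_distrib]
            congr 1
            exact Finset.sum_congr rfl fun i _ => by ring
        _ = ∏ i : Fin n, ∫ ω, Y i ω ∂μ := Stmt1Aux.integral_prod_indep hYmeas hid3 Finset.univ
        _ = ∏ i : Fin n, Real.exp (-((t / n) * φ (β * Stmt1Aux.pc r t n (i:ℕ)))) := by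
            refine Finset.prod_congr rfl fun i _ => ?_
            have hab : ((i:ℕ):ℝ) * (t / n) ≤ (((i:ℕ):ℝ) + 1) * (t / n) := by nlinarith
            have hc : 0 ≤ β * Stmt1Aux.pc r t n (i:ℕ) :=
              le_of_lt (mul_pos hβ Stmt1Aux.pc_pos)
            have h1 := Stmt1Aux.laplace_incr μ Z φ hZmeas hLaplace hstat
              (a := ((i:ℕ):ℝ) * (t / n)) (b := (((i:ℕ):ℝ) + 1) * (t / n))
              (c := β * Stmt1Aux.pc r t n (i:ℕ))
              (mul_nonneg (Nat.cast_nonneg _) htn) hab hc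
            rw [show (((i:ℕ):ℝ) + 1) * (t / n) - ((i:ℕ):ℝ) * (t / n) = t / n from by ring] at h1
            simp only [hYdef]
            exact h1
        _ = Real.exp (-(∑ i ∈ Finset.range n, (t / n) * φ (β * Stmt1Aux.pc r t n i))) := by
            rw [← Real.exp_sum]
            congr 1
            rw [← Fin.sum_univ_eq_sum_range
              (fun j : ℕ => (t / n) * φ (β * Stmt1Aux.pc r t n j)) n]
            rw [Finset.sum_neg_distrib]
    have hsum_eq : ∀ n : ℕ, 1 ≤ n →
        ∑ i ∈ Finset.range n, (t / n) * φ (β * Stmt1Aux.pc r t n i)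
          = ∫ s in Set.Ioc 0 t, Stmt1Aux.stepF t n (fun i => φ (β * Stmt1Aux.pc r t n i)) s := by
      intro n hn
      rw [Stmt1Aux.stepF_integral htpos hn _ volume
        (fun i => by rw [Real.volume_Ioc]; exact ENNReal.ofReal_lt_top)]
      refine Finset.sum_congr rfl fun i _ => ?_
      rw [Real.volume_Ioc, show ((i:ℝ) + 1) * (t / n) - (i:ℝ) * (t / n) = t / n from by ring,
        ENNReal.toReal_ofReal (by positivity), mul_comm]
    have hB3 : Tendsto (fun n => ∫ s in Set.Ioc 0 t,
          Stmt1Aux.stepF t n (fun i => φ (β * Stmt1Aux.pc r t n i)) s) atTop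
        (nhds (∫ s in Set.Ioc 0 t, φ (β * Real.exp (-(r * s))))) := by
      have hbint : IntegrableOn (fun _ : ℝ => φ β) (Set.Ioc 0 t) volume :=
        integrableOn_const (by rw [Real.volume_Ioc]; exact ENNReal.ofReal_ne_top)
      refine MeasureTheory.tendsto_integral_of_dominated_convergence _
        (fun n => Stmt1Aux.stepF_meas.aestronglyMeasurable) hbint ?_ ?_
      · intro n
        refine (ae_restrict_iff' measurableSet_Ioc).2
          (Filter.Eventually.of_forall fun s hs => ?_)
        rcases Nat.lt_or_ge n 1 with hn | hn
        · have hn' : n = 0 := by omega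
          subst hn'
          simpa [Stmt1Aux.stepF] using Stmt1Aux.phi_nonneg hφ hβ.le
        · obtain ⟨k, hk, hmem, huniq⟩ := Stmt1Aux.piece_unique htpos hn hs.1 hs.2
          rw [Stmt1Aux.stepF_eval _ hk hmem huniq, Real.norm_eq_abs, abs_of_nonneg
            (Stmt1Aux.phi_nonneg hφ (le_of_lt (mul_pos hβ Stmt1Aux.pc_pos)))]
          refine Stmt1Aux.phi_mono hν hφ (le_of_lt (mul_pos hβ Stmt1Aux.pc_pos)) ?_
          have h2 := Stmt1Aux.pc_le_one (r := r) (t := t) (n := n) (i := k) hr htpos.le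
          nlinarith
      · refine (ae_restrict_iff' measurableSet_Ioc).2
          (Filter.Eventually.of_forall fun s hs => ?_)
        have h1 := Stmt1Aux.stepA_tendsto hr htpos hs.1 hs.2
        have h2 : Tendsto (fun n => β * Stmt1Aux.stepF t n (Stmt1Aux.pc r t n) s) atTop
            (nhds (β * Real.exp (-(r * s)))) := tendsto_const_nhds.mul h1
        have h3 : ContinuousAt φ (β * Real.exp (-(r * s))) :=
          Stmt1Aux.phi_continuousAt hν hφ (mul_pos hβ (Real.exp_pos _))
        have h4 := h3.tendsto.comp h2
        refine Filter.Tendsto.congr' ?_ h4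
        filter_upwards [eventually_ge_atTop 1] with n hn
        obtain ⟨k, hk, hmem, huniq⟩ := Stmt1Aux.piece_unique htpos hn hs.1 hs.2
        simp only [Function.comp_apply]
        rw [Stmt1Aux.stepF_eval _ hk hmem huniq, Stmt1Aux.stepF_eval _ hk hmem huniq]
    have hDCTω : Tendsto (fun n => ∫ ω, Real.exp (-(β * Sn n ω)) ∂μ) atTop
        (nhds (∫ ω, Real.exp (-(β * lsInt (fun s => Z s ω)
          (fun s => Real.exp (-(r * s))) t)) ∂μ)) := by
      refine MeasureTheory.tendsto_integral_of_dominated_convergence (fun _ => (1:ℝ))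
        (fun n => (Real.measurable_exp.comp
          (((hSn_meas n).const_mul β).neg)).aestronglyMeasurable)
        (integrable_const 1) ?_ ?_
      · intro n
        filter_upwards [hpath] with ω hω
        rw [Real.norm_eq_abs, abs_of_pos (Real.exp_pos _)]
        refine Real.exp_le_one_iff.2 (neg_nonpos.2 (mul_nonneg hβ.le ?_))
        simp only [hSndef]
        refine Finset.sum_nonneg fun i _ => ?_
        refine mul_nonneg Stmt1Aux.pc_pos.le (sub_nonneg.2 (hω.1 ?_))
        have h8 : (0:ℝ) ≤ t / n := by positivity
        nlinarith
      · filter_upwards [hSn_tendsto] with ω hω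
        have h9 : Tendsto (fun n => -(β * Sn n ω)) atTop
            (nhds (-(β * lsInt (fun s => Z s ω) (fun s => Real.exp (-(r * s))) t))) :=
          (tendsto_const_nhds.mul hω).neg
        exact (Real.continuous_exp.tendsto _).comp h9
    have hfinalB : ∫ ω, Real.exp (-(β * lsInt (fun s => Z s ω)
          (fun s => Real.exp (-(r * s))) t)) ∂μ
        = Real.exp (-(∫ s in Set.Ioc 0 t, φ (β * Real.exp (-(r * s))))) := by
      refine tendsto_nhds_unique hDCTω ?_
      have h10 : Tendsto (fun n => Real.exp (-(∫ s in Set.Ioc 0 t,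
          Stmt1Aux.stepF t n (fun i => φ (β * Stmt1Aux.pc r t n i)) s))) atTop
          (nhds (Real.exp (-(∫ s in Set.Ioc 0 t, φ (β * Real.exp (-(r * s))))))) :=
        (Real.continuous_exp.tendsto _).comp hB3.neg
      refine Filter.Tendsto.congr' ?_ h10
      filter_upwards [eventually_ge_atTop 1] with n hn
      rw [hEn n hn, hsum_eq n hn]
    -- ### Part A : reduction of the ruin probability to the Laplace transform
    obtain ⟨A', hA'meas, hAA'⟩ : ∃ A' : Ω → ℝ, Measurable A' ∧
        (fun ω => lsInt (fun s => Z s ω) (fun s => Real.exp (-(r * s))) t) =ᵐ[μ] A' := by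
      have hA_aemeas : AEMeasurable
          (fun ω => lsInt (fun s => Z s ω) (fun s => Real.exp (-(r * s))) t) μ :=
        aemeasurable_of_tendsto_metrizable_ae' (fun n => (hSn_meas n).aemeasurable) hSn_tendsto
      exact ⟨hA_aemeas.mk _, hA_aemeas.measurable_mk, hA_aemeas.ae_eq_mk⟩
    have hae_atom : ∀ᵐ x : ℝ, μ {ω | A' ω ≤ x} = μ {ω | A' ω < x} := by
      have h0 := MeasureTheory.countable_meas_le_ne_meas_lt μ fun ω => -A' ω
      have himg := h0.image fun u : ℝ => -u
      have hsub : {x : ℝ | μ {ω | A' ω ≤ x} ≠ μ {ω | A' ω < x}} ⊆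
          (fun u : ℝ => -u) '' {u : ℝ | μ {ω | u ≤ -A' ω} ≠ μ {ω | u < -A' ω}} := by
        intro x hx
        refine ⟨-x, ?_, by ring⟩
        show μ {ω | -x ≤ -A' ω} ≠ μ {ω | -x < -A' ω}
        simpa [neg_le_neg_iff, neg_lt_neg_iff] using hx
      rw [ae_iff]
      exact measure_mono_null hsub (Set.Countable.measure_zero himg _)
    have hG : ∀ᵐ ω ∂μ, ((Monotone (fun s => Z s ω) ∧
        ∀ x, ContinuousWithinAt (fun s => Z s ω) (Set.Ici x) x) ∧
        lsInt (fun s => Z s ω) (fun s => Real.exp (-(r * s))) t = A' ω) := hpath.and hAA'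
    set G : Set Ω := {ω | (Monotone (fun s => Z s ω) ∧
        ∀ x, ContinuousWithinAt (fun s => Z s ω) (Set.Ici x) x) ∧
        lsInt (fun s => Z s ω) (fun s => Real.exp (-(r * s))) t = A' ω} with hGdef
    have hGc : μ Gᶜ = 0 := by
      rw [hGdef, Set.compl_setOf]
      exact ae_iff.1 hG
    have hμ_eq : ∀ x : ℝ, 0 < x → μ {ω | A' ω ≤ x} = μ {ω | A' ω < x} →
        μ {ω | ENNReal.ofReal t < ruinTime r x fun s => Z s ω} = μ {ω | A' ω ≤ x} := by
      intro x hx hatom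
      apply le_antisymm
      · calc μ {ω | ENNReal.ofReal t < ruinTime r x fun s => Z s ω}
            ≤ μ ({ω | A' ω ≤ x} ∪ Gᶜ) := by
              refine measure_mono fun ω hω => ?_
              by_cases hGm : ω ∈ G
              · left
                rw [Set.mem_setOf_eq, ← hGm.2]
                by_contra hcon
                push_neg at hcon
                exact absurd hω (not_lt.2 (Stmt1Aux.ruinTime_le hx hcon))
              · right; exact hGm
          _ ≤ μ {ω | A' ω ≤ x} := by
              have h5 := measure_union_le (μ := μ) {ω | A' ω ≤ x} Gᶜ
              simpa [hGc] using h5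
      · calc μ {ω | A' ω ≤ x} = μ {ω | A' ω < x} := hatom
          _ ≤ μ ({ω | ENNReal.ofReal t < ruinTime r x fun s => Z s ω} ∪ Gᶜ) := by
              refine measure_mono fun ω hω => ?_
              by_cases hGm : ω ∈ G
              · left
                have h6 : lsInt (fun s => Z s ω) (fun s => Real.exp (-(r * s))) t < x := by
                  rw [hGm.2]; exact hω
                exact Stmt1Aux.ruinTime_gt hGm.1 hr hx ht h6
              · right; exact hGm
          _ ≤ μ {ω | ENNReal.ofReal t < ruinTime r x fun s => Z s ω} := by
              have h5 := measure_union_le (μ := μ)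
                {ω | ENNReal.ofReal t < ruinTime r x fun s => Z s ω} Gᶜ
              simpa [hGc] using h5
    have hLHS0 : ∫ x in Set.Ioi (0:ℝ), β * Real.exp (-(β * x)) *
          (μ {ω | ENNReal.ofReal t < ruinTime r x fun s => Z s ω}).toReal
        = ∫ x in Set.Ioi (0:ℝ), β * Real.exp (-(β * x)) * (μ {ω | A' ω ≤ x}).toReal := by
      refine integral_congr_ae ?_
      filter_upwards [ae_restrict_of_ae hae_atom, ae_restrict_mem measurableSet_Ioi]
        with x h1 h2
      rw [hμ_eq x h2 h1]
    have hq_meas : Measurable fun x : ℝ => ENNReal.ofReal (β * Real.exp (-(β * x))) :=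
      ENNReal.measurable_ofReal.comp (by fun_prop)
    have hm_mono : Monotone fun x : ℝ => (μ {ω | A' ω ≤ x}).toReal := by
      intro x y hxy
      exact ENNReal.toReal_mono (measure_ne_top μ _)
        (measure_mono fun ω h => le_trans h hxy)
    have hLHS1 : ∫ x in Set.Ioi (0:ℝ), β * Real.exp (-(β * x)) * (μ {ω | A' ω ≤ x}).toReal
        = (∫⁻ x in Set.Ioi (0:ℝ),
            ENNReal.ofReal (β * Real.exp (-(β * x))) * μ {ω | A' ω ≤ x}).toReal := by
      rw [integral_eq_lintegral_of_nonneg_ae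
        (Filter.Eventually.of_forall fun x =>
          mul_nonneg (by positivity) ENNReal.toReal_nonneg)
        (((by fun_prop : Measurable fun x : ℝ => β * Real.exp (-(β * x))).mul
          hm_mono.measurable).aestronglyMeasurable)]
      congr 1
      refine lintegral_congr fun x => ?_
      rw [ENNReal.ofReal_mul (by positivity), ENNReal.ofReal_toReal (measure_ne_top μ _)]
    have hiteMeas : ∀ x : ℝ, Measurable fun ω => if A' ω ≤ x then (1:ℝ≥0∞) else 0 :=
      fun x => Measurable.ite (hA'meas measurableSet_Iic) measurable_const measurable_const
    have hswap : ∫⁻ x in Set.Ioi (0:ℝ),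
          ENNReal.ofReal (β * Real.exp (-(β * x))) * μ {ω | A' ω ≤ x}
        = ∫⁻ ω, ∫⁻ x in Set.Ioi (0:ℝ),
            ENNReal.ofReal (β * Real.exp (-(β * x)))
              * (if A' ω ≤ x then (1:ℝ≥0∞) else 0) ∂volume ∂μ := by
      have hunc : Measurable fun p : Ω × ℝ =>
          ENNReal.ofReal (β * Real.exp (-(β * p.2)))
            * (if A' p.1 ≤ p.2 then (1:ℝ≥0∞) else 0) := by
        have hS : MeasurableSet {p : Ω × ℝ | A' p.1 ≤ p.2} :=
          measurableSet_le (hA'meas.comp measurable_fst) measurable_snd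
        exact (hq_meas.comp measurable_snd).mul
          (Measurable.ite hS measurable_const measurable_const)
      have h7 : (∫⁻ ω, ∫⁻ x in Set.Ioi (0:ℝ),
            ENNReal.ofReal (β * Real.exp (-(β * x)))
              * (if A' ω ≤ x then (1:ℝ≥0∞) else 0) ∂volume ∂μ)
          = ∫⁻ x in Set.Ioi (0:ℝ), ∫⁻ ω,
            ENNReal.ofReal (β * Real.exp (-(β * x)))
              * (if A' ω ≤ x then (1:ℝ≥0∞) else 0) ∂μ ∂volume :=
        MeasureTheory.lintegral_lintegral_swap hunc.aemeasurable
      rw [h7]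
      refine lintegral_congr fun x => ?_
      rw [lintegral_const_mul _ (hiteMeas x)]
      congr 1
      rw [show (fun ω => if A' ω ≤ x then (1:ℝ≥0∞) else 0)
          = Set.indicator {ω | A' ω ≤ x} (fun _ => (1:ℝ≥0∞)) from funext fun ω => by
            by_cases h : A' ω ≤ x <;> simp [h]]
      rw [lintegral_indicator_const (show MeasurableSet {ω | A' ω ≤ x} from hA'meas measurableSet_Iic), one_mul]
    have hAnn : ∀ᵐ ω ∂μ, 0 ≤ A' ω := by
      filter_upwards [hAA'] with ω h
      rw [← h]
      exact Stmt1Aux.lsInt_nonneg r t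
    have hinner : ∀ᵐ ω ∂μ, (∫⁻ x in Set.Ioi (0:ℝ),
        ENNReal.ofReal (β * Real.exp (-(β * x)))
          * (if A' ω ≤ x then (1:ℝ≥0∞) else 0) ∂volume)
          = ENNReal.ofReal (Real.exp (-(β * A' ω))) := by
      filter_upwards [hAnn] with ω h
      exact Stmt1Aux.inner_exp hβ h
    have hfinA : (∫⁻ ω, ENNReal.ofReal (Real.exp (-(β * A' ω))) ∂μ).toReal
        = ∫ ω, Real.exp (-(β * lsInt (fun s => Z s ω)
            (fun s => Real.exp (-(r * s))) t)) ∂μ := by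
      rw [integral_congr_ae (show (fun ω => Real.exp (-(β * lsInt (fun s => Z s ω)
          (fun s => Real.exp (-(r * s))) t))) =ᵐ[μ] fun ω => Real.exp (-(β * A' ω)) from by
        filter_upwards [hAA'] with ω h
        rw [h])]
      rw [integral_eq_lintegral_of_nonneg_ae (f := fun ω => Real.exp (-(β * A' ω)))
        (Filter.Eventually.of_forall fun ω => (Real.exp_pos _).le)
        ((Real.measurable_exp.comp ((hA'meas.const_mul β).neg)).aestronglyMeasurable)]
    calc ∫ x in Set.Ioi (0:ℝ), β * Real.exp (-(β * x)) *
          (μ {ω | ENNReal.ofReal t < ruinTime r x fun s => Z s ω}).toReal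
        = ∫ x in Set.Ioi (0:ℝ), β * Real.exp (-(β * x)) * (μ {ω | A' ω ≤ x}).toReal := hLHS0
      _ = (∫⁻ x in Set.Ioi (0:ℝ),
            ENNReal.ofReal (β * Real.exp (-(β * x))) * μ {ω | A' ω ≤ x}).toReal := hLHS1
      _ = (∫⁻ ω, ENNReal.ofReal (Real.exp (-(β * A' ω))) ∂μ).toReal := by
            rw [hswap, lintegral_congr_ae hinner]
      _ = ∫ ω, Real.exp (-(β * lsInt (fun s => Z s ω)
            (fun s => Real.exp (-(r * s))) t)) ∂μ := hfinA
      _ = Real.exp (-(∫ s in Set.Ioc 0 t, φ (β * Real.exp (-(r * s))))) := hfinalB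
end

section
/- If ∫_1^∞ log(y) ν(dy) = ∞, then absolute ruin is certain: for every x > 0, P(τ_0 < ∞ | X_0 = x) = 1. -/
open MeasureTheory ProbabilityTheory Filter
open scoped ENNReal

section helpers
open Set


/-- chord inequality -/
lemma helper_chord (u : ℝ) (hu : 0 ≤ u) :
    (1 - Real.exp (-1)) * min u 1 ≤ 1 - Real.exp (-u) := by
  rcases le_total u 1 with h | h
  · rw [min_eq_left h]
    have hc := convexOn_exp.2 (Set.mem_univ (0:ℝ)) (Set.mem_univ (-1:ℝ))
      (sub_nonneg.2 h) hu (by ring)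
    simp only [smul_eq_mul, mul_zero, zero_add, mul_neg, mul_one, Real.exp_zero] at hc
    nlinarith [hc]
  · rw [min_eq_right h]
    have : Real.exp (-u) ≤ Real.exp (-1) := Real.exp_le_exp.2 (by linarith)
    linarith

lemma helper_minmul (c u : ℝ) (hc0 : 0 ≤ c) (hc1 : c ≤ 1) (hu : 0 ≤ u) :
    c * min u 1 ≤ min (c * u) 1 := by
  rcases le_total u 1 with h | h
  · rw [min_eq_left h, min_eq_left (by nlinarith)]
  · rw [min_eq_right h]
    exact le_min (by nlinarith) (by linarith)

lemma helper_enn_min (T C : ℝ≥0∞) (h : T ≤ C) : T ≤ (C + 1) * min T 1 := by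
  rcases le_total T 1 with h1 | h1
  · rw [min_eq_left h1]
    exact le_mul_of_one_le_left zero_le (le_add_self)
  · rw [min_eq_right h1, mul_one]
    exact h.trans le_self_add

lemma helper_sumdiv (ν : Measure ℝ) (hC : ν (Set.Ioi 1) ≠ ⊤)
    (hlog : (∫⁻ y in Set.Ioi (1 : ℝ), ENNReal.ofReal (Real.log y) ∂ν) = ⊤)
    (a c : ℝ) (ha : 1 < a) (hc : 1 ≤ c) :
    ∑' n : ℕ, ν (Set.Ioi (c * a ^ n)) = ⊤ := by
  have ha0 : (0:ℝ) < a := lt_trans one_pos ha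
  have hca : ∀ n : ℕ, 1 ≤ c * a ^ n := fun n => by
    have := one_le_pow₀ (n := n) ha.le
    nlinarith
  set F : ℝ → ℝ≥0∞ := fun y => ∑' n : ℕ, (Set.Ioi (c * a ^ n)).indicator (fun _ => (1:ℝ≥0∞)) y
    with hF
  have hFmeas : Measurable F := Measurable.ennreal_tsum fun n =>
    measurable_const.indicator measurableSet_Ioi
  -- pointwise bound
  have hpt : ∀ y ∈ Set.Ioi (1:ℝ), ENNReal.ofReal (Real.log y) ≤
      ENNReal.ofReal (Real.log c) + ENNReal.ofReal (Real.log a) * F y := by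
    intro y hy
    simp only [Set.mem_Ioi] at hy
    rcases le_total y c with h | h
    · calc ENNReal.ofReal (Real.log y) ≤ ENNReal.ofReal (Real.log c) :=
            ENNReal.ofReal_le_ofReal (Real.log_le_log (by linarith) h)
        _ ≤ _ := le_self_add
    · have hex : ∃ n : ℕ, y ≤ c * a ^ n := by
        obtain ⟨n, hn⟩ := pow_unbounded_of_one_lt y ha
        exact ⟨n, hn.le.trans (le_mul_of_one_le_left (by positivity) hc)⟩
      set k := Nat.find hex with hk
      have hky : y ≤ c * a ^ k := Nat.find_spec hex
      have hless : ∀ j, j < k → c * a ^ j < y := fun j hj =>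
        lt_of_not_ge (Nat.find_min hex hj)
      have hkF : (k : ℝ≥0∞) ≤ F y := by
        have : ∀ j ∈ Finset.range k, (Set.Ioi (c * a ^ j)).indicator
            (fun _ => (1:ℝ≥0∞)) y = 1 := by
          intro j hj
          exact Set.indicator_of_mem (hless j (Finset.mem_range.1 hj)) _
        calc (k : ℝ≥0∞) = ∑ j ∈ Finset.range k, (Set.Ioi (c * a ^ j)).indicator
              (fun _ => (1:ℝ≥0∞)) y := by
              rw [Finset.sum_congr rfl this]; simp
          _ ≤ F y := ENNReal.sum_le_tsum _
      have hlogy : Real.log y ≤ Real.log c + k * Real.log a := by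
        have := Real.log_le_log (by linarith : (0:ℝ) < y) hky
        rwa [Real.log_mul (by positivity) (by positivity), Real.log_pow] at this
      calc ENNReal.ofReal (Real.log y) ≤ ENNReal.ofReal (Real.log c + k * Real.log a) :=
            ENNReal.ofReal_le_ofReal hlogy
        _ ≤ ENNReal.ofReal (Real.log c) + ENNReal.ofReal ((k:ℝ) * Real.log a) :=
            ENNReal.ofReal_add_le
        _ = ENNReal.ofReal (Real.log c) + ENNReal.ofReal (Real.log a) * (k : ℝ≥0∞) := by
            rw [ENNReal.ofReal_mul (Nat.cast_nonneg k), ENNReal.ofReal_natCast, mul_comm]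
        _ ≤ ENNReal.ofReal (Real.log c) + ENNReal.ofReal (Real.log a) * F y :=
            add_le_add_right (mul_le_mul_right hkF _) _
  -- integrate
  have hint : (∫⁻ y in Set.Ioi (1:ℝ), (ENNReal.ofReal (Real.log c) +
      ENNReal.ofReal (Real.log a) * F y) ∂ν) =
      ENNReal.ofReal (Real.log c) * ν (Set.Ioi 1) +
      ENNReal.ofReal (Real.log a) * ∑' n : ℕ, ν (Set.Ioi (c * a ^ n)) := by
    rw [lintegral_add_left measurable_const, lintegral_const,
      Measure.restrict_apply_univ, lintegral_const_mul _ hFmeas]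
    congr 1
    simp only [hF]
    congr 1
    rw [lintegral_tsum fun n => (measurable_const.indicator measurableSet_Ioi).aemeasurable]
    refine tsum_congr fun n => ?_
    rw [lintegral_indicator measurableSet_Ioi, setLIntegral_one,
      Measure.restrict_apply measurableSet_Ioi]
    congr 1
    exact Set.inter_eq_left.2 fun z hz => lt_of_le_of_lt (hca n) hz
  have hle : (⊤ : ℝ≥0∞) ≤ ENNReal.ofReal (Real.log c) * ν (Set.Ioi 1) +
      ENNReal.ofReal (Real.log a) * ∑' n : ℕ, ν (Set.Ioi (c * a ^ n)) := by
    rw [← hint, ← hlog]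
    exact setLIntegral_mono (by fun_prop) hpt
  by_contra hne
  have h1 : ENNReal.ofReal (Real.log c) * ν (Set.Ioi 1) ≠ ⊤ :=
    ENNReal.mul_ne_top ENNReal.ofReal_ne_top hC
  have h2 : ENNReal.ofReal (Real.log a) * ∑' n : ℕ, ν (Set.Ioi (c * a ^ n)) ≠ ⊤ :=
    ENNReal.mul_ne_top ENNReal.ofReal_ne_top hne
  exact (ENNReal.add_ne_top.2 ⟨h1, h2⟩) (top_le_iff.1 hle)

lemma helper_integrable (ν : Measure ℝ)
    (hν : ∫⁻ y in Set.Ioi (0 : ℝ), ENNReal.ofReal (min 1 y) ∂ν < ⊤)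
    (β : ℝ) (hβ0 : 0 < β) (hβ1 : β ≤ 1) :
    IntegrableOn (fun y => 1 - Real.exp (-(β * y))) (Set.Ioi 0) ν := by
  constructor
  · exact (Continuous.aestronglyMeasurable (by continuity)).restrict
  · rw [hasFiniteIntegral_def]
    refine lt_of_le_of_lt (setLIntegral_mono (by fun_prop) ?_) hν
    intro y hy
    simp only [Set.mem_Ioi] at hy
    have h1 : 1 - Real.exp (-(β * y)) ≤ min 1 y := by
      have he : 1 - β * y ≤ Real.exp (-(β * y)) := by
        have := Real.add_one_le_exp (-(β * y)); linarith
      have h2 : 1 - Real.exp (-(β * y)) ≤ β * y := by linarith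
      have hp := Real.exp_pos (-(β * y))
      exact le_min (by linarith) (h2.trans (by nlinarith))
    have h0 : 0 ≤ 1 - Real.exp (-(β * y)) := by
      have : Real.exp (-(β * y)) ≤ 1 := Real.exp_le_one_iff.2 (by nlinarith)
      linarith
    calc ‖1 - Real.exp (-(β * y))‖ₑ = ENNReal.ofReal (1 - Real.exp (-(β*y))) :=
          Real.enorm_eq_ofReal h0
      _ ≤ ENNReal.ofReal (min 1 y) := ENNReal.ofReal_le_ofReal h1

lemma helper_phi_nonneg (ν : Measure ℝ) (φ : ℝ → ℝ)
    (hφ : ∀ β ≥ (0 : ℝ), φ β = ∫ y in Set.Ioi (0 : ℝ), (1 - Real.exp (-(β * y))) ∂ν)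
    (β : ℝ) (hβ : 0 ≤ β) : 0 ≤ φ β := by
  rw [hφ β hβ]
  refine setIntegral_nonneg measurableSet_Ioi fun y hy => ?_
  simp only [Set.mem_Ioi] at hy
  have : Real.exp (-(β * y)) ≤ 1 := Real.exp_le_one_iff.2 (by nlinarith)
  linarith

lemma helper_phi_lb (ν : Measure ℝ)
    (hν : ∫⁻ y in Set.Ioi (0 : ℝ), ENNReal.ofReal (min 1 y) ∂ν < ⊤)
    (hC : ν (Set.Ioi 1) ≠ ⊤) (φ : ℝ → ℝ)
    (hφ : ∀ β ≥ (0 : ℝ), φ β = ∫ y in Set.Ioi (0 : ℝ), (1 - Real.exp (-(β * y))) ∂ν)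
    (M : ℝ) (hM : 1 ≤ M) :
    (1 - Real.exp (-1)) * (ν (Set.Ioi M)).toReal ≤ φ M⁻¹ := by
  have hM0 : 0 < M := lt_of_lt_of_le one_pos hM
  have hβ0 : 0 < M⁻¹ := inv_pos.2 hM0
  have hβ1 : M⁻¹ ≤ 1 := by rw [inv_le_one_iff₀]; right; exact hM
  have hInt := helper_integrable ν hν M⁻¹ hβ0 hβ1
  have hfin : ν (Set.Ioi M) < ⊤ :=
    lt_of_le_of_lt (measure_mono (Set.Ioi_subset_Ioi hM)) (lt_top_iff_ne_top.2 hC)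
  rw [hφ M⁻¹ hβ0.le]
  calc (1 - Real.exp (-1)) * (ν (Set.Ioi M)).toReal
      = ∫ _ in Set.Ioi M, (1 - Real.exp (-1)) ∂ν := by
        rw [setIntegral_const, smul_eq_mul, mul_comm, measureReal_def]
    _ ≤ ∫ y in Set.Ioi M, (1 - Real.exp (-(M⁻¹ * y))) ∂ν := by
        refine setIntegral_mono_on (integrableOn_const hfin.ne)
          (hInt.mono_set (Set.Ioi_subset_Ioi hM0.le)) measurableSet_Ioi fun y hy => ?_
        simp only [Set.mem_Ioi] at hy
        have h1 : (1:ℝ) ≤ M⁻¹ * y := by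
          rw [← inv_mul_cancel₀ (ne_of_gt hM0)]
          exact mul_le_mul_of_nonneg_left hy.le (le_of_lt hβ0)
        have : Real.exp (-(M⁻¹ * y)) ≤ Real.exp (-1) := Real.exp_le_exp.2 (by linarith)
        linarith
    _ ≤ ∫ y in Set.Ioi 0, (1 - Real.exp (-(M⁻¹ * y))) ∂ν := by
        refine setIntegral_mono_set hInt ?_
          ((Set.Ioi_subset_Ioi hM0.le).eventuallyLE)
        refine (ae_restrict_iff' measurableSet_Ioi).2 (ae_of_all _ fun y hy => ?_)
        simp only [Set.mem_Ioi] at hy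
        have : Real.exp (-(M⁻¹ * y)) ≤ 1 := Real.exp_le_one_iff.2 (by nlinarith)
        simp only [Pi.zero_apply]
        linarith

lemma helper_tail {Ω : Type} [MeasurableSpace Ω] (μ : Measure Ω) [IsProbabilityMeasure μ]
    (W : Ω → ℝ) (hW : Measurable W) (hW0 : 0 ≤ᵐ[μ] W)
    (β p y : ℝ) (hβ : 0 ≤ β) (hy : 0 ≤ y)
    (hLap : ∫ ω, Real.exp (-(β * W ω)) ∂μ = Real.exp (-p)) :
    ENNReal.ofReal (1 - Real.exp (-p) - β * y) ≤ μ {ω | y < W ω} := by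
  set A := {ω | y < W ω} with hA'
  have hA : MeasurableSet A := measurableSet_lt measurable_const hW
  have hexp_meas : Measurable fun ω => Real.exp (-(β * W ω)) :=
    Real.measurable_exp.comp ((measurable_const.mul hW).neg)
  have hint : Integrable (fun ω => Real.exp (-(β * W ω))) μ := by
    refine Integrable.mono' (integrable_const 1) hexp_meas.aestronglyMeasurable ?_
    filter_upwards [hW0] with ω h0
    simp only [Pi.zero_apply] at h0
    rw [Real.norm_eq_abs, abs_of_pos (Real.exp_pos _)]
    exact Real.exp_le_one_iff.2 (by nlinarith)
  set g := fun ω => 1 - Real.exp (-(β * W ω)) with hgdef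
  have hg : Integrable g μ := (integrable_const 1).sub hint
  have hgint : ∫ ω, g ω ∂μ = 1 - Real.exp (-p) := by
    rw [hgdef, integral_sub (integrable_const 1) hint, integral_const, probReal_univ, hLap]
    simp
  have hsplit : ∫ ω, g ω ∂μ = (∫ ω in A, g ω ∂μ) + ∫ ω in Aᶜ, g ω ∂μ :=
    (integral_add_compl hA hg).symm
  have hb1 : ∫ ω in A, g ω ∂μ ≤ (μ A).toReal := by
    calc ∫ ω in A, g ω ∂μ ≤ ∫ _ in A, (1:ℝ) ∂μ := by
          refine setIntegral_mono_on hg.integrableOn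
            (integrableOn_const (measure_ne_top μ A)) hA fun ω _ => ?_
          have := Real.exp_pos (-(β * W ω))
          simp only [hgdef]; linarith
      _ = (μ A).toReal := by rw [setIntegral_const, smul_eq_mul, mul_one, measureReal_def]
  have hb2 : ∫ ω in Aᶜ, g ω ∂μ ≤ β * y := by
    calc ∫ ω in Aᶜ, g ω ∂μ ≤ ∫ _ in Aᶜ, β * y ∂μ := by
          refine setIntegral_mono_on_ae hg.integrableOn
            (integrableOn_const (measure_ne_top μ Aᶜ)) hA.compl ?_
          filter_upwards [hW0] with ω h0 hmem
          simp only [Pi.zero_apply] at h0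
          have hWy : W ω ≤ y := le_of_not_gt (by simpa [hA'] using hmem)
          have he : 1 - β * W ω ≤ Real.exp (-(β * W ω)) := by
            have := Real.add_one_le_exp (-(β * W ω)); linarith
          have : β * W ω ≤ β * y := mul_le_mul_of_nonneg_left hWy hβ
          simp only [hgdef]; linarith
      _ ≤ β * y := by
          rw [setIntegral_const, smul_eq_mul, measureReal_def]
          have h1 : (μ Aᶜ).toReal ≤ 1 := by
            rw [← ENNReal.toReal_one]
            exact ENNReal.toReal_mono ENNReal.one_ne_top prob_le_one
          nlinarith [mul_nonneg hβ hy]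
  have : 1 - Real.exp (-p) - β * y ≤ (μ A).toReal := by
    rw [← hgint] at *; linarith [hsplit ▸ hgint]
  calc ENNReal.ofReal (1 - Real.exp (-p) - β * y) ≤ ENNReal.ofReal ((μ A).toReal) :=
        ENNReal.ofReal_le_ofReal this
    _ = μ A := ENNReal.ofReal_toReal (measure_ne_top μ A)
lemma helper_ruin_step (r x : ℝ) (hr : 0 < r) (hx : 0 < x) (g : ℝ → ℝ)
    (hmono : Monotone g) (hrc : ∀ t, ContinuousWithinAt g (Set.Ici t) t) (n : ℕ)
    (hjump : x * Real.exp (r * ((n : ℝ) + 1)) < g ((n : ℝ) + 1) - g (n : ℝ)) :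
    OU r x g ((n : ℝ) + 1) < 0 := by
  set G : StieltjesFunction ℝ := ⟨g, hmono, hrc⟩ with hG
  have hst : stMeasure g = G.measure := by
    rw [stMeasure, dif_pos ⟨hmono, hrc⟩]
  set t : ℝ := (n : ℝ) + 1 with ht
  have htpos : (0:ℝ) < t := by positivity
  have hnt : (n : ℝ) ≤ t := by simp [ht]
  set f : ℝ → ℝ := fun s => Real.exp (-(r * s)) with hf
  -- integrability of f on Ioc 0 t
  have hIoc_fin : ∀ a b : ℝ, G.measure (Set.Ioc a b) < ⊤ := fun a b => by
    rw [StieltjesFunction.measure_Ioc]; exact ENNReal.ofReal_lt_top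
  have h1 : IntegrableOn f (Set.Ioc 0 t) G.measure := by
    constructor
    · exact (Continuous.aestronglyMeasurable (by continuity)).restrict
    · rw [hasFiniteIntegral_def]
      calc ∫⁻ s in Set.Ioc 0 t, ‖f s‖ₑ ∂G.measure
          ≤ ∫⁻ _ in Set.Ioc 0 t, (1:ℝ≥0∞) ∂G.measure := by
            refine setLIntegral_mono measurable_const fun s hs => ?_
            rw [Real.enorm_eq_ofReal (Real.exp_pos _).le]
            refine le_trans (ENNReal.ofReal_le_ofReal ?_) ENNReal.ofReal_one.le
            refine Real.exp_le_one_iff.2 ?_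
            simp only [Set.mem_Ioc] at hs
            nlinarith [hs.1]
        _ < ⊤ := by rw [setLIntegral_one]; exact hIoc_fin 0 t
  have hf_nonneg : 0 ≤ᵐ[G.measure.restrict (Set.Ioc 0 t)] f :=
    ae_of_all _ fun s => (Real.exp_pos _).le
  have h2 : ∫ s in Set.Ioc (n:ℝ) t, f s ∂G.measure ≤ ∫ s in Set.Ioc 0 t, f s ∂G.measure :=
    setIntegral_mono_set h1 hf_nonneg
      ((Set.Ioc_subset_Ioc_left (Nat.cast_nonneg n)).eventuallyLE)
  have h3 : ∫ _ in Set.Ioc (n:ℝ) t, Real.exp (-(r * t)) ∂G.measure ≤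
      ∫ s in Set.Ioc (n:ℝ) t, f s ∂G.measure := by
    refine setIntegral_mono_on (integrableOn_const (hIoc_fin _ _).ne)
      (h1.mono_set (Set.Ioc_subset_Ioc_left (Nat.cast_nonneg n))) measurableSet_Ioc
      fun s hs => ?_
    simp only [Set.mem_Ioc] at hs
    exact Real.exp_le_exp.2 (by nlinarith [hs.2])
  have h4 : ∫ _ in Set.Ioc (n:ℝ) t, Real.exp (-(r * t)) ∂G.measure =
      (g t - g (n:ℝ)) * Real.exp (-(r * t)) := by
    rw [setIntegral_const, measureReal_def, StieltjesFunction.measure_Ioc, smul_eq_mul,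
      ENNReal.toReal_ofReal (sub_nonneg.2 (hmono hnt))]
  have h5 : x < (g t - g (n:ℝ)) * Real.exp (-(r * t)) := by
    rw [Real.exp_neg, ← div_eq_mul_inv, lt_div_iff₀ (Real.exp_pos _)]
    linarith [hjump]
  have hkey : x < lsInt g f t := by
    rw [lsInt, hst]
    calc x < (g t - g (n:ℝ)) * Real.exp (-(r * t)) := h5
      _ = _ := h4.symm
      _ ≤ ∫ s in Set.Ioc (n:ℝ) t, f s ∂G.measure := h3
      _ ≤ _ := h2
  rw [OU]
  exact mul_neg_of_pos_of_neg (Real.exp_pos _) (by simpa [hf] using sub_neg.2 hkey)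
lemma helper_indep {Ω : Type} [MeasurableSpace Ω] (μ : Measure Ω)
    (Z : ℝ → Ω → ℝ) (hZmeas : ∀ t, Measurable (Z t))
    (hindep : ∀ n : ℕ, ∀ t : Fin (n + 1) → ℝ, Monotone t → (∀ i, 0 ≤ t i) →
      iIndepFun
        (fun i : Fin n => fun ω => Z (t i.succ) ω - Z (t i.castSucc) ω) μ)
    (y : ℕ → ℝ) :
    iIndepSet (fun n : ℕ => (fun ω => Z ((n : ℝ) + 1) ω - Z (n : ℝ) ω) ⁻¹'
      (Set.Ioi (y n))) μ := by
  set D : ℕ → Ω → ℝ := fun n ω => Z ((n : ℝ) + 1) ω - Z (n : ℝ) ω with hD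
  have hDmeas : ∀ n, Measurable (D n) := fun n => (hZmeas _).sub (hZmeas _)
  set A : ℕ → Set Ω := fun n => D n ⁻¹' (Set.Ioi (y n)) with hA
  have hAmeas : ∀ n, MeasurableSet (A n) := fun n => (hDmeas n) measurableSet_Ioi
  rw [iIndepSet_iff_meas_biInter hAmeas]
  intro S
  set m : ℕ := S.sup id + 1 with hm
  have hlt : ∀ k ∈ S, k < m := fun k hk => Nat.lt_succ_of_le (Finset.le_sup (f := id) hk)
  have hmono : Monotone (fun i : Fin (m + 1) => ((i : ℕ) : ℝ)) := fun i j hij => by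
    exact_mod_cast Nat.cast_le.2 hij
  have H := hindep m (fun i : Fin (m+1) => ((i : ℕ) : ℝ)) hmono
    (fun i => Nat.cast_nonneg _)
  have Hfam : (fun i : Fin m => fun ω => Z (((i.succ : Fin (m+1)) : ℕ) : ℝ) ω -
      Z (((i.castSucc : Fin (m+1)) : ℕ) : ℝ) ω) = fun i : Fin m => D (i : ℕ) := by
    funext i
    simp only [hD, Fin.val_succ, Fin.coe_castSucc, Nat.cast_add, Nat.cast_one]
  rw [Hfam] at H
  have hmeas' : ∀ i : Fin m, i ∈ S.attachFin hlt →
      MeasurableSet[(inferInstance : MeasurableSpace ℝ).comap (D (i : ℕ))] (A (i : ℕ)) :=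
    fun i _ => ⟨Set.Ioi (y (i : ℕ)), measurableSet_Ioi, rfl⟩
  have Hkey := H.meas_biInter (S := S.attachFin hlt) (s := fun i : Fin m => A (i : ℕ)) hmeas'
  have hsets : (⋂ i ∈ S.attachFin hlt, A (i : ℕ)) = ⋂ n ∈ S, A n := by
    ext ω
    simp only [Set.mem_iInter, Finset.mem_attachFin]
    constructor
    · intro h n hn
      exact h ⟨n, hlt n hn⟩ hn
    · intro h i hi
      exact h (i : ℕ) hi
  have hprod : (∏ i ∈ S.attachFin hlt, μ (A (i : ℕ))) = ∏ n ∈ S, μ (A n) := by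
    refine Finset.prod_bij (fun a _ => (a : ℕ)) ?_ ?_ ?_ ?_
    · intro a ha; exact (Finset.mem_attachFin hlt).1 ha
    · intro a _ b _ hab; exact Fin.ext hab
    · intro b hb; exact ⟨⟨b, hlt b hb⟩, (Finset.mem_attachFin hlt).2 hb, rfl⟩
    · intro a _; rfl
  rw [hsets, hprod] at Hkey
  exact Hkey

lemma helper_tail_top (R : ℕ → ℝ≥0∞) (hfin : ∀ n, R n ≠ ⊤) (h : ∑' n, R n = ⊤) :
    ∀ N : ℕ, ∑' n : ℕ, R (n + N) = ⊤ := by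
  intro N
  induction N with
  | zero => simpa using h
  | succ k ih =>
      have h2 := ENNReal.tsum_add_one_eq_top (f := fun n => R (n + k)) ih
        (show R (0 + k) ≠ ⊤ by simpa using hfin k)
      rw [← h2]
      exact tsum_congr fun n => congrArg R (by omega)

end helpers

set_option maxHeartbeats 2000000 in
/-- if `∫_1^∞ log y ν(dy) = ∞`, then absolute ruin is certain:
`P(τ₀ < ∞ | X_0 = x) = 1` for every `x > 0`. -/
theorem stmt_4
    {Ω : Type} [MeasurableSpace Ω] (μ : Measure Ω) [IsProbabilityMeasure μ]
    (Z : ℝ → Ω → ℝ) (ν : Measure ℝ) (φ : ℝ → ℝ) (r : ℝ) (hr : 0 < r)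
    (hZmeas : ∀ t, Measurable (Z t))
    (hZ0 : ∀ ω, ∀ s ≤ (0 : ℝ), Z s ω = 0)
    (hpath : ∀ᵐ ω ∂μ, Monotone (fun s => Z s ω) ∧
      ∀ x, ContinuousWithinAt (fun s => Z s ω) (Set.Ici x) x)
    (hν : ∫⁻ y in Set.Ioi (0 : ℝ), ENNReal.ofReal (min 1 y) ∂ν < ⊤)
    (hφ : ∀ β ≥ (0 : ℝ), φ β = ∫ y in Set.Ioi (0 : ℝ), (1 - Real.exp (-(β * y))) ∂ν)
    (hLaplace : ∀ β ≥ (0 : ℝ), ∀ t ≥ (0 : ℝ),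
      ∫ ω, Real.exp (-(β * Z t ω)) ∂μ = Real.exp (-(t * φ β)))
    (hindep : ∀ n : ℕ, ∀ t : Fin (n + 1) → ℝ, Monotone t → (∀ i, 0 ≤ t i) →
      iIndepFun
        (fun i : Fin n => fun ω => Z (t i.succ) ω - Z (t i.castSucc) ω) μ)
    (hstat : ∀ s t : ℝ, 0 ≤ s → s ≤ t →
      Measure.map (fun ω => Z t ω - Z s ω) μ = Measure.map (Z (t - s)) μ)
    (hlog : (∫⁻ y in Set.Ioi (1 : ℝ), ENNReal.ofReal (Real.log y) ∂ν) = ⊤)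
    (x : ℝ) (hx : 0 < x) :
    μ {ω | ruinTime r x (fun s => Z s ω) < ⊤} = 1 := by
  have hepos := Real.exp_pos r
  have he1 : (1:ℝ) ≤ Real.exp r := Real.one_le_exp hr.le
  have hKpos : (0:ℝ) < 1 - Real.exp (-1) := by
    have : Real.exp (-1) < 1 := Real.exp_lt_one_iff.2 (by norm_num)
    linarith
  have hK1 : 1 - Real.exp (-1) ≤ 1 := by linarith [Real.exp_pos (-1:ℝ)]
  set K : ℝ := (1 - Real.exp (-1)) * (1 - Real.exp (-1)) with hKdef
  have hKpos' : 0 < K := mul_pos hKpos hKpos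
  -- basic objects
  set a : ℝ := 2 * Real.exp r with hadef
  have ha : 1 < a := by rw [hadef]; nlinarith
  have ha0 : (0:ℝ) < a := lt_trans one_pos ha
  set c : ℝ := max 1 (x * Real.exp r) with hcdef
  have hc : (1:ℝ) ≤ c := le_max_left _ _
  have hxe : (0:ℝ) < x * Real.exp r := by positivity
  set y : ℕ → ℝ := fun n => x * Real.exp (r * ((n : ℝ) + 1)) with hydef
  have hypos : ∀ n, 0 < y n := fun n => by rw [hydef]; positivity
  set D : ℕ → Ω → ℝ := fun n ω => Z ((n : ℝ) + 1) ω - Z (n : ℝ) ω with hDdef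
  have hDmeas : ∀ n, Measurable (D n) := fun n => (hZmeas _).sub (hZmeas _)
  set A : ℕ → Set Ω := fun n : ℕ => D n ⁻¹' (Set.Ioi (y n)) with hAdef
  have hAmeas : ∀ n, MeasurableSet (A n) := fun n => (hDmeas n) measurableSet_Ioi
  -- ν (Ioi 1) finite
  have hC : ν (Set.Ioi (1:ℝ)) ≠ ⊤ := by
    have h1 : ν (Set.Ioi (1:ℝ)) = ∫⁻ _ in Set.Ioi (1:ℝ), (1:ℝ≥0∞) ∂ν :=
      (setLIntegral_one _).symm
    have h2 : (∫⁻ _ in Set.Ioi (1:ℝ), (1:ℝ≥0∞) ∂ν) ≤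
        ∫⁻ z in Set.Ioi (1:ℝ), ENNReal.ofReal (min 1 z) ∂ν := by
      refine setLIntegral_mono (by fun_prop) fun z hz => ?_
      simp only [Set.mem_Ioi] at hz
      rw [min_eq_left (le_of_lt hz)]
      simp
    have h3 : (∫⁻ z in Set.Ioi (1:ℝ), ENNReal.ofReal (min 1 z) ∂ν) ≤
        ∫⁻ z in Set.Ioi (0:ℝ), ENNReal.ofReal (min 1 z) ∂ν :=
      lintegral_mono_set (Set.Ioi_subset_Ioi zero_le_one)
    exact ne_top_of_le_ne_top (lt_top_iff_ne_top.1 hν) (h1 ▸ h2.trans h3)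
  -- R and its divergence
  set R : ℕ → ℝ≥0∞ := fun m => ν (Set.Ioi (c * a ^ m)) with hRdef
  have hca1 : ∀ m : ℕ, (1:ℝ) ≤ c * a ^ m := fun m => by
    have := one_le_pow₀ (n := m) ha.le
    nlinarith
  have hRfin : ∀ m, R m ≤ ν (Set.Ioi 1) := fun m =>
    measure_mono (Set.Ioi_subset_Ioi (hca1 m))
  have hRnetop : ∀ m, R m ≠ ⊤ := fun m => ne_top_of_le_ne_top hC (hRfin m)
  have hRsum : ∑' m : ℕ, R m = ⊤ := helper_sumdiv ν hC hlog a c ha hc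
  -- Z 1 properties
  have hZ1nonneg : 0 ≤ᵐ[μ] Z 1 := by
    filter_upwards [hpath] with ω hω
    simp only [Pi.zero_apply]
    have := hω.1 (zero_le_one : (0:ℝ) ≤ 1)
    simpa [hZ0 ω 0 le_rfl] using this
  -- measure of A n by stationarity
  have hP : ∀ n : ℕ, μ (A n) = μ {ω | y n < Z 1 ω} := by
    intro n
    have hmap := hstat (n : ℝ) ((n : ℝ) + 1) (Nat.cast_nonneg n) (by linarith)
    have heq : ((n:ℝ) + 1) - (n:ℝ) = 1 := by ring
    rw [heq] at hmap
    calc μ (A n) = Measure.map (D n) μ (Set.Ioi (y n)) :=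
          (Measure.map_apply (hDmeas n) measurableSet_Ioi).symm
      _ = Measure.map (Z 1) μ (Set.Ioi (y n)) := by rw [hDdef]; rw [hmap]
      _ = μ (Z 1 ⁻¹' Set.Ioi (y n)) := Measure.map_apply (hZmeas 1) measurableSet_Ioi
      _ = μ {ω | y n < Z 1 ω} := rfl
  -- choice of N
  obtain ⟨N, hN⟩ := pow_unbounded_of_one_lt ((x * Real.exp r)⁻¹) ha
  have hBge1 : ∀ m, N ≤ m → (1:ℝ) ≤ x * Real.exp r * a ^ m := by
    intro m hm
    have h1 : a ^ N ≤ a ^ m := pow_le_pow_right₀ ha.le hm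
    have h2 : (x * Real.exp r)⁻¹ < a ^ m := lt_of_lt_of_le hN h1
    calc (1:ℝ) = (x * Real.exp r) * (x * Real.exp r)⁻¹ :=
          (mul_inv_cancel₀ (ne_of_gt hxe)).symm
      _ ≤ (x * Real.exp r) * a ^ m := mul_le_mul_of_nonneg_left h2.le hxe.le
      _ = x * Real.exp r * a ^ m := by ring
  -- per-term lower bound for m ≥ N
  have hterm : ∀ m : ℕ, N ≤ m →
      ENNReal.ofReal (K * min ((R m).toReal) 1 - (1/2:ℝ) ^ m) ≤ μ {ω | y m < Z 1 ω} := by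
    intro m hm
    set B : ℝ := x * Real.exp r * a ^ m with hBdef
    have hB1 : (1:ℝ) ≤ B := hBge1 m hm
    have hB0 : (0:ℝ) < B := lt_of_lt_of_le one_pos hB1
    have hβ0 : (0:ℝ) ≤ B⁻¹ := (inv_pos.2 hB0).le
    -- B = 2^m * y m
    have hBy : B = 2 ^ m * y m := by
      simp only [hBdef, hydef, hadef]
      rw [mul_pow, ← Real.exp_nat_mul,
        show r * ((m:ℝ) + 1) = (m:ℝ) * r + r by ring, Real.exp_add]
      ring
    have hβy : B⁻¹ * y m = (1/2:ℝ) ^ m := by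
      rw [hBy, mul_inv, mul_assoc, inv_mul_cancel₀ (ne_of_gt (hypos m)),
        mul_one, ← inv_pow, one_div]
    -- Laplace at β = B⁻¹
    have hLap : ∫ ω, Real.exp (-(B⁻¹ * Z 1 ω)) ∂μ = Real.exp (-(φ B⁻¹)) := by
      have := hLaplace B⁻¹ hβ0 1 zero_le_one
      rwa [one_mul] at this
    have htail := helper_tail μ (Z 1) (hZmeas 1) hZ1nonneg B⁻¹ (φ B⁻¹) (y m)
      hβ0 (hypos m).le hLap
    refine le_trans (ENNReal.ofReal_le_ofReal ?_) htail
    rw [hβy]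
    have hsuff : K * min ((R m).toReal) 1 ≤ 1 - Real.exp (-(φ B⁻¹)) := by
      have hphi0 : 0 ≤ φ B⁻¹ := helper_phi_nonneg ν φ hφ B⁻¹ hβ0
      have hphilb : (1 - Real.exp (-1)) * (ν (Set.Ioi B)).toReal ≤ φ B⁻¹ :=
        helper_phi_lb ν hν hC φ hφ B hB1
      have hνB : ν (Set.Ioi B) ≠ ⊤ :=
        ne_top_of_le_ne_top hC (measure_mono (Set.Ioi_subset_Ioi hB1))
      have hq : (R m).toReal ≤ (ν (Set.Ioi B)).toReal := by
        refine ENNReal.toReal_mono hνB (measure_mono (Set.Ioi_subset_Ioi ?_))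
        rw [hBdef]
        have : x * Real.exp r ≤ c := le_max_right _ _
        nlinarith [pow_pos ha0 m]
      have hq0 : 0 ≤ (R m).toReal := ENNReal.toReal_nonneg
      have step1 : (1 - Real.exp (-1)) * min (φ B⁻¹) 1 ≤ 1 - Real.exp (-(φ B⁻¹)) :=
        helper_chord _ hphi0
      have step2 : min ((1 - Real.exp (-1)) * (R m).toReal) 1 ≤ min (φ B⁻¹) 1 := by
        refine min_le_min ?_ le_rfl
        calc (1 - Real.exp (-1)) * (R m).toReal
            ≤ (1 - Real.exp (-1)) * (ν (Set.Ioi B)).toReal := by nlinarith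
          _ ≤ φ B⁻¹ := hphilb
      have step3 : (1 - Real.exp (-1)) * min ((R m).toReal) 1 ≤
          min ((1 - Real.exp (-1)) * (R m).toReal) 1 :=
        helper_minmul _ _ hKpos.le hK1 hq0
      calc K * min ((R m).toReal) 1
          = (1 - Real.exp (-1)) * ((1 - Real.exp (-1)) * min ((R m).toReal) 1) := by
            rw [hKdef]; ring
        _ ≤ (1 - Real.exp (-1)) * min ((1 - Real.exp (-1)) * (R m).toReal) 1 := by
            nlinarith
        _ ≤ (1 - Real.exp (-1)) * min (φ B⁻¹) 1 := by nlinarith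
        _ ≤ 1 - Real.exp (-(φ B⁻¹)) := step1
    linarith
  -- divergence of ∑ μ (A n)
  have hAsum : ∑' n : ℕ, μ (A n) = ⊤ := by
    rw [tsum_congr hP]
    by_contra hne
    -- geometric sum finite
    have hgeo : ∑' n : ℕ, ENNReal.ofReal ((1/2:ℝ) ^ n) ≠ ⊤ := by
      have hh : ∀ n : ℕ, ENNReal.ofReal ((1/2:ℝ) ^ n) = (ENNReal.ofReal (1/2)) ^ n :=
        fun n => ENNReal.ofReal_pow (by norm_num) n
      rw [tsum_congr hh, ENNReal.tsum_geometric]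
      rw [← lt_top_iff_ne_top, ENNReal.inv_lt_top]
      rw [tsub_pos_iff_lt]
      exact ENNReal.ofReal_lt_one.2 (by norm_num)
    have htailμ : ∑' n : ℕ, μ {ω | y (n + N) < Z 1 ω} ≠ ⊤ := by
      refine ne_top_of_le_ne_top hne ?_
      exact ENNReal.tsum_comp_le_tsum_of_injective (add_left_injective N) _
    have hgeo' : ∑' n : ℕ, ENNReal.ofReal ((1/2:ℝ) ^ (n + N)) ≠ ⊤ := by
      refine ne_top_of_le_ne_top hgeo ?_
      exact ENNReal.tsum_comp_le_tsum_of_injective (add_left_injective N) _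
    have hfin1 : ∑' n : ℕ, ENNReal.ofReal (K * min ((R (n + N)).toReal) 1) ≠ ⊤ := by
      have hle : ∀ n : ℕ, ENNReal.ofReal (K * min ((R (n + N)).toReal) 1) ≤
          μ {ω | y (n + N) < Z 1 ω} + ENNReal.ofReal ((1/2:ℝ) ^ (n + N)) := by
        intro n
        have h1 := hterm (n + N) (Nat.le_add_left N n)
        calc ENNReal.ofReal (K * min ((R (n + N)).toReal) 1)
            = ENNReal.ofReal ((K * min ((R (n + N)).toReal) 1 - (1/2:ℝ) ^ (n + N))
              + (1/2:ℝ) ^ (n + N)) := by ring_nf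
          _ ≤ ENNReal.ofReal (K * min ((R (n + N)).toReal) 1 - (1/2:ℝ) ^ (n + N))
              + ENNReal.ofReal ((1/2:ℝ) ^ (n + N)) := ENNReal.ofReal_add_le
          _ ≤ _ := add_le_add_left h1 _
      refine ne_top_of_le_ne_top ?_ (Summable.tsum_le_tsum hle ENNReal.summable ENNReal.summable)
      rw [ENNReal.tsum_add]
      exact ENNReal.add_ne_top.2 ⟨htailμ, hgeo'⟩
    -- convert to min of R
    have hconv : ∀ n : ℕ, ENNReal.ofReal (K * min ((R (n + N)).toReal) 1) =
        ENNReal.ofReal K * min (R (n + N)) 1 := by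
      intro n
      rw [ENNReal.ofReal_mul hKpos'.le]
      congr 1
      have hmono : Monotone ENNReal.ofReal := fun _ _ h => ENNReal.ofReal_le_ofReal h
      rw [hmono.map_min, ENNReal.ofReal_one, ENNReal.ofReal_toReal (hRnetop _)]
    rw [tsum_congr hconv, ENNReal.tsum_mul_left] at hfin1
    have hTfin : ∑' n : ℕ, min (R (n + N)) 1 ≠ ⊤ := by
      intro htop
      rw [htop, ENNReal.mul_top (by simpa using hKpos')] at hfin1
      exact hfin1 rfl
    -- R tail diverges
    have hRtail : ∑' n : ℕ, R (n + N) = ⊤ := helper_tail_top R hRnetop hRsum N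
    have : ∑' n : ℕ, R (n + N) ≤ (ν (Set.Ioi 1) + 1) * ∑' n : ℕ, min (R (n + N)) 1 := by
      rw [← ENNReal.tsum_mul_left]
      exact Summable.tsum_le_tsum (fun n => helper_enn_min _ _ (hRfin _))
        ENNReal.summable ENNReal.summable
    rw [hRtail, top_le_iff] at this
    exact (ENNReal.mul_ne_top (ENNReal.add_ne_top.2 ⟨hC, ENNReal.one_ne_top⟩) hTfin) this
  -- independence and Borel-Cantelli
  have hAind : iIndepSet A μ := helper_indep μ Z hZmeas hindep y
  have hBC : μ (limsup A atTop) = 1 := measure_limsup_eq_one hAmeas hAind hAsum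
  -- conclusion
  set G : Set Ω := {ω | Monotone (fun s => Z s ω) ∧
    ∀ u, ContinuousWithinAt (fun s => Z s ω) (Set.Ici u) u} with hGdef
  have hGc : μ Gᶜ = 0 := by
    have h1 : Gᶜ = {ω | ¬((Monotone fun s => Z s ω) ∧
        ∀ u, ContinuousWithinAt (fun s => Z s ω) (Set.Ici u) u)} := by
      rw [hGdef]
      rfl
    rw [h1]
    exact ae_iff.1 hpath
  have hsub : (limsup A atTop) ∩ G ⊆ {ω | ruinTime r x (fun s => Z s ω) < ⊤} := by
    rintro ω ⟨h1, h2⟩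
    obtain ⟨n, hn⟩ := (Filter.mem_limsup_iff_frequently_mem.1 h1).exists
    have hjump : x * Real.exp (r * ((n : ℝ) + 1)) <
        (fun s => Z s ω) ((n : ℝ) + 1) - (fun s => Z s ω) (n : ℝ) := by
      simpa [hAdef, hDdef, hydef] using hn
    have hOU := helper_ruin_step r x hr hx (fun s => Z s ω) h2.1 h2.2 n hjump
    have hle : ruinTime r x (fun s => Z s ω) ≤ ENNReal.ofReal ((n : ℝ) + 1) := by
      refine biInf_le _ ?_
      exact ⟨by positivity, hOU⟩
    exact lt_of_le_of_lt hle ENNReal.ofReal_lt_top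
  have hLG : (1:ℝ≥0∞) ≤ μ ((limsup A atTop) ∩ G) := by
    have hcover : limsup A atTop ⊆ ((limsup A atTop) ∩ G) ∪ Gᶜ := by
      intro ω hω
      by_cases hg : ω ∈ G
      · exact Or.inl ⟨hω, hg⟩
      · exact Or.inr hg
    calc (1:ℝ≥0∞) = μ (limsup A atTop) := hBC.symm
      _ ≤ μ (((limsup A atTop) ∩ G) ∪ Gᶜ) := measure_mono hcover
      _ ≤ μ ((limsup A atTop) ∩ G) + μ Gᶜ := measure_union_le _ _
      _ = μ ((limsup A atTop) ∩ G) := by rw [hGc, add_zero]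
  refine le_antisymm prob_le_one ?_
  exact le_trans hLG (measure_mono hsub)
end

section
/- (Duality of semigroups.) For every t ≥ 0 and all nonnegative measurable functions f, g : ℝ → [0,∞], ∫_ℝ E[ f( e^{rt}(x − ∫_0^t e^{−rs} dZ_s) ) ] g(x) dx = e^{−rt} ∫_ℝ f(x) E[ g( e^{−rt}(x + ∫_0^t e^{rs} dZ_s) ) ] dx. -/
open MeasureTheory ProbabilityTheory Filter
open scoped ENNReal

lemma stMeasure_of {w : ℝ → ℝ} (hm : Monotone w)
    (hc : ∀ x, ContinuousWithinAt w (Set.Ici x) x) :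
    stMeasure w = StieltjesFunction.measure ⟨w, hm, hc⟩ := dif_pos ⟨hm, hc⟩

lemma piece_bound (σ : Measure ℝ) [IsLocallyFiniteMeasure σ] {c : ℝ → ℝ}
    (hcont : Continuous c) {a b e δ : ℝ} (hab : a ≤ b)
    (hbd : ∀ s ∈ Set.Ioc a b, |c s - e| ≤ δ) :
    |(∫ s in Set.Ioc a b, c s ∂σ) - e * (σ (Set.Ioc a b)).toReal|
      ≤ δ * (σ (Set.Ioc a b)).toReal := by
  have hfin : σ (Set.Ioc a b) < ⊤ :=
    lt_of_le_of_lt (measure_mono Set.Ioc_subset_Icc_self) isCompact_Icc.measure_lt_top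
  haveI : IsFiniteMeasure (σ.restrict (Set.Ioc a b)) :=
    ⟨by rwa [Measure.restrict_apply_univ]⟩
  have hint : Integrable c (σ.restrict (Set.Ioc a b)) := by
    have := (hcont.intervalIntegrable (μ := σ) a b)
    rw [intervalIntegrable_iff_integrableOn_Ioc_of_le hab] at this
    exact this
  have hconst : Integrable (fun _ : ℝ => e) (σ.restrict (Set.Ioc a b)) :=
    integrable_const e
  have h1 : (∫ s in Set.Ioc a b, c s ∂σ) - e * (σ (Set.Ioc a b)).toReal
      = ∫ s in Set.Ioc a b, (c s - e) ∂σ := by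
    rw [integral_sub hint hconst, integral_const, measureReal_restrict_apply_univ,
      measureReal_def, smul_eq_mul, mul_comm]
  rw [h1]
  have := norm_integral_le_of_norm_le_const (μ := σ.restrict (Set.Ioc a b))
    (f := fun s => c s - e) (C := δ) ?_
  · simpa [Real.norm_eq_abs, Measure.restrict_apply_univ, measureReal_def] using this
  · filter_upwards [ae_restrict_mem measurableSet_Ioc] with s hs
    simpa [Real.norm_eq_abs] using hbd s hs

lemma lsInt_approx {w : ℝ → ℝ} (hm : Monotone w)
    (hc : ∀ x, ContinuousWithinAt w (Set.Ici x) x) {t : ℝ} (ht : 0 ≤ t)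
    {c : ℝ → ℝ} (hcont : Continuous c) (N : ℕ) (hN : 0 < N) (e : ℕ → ℝ) (δ : ℝ)
    (hbd : ∀ k, k < N → ∀ s ∈ Set.Ioc ((k : ℝ) * t / N) (((k : ℝ) + 1) * t / N),
      |c s - e k| ≤ δ) :
    |lsInt w c t - ∑ k ∈ Finset.range N,
        e k * (w (((k : ℝ) + 1) * t / N) - w ((k : ℝ) * t / N))| ≤ δ * (w t - w 0) := by
  set σ : Measure ℝ := stMeasure w with hσ
  have hσeq : σ = StieltjesFunction.measure ⟨w, hm, hc⟩ := stMeasure_of hm hc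
  haveI : IsLocallyFiniteMeasure σ := by rw [hσeq]; infer_instance
  set τ : ℕ → ℝ := fun k => (k : ℝ) * t / N with hτ
  have hNpos : (0 : ℝ) < N := by exact_mod_cast hN
  have hτmono : Monotone τ := by
    intro i j hij
    have h1 : (i : ℝ) ≤ j := by exact_mod_cast hij
    simp only [hτ]
    gcongr
  have hτ0 : τ 0 = 0 := by simp [hτ]
  have hτN : τ N = t := by simp only [hτ]; exact mul_div_cancel_left₀ t hNpos.ne'
  -- split the integral
  have hsplit : lsInt w c t = ∑ k ∈ Finset.range N, ∫ s in Set.Ioc (τ k) (τ (k + 1)), c s ∂σ := by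
    have hint : ∀ k, k < N → IntervalIntegrable c σ (τ k) (τ (k + 1)) :=
      fun k _ => hcont.intervalIntegrable _ _
    have := intervalIntegral.sum_integral_adjacent_intervals (μ := σ) (f := c) hint
    rw [hτ0, hτN] at this
    have h2 : ∀ k ∈ Finset.range N, (∫ s in τ k..τ (k + 1), c s ∂σ)
        = ∫ s in Set.Ioc (τ k) (τ (k + 1)), c s ∂σ := fun k _ =>
      intervalIntegral.integral_of_le (hτmono (Nat.le_succ k))
    rw [Finset.sum_congr rfl h2] at this
    rw [lsInt, ← hσ, ← intervalIntegral.integral_of_le ht, ← this]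
  have hmass : ∀ k : ℕ, (σ (Set.Ioc (τ k) (τ (k + 1)))).toReal = w (τ (k + 1)) - w (τ k) := by
    intro k
    rw [hσeq, StieltjesFunction.measure_Ioc]
    exact ENNReal.toReal_ofReal (sub_nonneg.2 (hm (hτmono (Nat.le_succ k))))
  have hdiff : lsInt w c t - ∑ k ∈ Finset.range N,
        e k * (w (((k : ℝ) + 1) * t / N) - w ((k : ℝ) * t / N))
      = ∑ k ∈ Finset.range N,
        ((∫ s in Set.Ioc (τ k) (τ (k + 1)), c s ∂σ) - e k * (σ (Set.Ioc (τ k) (τ (k + 1)))).toReal) := by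
    rw [hsplit, ← Finset.sum_sub_distrib]
    refine Finset.sum_congr rfl fun k _ => ?_
    rw [hmass k]
    congr 2 <;> · simp only [hτ]; push_cast; ring_nf
  rw [hdiff]
  calc |∑ k ∈ Finset.range N,
        ((∫ s in Set.Ioc (τ k) (τ (k + 1)), c s ∂σ) - e k * (σ (Set.Ioc (τ k) (τ (k + 1)))).toReal)|
      ≤ ∑ k ∈ Finset.range N,
        |(∫ s in Set.Ioc (τ k) (τ (k + 1)), c s ∂σ) - e k * (σ (Set.Ioc (τ k) (τ (k + 1)))).toReal| :=
        Finset.abs_sum_le_sum_abs _ _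
    _ ≤ ∑ k ∈ Finset.range N, δ * (w (τ (k + 1)) - w (τ k)) := by
        refine Finset.sum_le_sum fun k hk => ?_
        rw [← hmass k]
        refine piece_bound σ hcont (a := τ k) (b := τ (k+1)) (hτmono (Nat.le_succ k)) (e := e k) (δ := δ) ?_
        intro s hs
        refine hbd k (Finset.mem_range.1 hk) s ?_
        convert hs using 2 <;> · simp only [hτ]; push_cast; ring_nf
    _ = δ * (w t - w 0) := by
        rw [← Finset.mul_sum]
        congr 1
        have := Finset.sum_range_sub (fun k => w (τ k)) N
        rw [this, hτ0, hτN]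

lemma iIndepFun_map_pi {Ω : Type} [MeasurableSpace Ω] (μ : Measure Ω)
    [IsProbabilityMeasure μ] {n : ℕ} (X : Fin n → Ω → ℝ) (hX : ∀ i, Measurable (X i))
    (h : iIndepFun (m := fun _ => (inferInstance : MeasurableSpace ℝ)) X μ) :
    Measure.map (fun ω i => X i ω) μ = Measure.pi (fun i => Measure.map (X i) μ) := by
  haveI : ∀ i, IsProbabilityMeasure (Measure.map (X i) μ) :=
    fun i => Measure.isProbabilityMeasure_map (hX i).aemeasurable
  refine (Measure.pi_eq ?_).symm
  intro s hs
  rw [Measure.map_apply (measurable_pi_lambda _ fun i => hX i) (MeasurableSet.univ_pi hs)]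
  have hpre : (fun ω i => X i ω) ⁻¹' Set.pi Set.univ s = ⋂ i ∈ Finset.univ, X i ⁻¹' s i := by
    ext ω; simp [Set.mem_pi]
  rw [hpre, h.measure_inter_preimage_eq_mul Finset.univ (fun i _ => hs i)]
  exact Finset.prod_congr rfl fun i _ => (Measure.map_apply (hX i) (hs i)).symm

lemma pi_map_rev {n : ℕ} (ρ : Measure ℝ) [IsProbabilityMeasure ρ] :
    Measure.map (fun (x : Fin n → ℝ) i => x (Fin.rev i)) (Measure.pi fun _ => ρ)
      = Measure.pi (fun _ => ρ) := by
  refine (Measure.pi_eq ?_).symm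
  intro s hs
  rw [Measure.map_apply (measurable_pi_lambda (fun (x : Fin n → ℝ) i => x (Fin.rev i))
    (fun i => measurable_pi_apply (Fin.rev i))) (MeasurableSet.univ_pi hs)]
  have hpre : (fun (x : Fin n → ℝ) i => x (Fin.rev i)) ⁻¹' Set.pi Set.univ s
      = Set.pi Set.univ (fun j => s (Fin.rev j)) := by
    ext x
    simp only [Set.mem_preimage, Set.mem_pi, Set.mem_univ, forall_true_left, true_implies]
    constructor
    · intro hx j
      have := hx (Fin.rev j)
      rwa [Fin.rev_rev] at this
    · intro hx i
      have := hx (Fin.rev i)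
      rwa [Fin.rev_rev] at this
  rw [hpre, Measure.pi_pi]
  exact Equiv.prod_comp (Equiv.mk Fin.rev Fin.rev Fin.rev_rev Fin.rev_rev) (fun j => ρ (s j))

lemma change_var (f g : ℝ → ℝ≥0∞) (hf : Measurable f) (hg : Measurable g)
    (E : ℝ) (hE : 0 < E) (a : ℝ) :
    ∫⁻ x : ℝ, f (E * (x - a)) * g x
      = ENNReal.ofReal E⁻¹ * ∫⁻ y : ℝ, f y * g (E⁻¹ * y + a) := by
  set F : ℝ → ℝ≥0∞ := fun y => f y * g (E⁻¹ * y + a) with hF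
  have hFmeas : Measurable F :=
    (hf.comp measurable_id).mul (hg.comp (measurable_id.const_mul _ |>.add_const _))
  have hTmeas : Measurable (fun x : ℝ => E * (x - a)) :=
    (measurable_id.sub_const a).const_mul E
  have hmap : Measure.map (fun x : ℝ => E * (x - a)) volume
      = ENNReal.ofReal |E⁻¹| • volume := by
    have h1 : (fun x : ℝ => E * (x - a)) = (fun y : ℝ => y + (-(E * a))) ∘ (fun x => E * x) := by
      funext x; simp; ring
    rw [h1, ← Measure.map_map (measurable_add_const (-(E * a))) (measurable_const_mul E),
      Real.map_volume_mul_left (ne_of_gt hE), Measure.map_smul,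
      map_add_right_eq_self volume (-(E * a))]
  have hpt : ∀ x : ℝ, f (E * (x - a)) * g x = F (E * (x - a)) := by
    intro x
    have : E⁻¹ * (E * (x - a)) + a = x := by field_simp; ring
    simp [hF, this]
  calc ∫⁻ x : ℝ, f (E * (x - a)) * g x = ∫⁻ x : ℝ, F (E * (x - a)) := by simp_rw [hpt]
    _ = ∫⁻ y, F y ∂(Measure.map (fun x : ℝ => E * (x - a)) volume) :=
        (lintegral_map hFmeas hTmeas).symm
    _ = ENNReal.ofReal E⁻¹ * ∫⁻ y : ℝ, F y := by
        rw [hmap, lintegral_smul_measure, abs_of_pos (inv_pos.2 hE), smul_eq_mul]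

lemma exp_bound1 {r a s d : ℝ} (hr : 0 < r) (ha : 0 ≤ a) (h1 : a ≤ s) (h2 : s ≤ a + d) :
    |Real.exp (-(r * s)) - Real.exp (-(r * a))| ≤ r * d := by
  have hd : 0 ≤ d := by linarith
  have e1 : Real.exp (-(r * s)) ≤ Real.exp (-(r * a)) := Real.exp_le_exp.2 (by nlinarith)
  rw [abs_of_nonpos (by linarith), neg_sub]
  have e2 : Real.exp (-(r * (a + d))) ≤ Real.exp (-(r * s)) := Real.exp_le_exp.2 (by nlinarith)
  have e3 : Real.exp (-(r * (a + d))) = Real.exp (-(r * a)) * Real.exp (-(r * d)) := by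
    rw [← Real.exp_add]; ring_nf
  have e4 : Real.exp (-(r * a)) ≤ 1 := Real.exp_le_one_iff.2 (by nlinarith)
  have e5 : 1 - Real.exp (-(r * d)) ≤ r * d := by
    have := Real.add_one_le_exp (-(r * d)); linarith
  nlinarith [Real.exp_pos (-(r * d)), Real.exp_pos (-(r * a))]

lemma exp_bound2 {r b s d T : ℝ} (hr : 0 < r) (h1 : b - d ≤ s) (h2 : s ≤ b) (hb : b ≤ T) :
    |Real.exp (r * s) - Real.exp (r * b)| ≤ Real.exp (r * T) * (r * d) := by
  have hd : 0 ≤ d := by linarith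
  have e1 : Real.exp (r * s) ≤ Real.exp (r * b) := Real.exp_le_exp.2 (by nlinarith)
  rw [abs_of_nonpos (by linarith), neg_sub]
  have e2 : Real.exp (r * (b - d)) ≤ Real.exp (r * s) := Real.exp_le_exp.2 (by nlinarith)
  have e3 : Real.exp (r * (b - d)) = Real.exp (r * b) * Real.exp (-(r * d)) := by
    rw [← Real.exp_add]; ring_nf
  have e4 : Real.exp (r * b) ≤ Real.exp (r * T) := Real.exp_le_exp.2 (by nlinarith)
  have e5 : 1 - Real.exp (-(r * d)) ≤ r * d := by
    have := Real.add_one_le_exp (-(r * d)); linarith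
  have e6 : Real.exp (-(r * d)) ≤ 1 := Real.exp_le_one_iff.2 (by nlinarith)
  have key : Real.exp (r * b) * (1 - Real.exp (-(r * d))) ≤ Real.exp (r * T) * (r * d) :=
    mul_le_mul e4 e5 (by linarith) (Real.exp_pos _).le
  nlinarith [Real.exp_pos (-(r * d))]

set_option maxHeartbeats 1000000 in
/-- duality of semigroups. For every `t ≥ 0` and nonnegative measurable
`f, g`, `∫ E[f(e^{rt}(x - ∫_0^t e^{-rs} dZ_s))] g(x) dx
  = e^{-rt} ∫ f(x) E[g(e^{-rt}(x + ∫_0^t e^{rs} dZ_s))] dx`. -/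
theorem stmt_9
    {Ω : Type} [MeasurableSpace Ω] (μ : Measure Ω) [IsProbabilityMeasure μ]
    (Z : ℝ → Ω → ℝ) (ν : Measure ℝ) (φ : ℝ → ℝ) (r : ℝ) (hr : 0 < r)
    (hZmeas : ∀ t, Measurable (Z t))
    (hZ0 : ∀ ω, ∀ s ≤ (0 : ℝ), Z s ω = 0)
    (hpath : ∀ᵐ ω ∂μ, Monotone (fun s => Z s ω) ∧
      ∀ x, ContinuousWithinAt (fun s => Z s ω) (Set.Ici x) x)
    (hν : ∫⁻ y in Set.Ioi (0 : ℝ), ENNReal.ofReal (min 1 y) ∂ν < ⊤)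
    (hφ : ∀ β ≥ (0 : ℝ), φ β = ∫ y in Set.Ioi (0 : ℝ), (1 - Real.exp (-(β * y))) ∂ν)
    (hLaplace : ∀ β ≥ (0 : ℝ), ∀ t ≥ (0 : ℝ),
      ∫ ω, Real.exp (-(β * Z t ω)) ∂μ = Real.exp (-(t * φ β)))
    (hindep : ∀ n : ℕ, ∀ t : Fin (n + 1) → ℝ, Monotone t → (∀ i, 0 ≤ t i) →
      iIndepFun (m := fun _ => (inferInstance : MeasurableSpace ℝ))
        (fun i : Fin n => fun ω => Z (t i.succ) ω - Z (t i.castSucc) ω) μ)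
    (hstat : ∀ s t : ℝ, 0 ≤ s → s ≤ t →
      Measure.map (fun ω => Z t ω - Z s ω) μ = Measure.map (Z (t - s)) μ)
    (f g : ℝ → ℝ≥0∞) (hf : Measurable f) (hg : Measurable g)
    (t : ℝ) (ht : 0 ≤ t) :
    ∫⁻ x : ℝ, (∫⁻ ω, f (Real.exp (r * t) *
        (x - lsInt (fun s => Z s ω) (fun s => Real.exp (-(r * s))) t)) ∂μ) * g x =
      ENNReal.ofReal (Real.exp (-(r * t))) *
        ∫⁻ x : ℝ, f x * ∫⁻ ω, g (Real.exp (-(r * t)) *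
          (x + lsInt (fun s => Z s ω) (fun s => Real.exp (r * s)) t)) ∂μ := by
  have hE : (0:ℝ) < Real.exp (r * t) := Real.exp_pos _
  set A : Ω → ℝ := fun ω => lsInt (fun s => Z s ω) (fun s => Real.exp (-(r * s))) t with hAdef
  set B : Ω → ℝ := fun ω => lsInt (fun s => Z s ω) (fun s => Real.exp (r * s)) t with hBdef
  set A' : Ω → ℝ := fun ω => Real.exp (-(r * t)) * B ω with hA'def
  set τ : ℕ → ℕ → ℝ := fun n k => (k : ℝ) * t / ((n : ℝ) + 1) with hτdef
  set S : ℕ → Ω → ℝ := fun n ω => ∑ k ∈ Finset.range (n + 1),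
    Real.exp (-(r * τ n k)) * (Z (τ n (k + 1)) ω - Z (τ n k) ω) with hSdef
  set S' : ℕ → Ω → ℝ := fun n ω => ∑ k ∈ Finset.range (n + 1),
    Real.exp (-(r * τ n k)) * (Z (τ n (n + 1 - k)) ω - Z (τ n (n - k)) ω) with hS'def
  have hNpos : ∀ n : ℕ, (0:ℝ) < (n:ℝ) + 1 := fun n => by positivity
  have hτnonneg : ∀ n k, 0 ≤ τ n k := fun n k => by
    simp only [hτdef]; positivity
  have hτmono : ∀ n, Monotone (τ n) := by
    intro n i j hij
    simp only [hτdef]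
    have h1 : (i:ℝ) ≤ (j:ℝ) := by exact_mod_cast hij
    gcongr
  have hτle : ∀ n k, k ≤ n + 1 → τ n k ≤ t := by
    intro n k hk
    simp only [hτdef]
    rw [div_le_iff₀ (hNpos n)]
    have : (k:ℝ) ≤ (n:ℝ) + 1 := by exact_mod_cast hk
    nlinarith
  have hSmeas : ∀ n, Measurable (S n) := by
    intro n
    simp only [hSdef]
    exact Finset.measurable_sum _ fun k _ =>
      (measurable_const.mul ((hZmeas _).sub (hZmeas _)))
  have hS'meas : ∀ n, Measurable (S' n) := by
    intro n
    simp only [hS'def]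
    exact Finset.measurable_sum _ fun k _ =>
      (measurable_const.mul ((hZmeas _).sub (hZmeas _)))
  -- a.e. convergence of the Riemann sums
  have hStendsto : ∀ᵐ ω ∂μ, Filter.Tendsto (fun n => S n ω) atTop (nhds (A ω)) := by
    filter_upwards [hpath] with ω hω
    obtain ⟨hm, hc⟩ := hω
    have h0 : Z 0 ω = 0 := hZ0 ω 0 le_rfl
    have hbound : ∀ n : ℕ, |S n ω - A ω| ≤ r * t / ((n : ℝ) + 1) * Z t ω := by
      intro n
      have hcont : Continuous fun s : ℝ => Real.exp (-(r * s)) :=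
        Real.continuous_exp.comp (continuous_const.mul continuous_id).neg
      have happ := lsInt_approx hm hc ht hcont (n + 1) (Nat.succ_pos n)
        (fun k => Real.exp (-(r * τ n k))) (r * t / ((n : ℝ) + 1)) ?_
      · rw [abs_sub_comm]
        simp only [hAdef]
        have hsum : ∑ k ∈ Finset.range (n + 1), Real.exp (-(r * τ n k)) *
              (Z (((k : ℝ) + 1) * t / ((n + 1 : ℕ) : ℝ)) ω - Z ((k : ℝ) * t / ((n + 1 : ℕ) : ℝ)) ω)
            = S n ω := by
          simp only [hSdef]
          refine Finset.sum_congr rfl fun k _ => ?_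
          have c1 : ((k : ℝ) + 1) * t / ((n + 1 : ℕ) : ℝ) = τ n (k + 1) := by
            simp only [hτdef]; push_cast; ring
          have c2 : (k : ℝ) * t / ((n + 1 : ℕ) : ℝ) = τ n k := by
            simp only [hτdef]; push_cast; ring
          rw [c1, c2]
        rw [hsum, h0, sub_zero] at happ
        exact happ
      · intro k hk s hs
        have hc1 : (k : ℝ) * t / ((n + 1 : ℕ) : ℝ) = τ n k := by
          simp only [hτdef]; push_cast; ring
        have hc2 : ((k : ℝ) + 1) * t / ((n + 1 : ℕ) : ℝ) = τ n k + t / ((n : ℝ) + 1) := by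
          simp only [hτdef]; push_cast; ring
        rw [hc1, hc2] at hs
        have hb := exp_bound1 (d := t / ((n : ℝ) + 1)) hr (hτnonneg n k) hs.1.le hs.2
        calc |Real.exp (-(r * s)) - Real.exp (-(r * τ n k))| ≤ r * (t / ((n : ℝ) + 1)) := hb
          _ = r * t / ((n : ℝ) + 1) := by ring
    have hlim : Filter.Tendsto (fun n : ℕ => r * t / ((n : ℝ) + 1) * Z t ω) atTop (nhds 0) := by
      have h2 : (fun n : ℕ => r * t / ((n : ℝ) + 1) * Z t ω)
          = fun n : ℕ => r * t * Z t ω * (1 / ((n : ℝ) + 1)) := by funext n; ring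
      rw [h2]
      simpa using tendsto_one_div_add_atTop_nhds_zero_nat.const_mul (r * t * Z t ω)
    have h3 : Filter.Tendsto (fun n => S n ω - A ω) atTop (nhds 0) :=
      squeeze_zero_norm (fun n => by rw [Real.norm_eq_abs]; exact hbound n) hlim
    have h4 := h3.add_const (A ω)
    simpa using h4
  have hS'tendsto : ∀ᵐ ω ∂μ, Filter.Tendsto (fun n => S' n ω) atTop (nhds (A' ω)) := by
    filter_upwards [hpath] with ω hω
    obtain ⟨hm, hc⟩ := hω
    have h0 : Z 0 ω = 0 := hZ0 ω 0 le_rfl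
    have hrefl : ∀ n, S' n ω = Real.exp (-(r * t)) * ∑ k ∈ Finset.range (n + 1),
        Real.exp (r * τ n (k + 1)) * (Z (τ n (k + 1)) ω - Z (τ n k) ω) := by
      intro n
      rw [Finset.mul_sum, ← Finset.sum_range_reflect (fun j => Real.exp (-(r * t)) *
        (Real.exp (r * τ n (j + 1)) * (Z (τ n (j + 1)) ω - Z (τ n j) ω))) (n + 1)]
      simp only [hS'def]
      refine Finset.sum_congr rfl fun k hk => ?_
      have hkn : k ≤ n := Nat.lt_succ_iff.1 (Finset.mem_range.1 hk)
      have h1 : n + 1 - 1 - k = n - k := by omega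
      have h2 : n - k + 1 = n + 1 - k := by omega
      rw [h1, h2, ← mul_assoc, ← Real.exp_add]
      congr 2
      simp only [hτdef]
      have h3 : ((n + 1 - k : ℕ) : ℝ) = (n : ℝ) + 1 - (k : ℝ) := by
        push_cast [Nat.cast_sub (by omega : k ≤ n + 1)]; ring
      rw [h3]
      field_simp
      ring
    have hboundT : ∀ n : ℕ, |(∑ k ∈ Finset.range (n + 1),
        Real.exp (r * τ n (k + 1)) * (Z (τ n (k + 1)) ω - Z (τ n k) ω)) - B ω|
        ≤ Real.exp (r * t) * (r * t / ((n : ℝ) + 1)) * Z t ω := by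
      intro n
      have hcont : Continuous fun s : ℝ => Real.exp (r * s) :=
        Real.continuous_exp.comp (continuous_const.mul continuous_id)
      have happ := lsInt_approx hm hc ht hcont (n + 1) (Nat.succ_pos n)
        (fun k => Real.exp (r * τ n (k + 1))) (Real.exp (r * t) * (r * t / ((n : ℝ) + 1))) ?_
      · rw [abs_sub_comm]
        simp only [hBdef]
        have hsum : ∑ k ∈ Finset.range (n + 1), Real.exp (r * τ n (k + 1)) *
              (Z (((k : ℝ) + 1) * t / ((n + 1 : ℕ) : ℝ)) ω - Z ((k : ℝ) * t / ((n + 1 : ℕ) : ℝ)) ω)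
            = ∑ k ∈ Finset.range (n + 1),
              Real.exp (r * τ n (k + 1)) * (Z (τ n (k + 1)) ω - Z (τ n k) ω) := by
          refine Finset.sum_congr rfl fun k _ => ?_
          have c1 : ((k : ℝ) + 1) * t / ((n + 1 : ℕ) : ℝ) = τ n (k + 1) := by
            simp only [hτdef]; push_cast; ring
          have c2 : (k : ℝ) * t / ((n + 1 : ℕ) : ℝ) = τ n k := by
            simp only [hτdef]; push_cast; ring
          rw [c1, c2]
        rw [hsum, h0, sub_zero] at happ
        calc |(lsInt (fun s => Z s ω) (fun s => Real.exp (r * s)) t) - ∑ k ∈ Finset.range (n + 1),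
              Real.exp (r * τ n (k + 1)) * (Z (τ n (k + 1)) ω - Z (τ n k) ω)|
            ≤ Real.exp (r * t) * (r * t / ((n : ℝ) + 1)) * Z t ω := happ
          _ = Real.exp (r * t) * (r * t / ((n : ℝ) + 1)) * Z t ω := rfl
      · intro k hk s hs
        have hc1 : (k : ℝ) * t / ((n + 1 : ℕ) : ℝ) = τ n (k + 1) - t / ((n : ℝ) + 1) := by
          simp only [hτdef]; push_cast; ring
        have hc2 : ((k : ℝ) + 1) * t / ((n + 1 : ℕ) : ℝ) = τ n (k + 1) := by
          simp only [hτdef]; push_cast; ring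
        rw [hc1, hc2] at hs
        have hb := exp_bound2 (d := t / ((n : ℝ) + 1)) (T := t) hr hs.1.le hs.2
          (hτle n (k + 1) (by omega))
        calc |Real.exp (r * s) - Real.exp (r * τ n (k + 1))|
            ≤ Real.exp (r * t) * (r * (t / ((n : ℝ) + 1))) := hb
          _ = Real.exp (r * t) * (r * t / ((n : ℝ) + 1)) := by ring
    have hlim2 : Filter.Tendsto (fun n : ℕ => Real.exp (r * t) * (r * t / ((n : ℝ) + 1)) * Z t ω)
        atTop (nhds 0) := by
      have h2 : (fun n : ℕ => Real.exp (r * t) * (r * t / ((n : ℝ) + 1)) * Z t ω)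
          = fun n : ℕ => Real.exp (r * t) * (r * t) * Z t ω * (1 / ((n : ℝ) + 1)) := by
        funext n; ring
      rw [h2]
      simpa using tendsto_one_div_add_atTop_nhds_zero_nat.const_mul
        (Real.exp (r * t) * (r * t) * Z t ω)
    have h3 : Filter.Tendsto (fun n => (∑ k ∈ Finset.range (n + 1),
        Real.exp (r * τ n (k + 1)) * (Z (τ n (k + 1)) ω - Z (τ n k) ω)) - B ω) atTop (nhds 0) :=
      squeeze_zero_norm (fun n => by rw [Real.norm_eq_abs]; exact hboundT n) hlim2
    have hT := h3.add_const (B ω)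
    simp only [sub_add_cancel, zero_add] at hT
    have h5 := hT.const_mul (Real.exp (-(r * t)))
    have hfun : (fun n => S' n ω) = fun n => Real.exp (-(r * t)) *
        ∑ k ∈ Finset.range (n + 1),
          Real.exp (r * τ n (k + 1)) * (Z (τ n (k + 1)) ω - Z (τ n k) ω) := funext hrefl
    rw [hfun, hA'def]
    exact h5
  -- equality in law of the Riemann sums
  have hlaw : ∀ n, Measure.map (S n) μ = Measure.map (S' n) μ := by
    intro n
    set ρ : Measure ℝ := Measure.map (Z (t / ((n : ℝ) + 1))) μ with hρ
    haveI : IsProbabilityMeasure ρ := Measure.isProbabilityMeasure_map (hZmeas _).aemeasurable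
    set Δvec : Ω → (Fin (n + 1) → ℝ) :=
      fun ω i => Z (τ n ((i : ℕ) + 1)) ω - Z (τ n (i : ℕ)) ω with hΔ
    have hΔmeas : Measurable Δvec :=
      measurable_pi_lambda _ fun i => (hZmeas _).sub (hZmeas _)
    have hXmeas : ∀ i : Fin (n + 1), Measurable fun ω => Δvec ω i :=
      fun i => (hZmeas _).sub (hZmeas _)
    have hrevmeas : Measurable fun ω (i : Fin (n + 1)) => Δvec ω (Fin.rev i) :=
      measurable_pi_lambda _ fun i => hXmeas (Fin.rev i)
    have hind : iIndepFun (m := fun _ => (inferInstance : MeasurableSpace ℝ))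
        (fun i : Fin (n + 1) => fun ω => Δvec ω i) μ := by
      have hmono : Monotone fun j : Fin (n + 2) => τ n (j : ℕ) :=
        fun i j hij => hτmono n (by exact_mod_cast hij)
      have h := hindep (n + 1) (fun j : Fin (n + 2) => τ n (j : ℕ)) hmono
        (fun i => hτnonneg n _)
      simp only [Fin.val_succ, Fin.coe_castSucc] at h
      exact h
    have hmap : Measure.map Δvec μ = Measure.pi fun _ => ρ := by
      have h1 : Measure.map (fun ω i => Δvec ω i) μ
          = Measure.pi fun i => Measure.map (fun ω => Δvec ω i) μ :=
        iIndepFun_map_pi μ _ hXmeas hind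
      have h2 : ∀ i : Fin (n + 1), Measure.map (fun ω => Δvec ω i) μ = ρ := by
        intro i
        have h3 := hstat (τ n (i : ℕ)) (τ n ((i : ℕ) + 1)) (hτnonneg n _)
          (hτmono n (Nat.le_succ _))
        have h4 : τ n ((i : ℕ) + 1) - τ n (i : ℕ) = t / ((n : ℝ) + 1) := by
          simp only [hτdef]; push_cast; ring
        rw [h4] at h3
        exact h3
      calc Measure.map Δvec μ = Measure.map (fun ω i => Δvec ω i) μ := rfl
        _ = Measure.pi fun i => Measure.map (fun ω => Δvec ω i) μ := h1
        _ = Measure.pi fun _ => ρ := by congr 1; funext i; exact h2 i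
    have hmaprev : Measure.map (fun ω (i : Fin (n + 1)) => Δvec ω (Fin.rev i)) μ
        = Measure.pi fun _ => ρ := by
      have h1 : (fun ω (i : Fin (n + 1)) => Δvec ω (Fin.rev i))
          = (fun (x : Fin (n + 1) → ℝ) i => x (Fin.rev i)) ∘ Δvec := rfl
      rw [h1, ← Measure.map_map (measurable_pi_lambda (fun (x : Fin (n + 1) → ℝ) i => x (Fin.rev i))
        (fun i => measurable_pi_apply (Fin.rev i))) hΔmeas, hmap, pi_map_rev]
    set G : (Fin (n + 1) → ℝ) → ℝ :=
      fun x => ∑ i : Fin (n + 1), Real.exp (-(r * τ n (i : ℕ))) * x i with hG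
    have hGmeas : Measurable G :=
      Finset.measurable_sum _ fun i _ => (measurable_pi_apply i).const_mul _
    have hSG : S n = G ∘ Δvec := by
      funext ω
      simp only [hSdef, hG, Function.comp_apply, hΔ]
      exact (Fin.sum_univ_eq_sum_range
        (fun k => Real.exp (-(r * τ n k)) * (Z (τ n (k + 1)) ω - Z (τ n k) ω)) (n + 1)).symm
    have hS'G : S' n = G ∘ fun ω (i : Fin (n + 1)) => Δvec ω (Fin.rev i) := by
      funext ω
      simp only [hS'def, hG, Function.comp_apply, hΔ]
      rw [← Fin.sum_univ_eq_sum_range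
        (fun k => Real.exp (-(r * τ n k)) * (Z (τ n (n + 1 - k)) ω - Z (τ n (n - k)) ω)) (n + 1)]
      refine Finset.sum_congr rfl fun i _ => ?_
      have hi : (i : ℕ) ≤ n := Fin.is_le i
      have h1 : ((Fin.rev i : Fin (n + 1)) : ℕ) = n - (i : ℕ) := by
        simp [Fin.val_rev]
      rw [h1]
      have h2 : n - (i : ℕ) + 1 = n + 1 - (i : ℕ) := by omega
      rw [h2]
    rw [hSG, hS'G, ← Measure.map_map hGmeas hΔmeas, ← Measure.map_map hGmeas hrevmeas,
      hmap, hmaprev]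
  have hAmeas : AEMeasurable A μ :=
    aemeasurable_of_tendsto_metrizable_ae atTop (fun n => (hSmeas n).aemeasurable) hStendsto
  have hA'meas : AEMeasurable A' μ :=
    aemeasurable_of_tendsto_metrizable_ae atTop (fun n => (hS'meas n).aemeasurable) hS'tendsto
  -- equality in law of the limits
  have hlawA : Measure.map A μ = Measure.map A' μ := by
    haveI h1 : IsProbabilityMeasure (Measure.map A μ) := Measure.isProbabilityMeasure_map hAmeas
    haveI h2 : IsProbabilityMeasure (Measure.map A' μ) := Measure.isProbabilityMeasure_map hA'meas
    apply ext_of_forall_lintegral_eq_of_IsFiniteMeasure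
    intro F
    have hFm : Measurable fun x : ℝ => (F x : ℝ≥0∞) :=
      F.continuous.measurable.coe_nnreal_ennreal
    rw [lintegral_map' hFm.aemeasurable hAmeas, lintegral_map' hFm.aemeasurable hA'meas]
    have key : ∀ (X : ℕ → Ω → ℝ) (L : Ω → ℝ), (∀ n, Measurable (X n)) →
        (∀ᵐ ω ∂μ, Filter.Tendsto (fun n => X n ω) atTop (nhds (L ω))) →
        Filter.Tendsto (fun n => ∫⁻ ω, (F (X n ω) : ℝ≥0∞) ∂μ) atTop
          (nhds (∫⁻ ω, (F (L ω) : ℝ≥0∞) ∂μ)) := by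
      intro X L hXm hXt
      refine tendsto_lintegral_of_dominated_convergence (fun _ => ENNReal.ofReal (dist F 0))
        (fun n => hFm.comp (hXm n)) (fun n => ae_of_all _ fun ω => ?_) ?_ ?_
      · have h := BoundedContinuousFunction.dist_coe_le_dist (f := F) (g := 0) (X n ω)
        have h2 : dist (F (X n ω)) ((0 : BoundedContinuousFunction ℝ NNReal) (X n ω)) = ((F (X n ω) : ℝ)) := by
          simp [NNReal.dist_eq]
        rw [h2] at h
        calc (F (X n ω) : ℝ≥0∞) = ENNReal.ofReal ((F (X n ω) : ℝ)) :=
            ENNReal.ofReal_coe_nnreal.symm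
          _ ≤ ENNReal.ofReal (dist F 0) := ENNReal.ofReal_le_ofReal h
      · rw [lintegral_const]
        exact ENNReal.mul_ne_top ENNReal.ofReal_ne_top (by simp)
      · filter_upwards [hXt] with ω hω
        exact (ENNReal.tendsto_coe.2 ((F.continuous.tendsto _).comp hω))
    have t1 := key S A hSmeas hStendsto
    have t2 := key S' A' hS'meas hS'tendsto
    have teq : (fun n => ∫⁻ ω, (F (S n ω) : ℝ≥0∞) ∂μ)
        = fun n => ∫⁻ ω, (F (S' n ω) : ℝ≥0∞) ∂μ := by
      funext n
      rw [← lintegral_map hFm (hSmeas n), ← lintegral_map hFm (hS'meas n), hlaw n]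
    rw [teq] at t1
    exact tendsto_nhds_unique t1 t2
  -- final computation
  set Abar : Ω → ℝ := hAmeas.mk A with hAbar
  set A'bar : Ω → ℝ := hA'meas.mk A' with hA'bar
  have hAbarmeas : Measurable Abar := hAmeas.measurable_mk
  have hA'barmeas : Measurable A'bar := hA'meas.measurable_mk
  have hmapbar : Measure.map Abar μ = Measure.map A'bar μ := by
    rw [← Measure.map_congr hAmeas.ae_eq_mk, ← Measure.map_congr hA'meas.ae_eq_mk, hlawA]
  have hL1 : ∀ x : ℝ, (∫⁻ ω, f (Real.exp (r * t) *
      (x - lsInt (fun s => Z s ω) (fun s => Real.exp (-(r * s))) t)) ∂μ)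
      = ∫⁻ ω, f (Real.exp (r * t) * (x - Abar ω)) ∂μ := by
    intro x
    refine lintegral_congr_ae (hAmeas.ae_eq_mk.mono fun ω h => ?_)
    beta_reduce
    have h2 : lsInt (fun s => Z s ω) (fun s => Real.exp (-(r * s))) t = Abar ω := h
    rw [h2]
  have hR1 : ∀ x : ℝ, (∫⁻ ω, g (Real.exp (-(r * t)) *
      (x + lsInt (fun s => Z s ω) (fun s => Real.exp (r * s)) t)) ∂μ)
      = ∫⁻ ω, g (Real.exp (-(r * t)) * x + A'bar ω) ∂μ := by
    intro x
    refine lintegral_congr_ae (hA'meas.ae_eq_mk.mono fun ω h => ?_)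
    beta_reduce
    have h2 : Real.exp (-(r * t)) * (x + lsInt (fun s => Z s ω) (fun s => Real.exp (r * s)) t)
        = Real.exp (-(r * t)) * x + A' ω := by
      simp only [hA'def, hBdef]; ring
    rw [h2, h]
  have hmeas1 : ∀ x : ℝ, Measurable fun ω => f (Real.exp (r * t) * (x - Abar ω)) :=
    fun x => hf.comp (((measurable_const.sub hAbarmeas).const_mul _))
  have hswap1 : ∫⁻ x : ℝ, ∫⁻ ω, f (Real.exp (r * t) * (x - Abar ω)) * g x ∂μ
      = ∫⁻ ω, ∫⁻ x : ℝ, f (Real.exp (r * t) * (x - Abar ω)) * g x ∂volume ∂μ := by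
    refine lintegral_lintegral_swap ?_
    refine Measurable.aemeasurable ?_
    exact ((hf.comp ((measurable_fst.sub (hAbarmeas.comp measurable_snd)).const_mul _)).mul
      (hg.comp measurable_fst))
  have hswap2 : ∫⁻ ω, ∫⁻ y : ℝ, f y * g (Real.exp (-(r * t)) * y + Abar ω) ∂volume ∂μ
      = ∫⁻ y : ℝ, ∫⁻ ω, f y * g (Real.exp (-(r * t)) * y + Abar ω) ∂μ ∂volume := by
    refine lintegral_lintegral_swap ?_
    refine Measurable.aemeasurable ?_
    exact ((hf.comp measurable_snd).mul
      (hg.comp (((measurable_snd.const_mul _).add (hAbarmeas.comp measurable_fst)))))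
  have hEinv : Real.exp (-(r * t)) = (Real.exp (r * t))⁻¹ := by
    rw [← Real.exp_neg]
  calc ∫⁻ x : ℝ, (∫⁻ ω, f (Real.exp (r * t) *
        (x - lsInt (fun s => Z s ω) (fun s => Real.exp (-(r * s))) t)) ∂μ) * g x
      = ∫⁻ x : ℝ, (∫⁻ ω, f (Real.exp (r * t) * (x - Abar ω)) ∂μ) * g x := by
        refine lintegral_congr fun x => ?_; rw [hL1 x]
    _ = ∫⁻ x : ℝ, ∫⁻ ω, f (Real.exp (r * t) * (x - Abar ω)) * g x ∂μ := by
        refine lintegral_congr fun x => ?_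
        exact (lintegral_mul_const _ (hmeas1 x)).symm
    _ = ∫⁻ ω, ∫⁻ x : ℝ, f (Real.exp (r * t) * (x - Abar ω)) * g x ∂volume ∂μ := hswap1
    _ = ∫⁻ ω, ENNReal.ofReal (Real.exp (-(r * t))) *
          ∫⁻ y : ℝ, f y * g (Real.exp (-(r * t)) * y + Abar ω) ∂volume ∂μ := by
        refine lintegral_congr fun ω => ?_
        rw [hEinv]
        exact change_var f g hf hg _ hE (Abar ω)
    _ = ENNReal.ofReal (Real.exp (-(r * t))) *
          ∫⁻ ω, ∫⁻ y : ℝ, f y * g (Real.exp (-(r * t)) * y + Abar ω) ∂volume ∂μ :=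
        lintegral_const_mul' _ _ ENNReal.ofReal_ne_top
    _ = ENNReal.ofReal (Real.exp (-(r * t))) *
          ∫⁻ y : ℝ, ∫⁻ ω, f y * g (Real.exp (-(r * t)) * y + Abar ω) ∂μ ∂volume := by
        rw [hswap2]
    _ = ENNReal.ofReal (Real.exp (-(r * t))) *
          ∫⁻ y : ℝ, f y * ∫⁻ ω, g (Real.exp (-(r * t)) * y + Abar ω) ∂μ ∂volume := by
        congr 1
        refine lintegral_congr fun y => ?_
        exact lintegral_const_mul _ (hg.comp (hAbarmeas.const_add _))
    _ = ENNReal.ofReal (Real.exp (-(r * t))) *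
          ∫⁻ y : ℝ, f y * ∫⁻ ω, g (Real.exp (-(r * t)) * y + A'bar ω) ∂μ ∂volume := by
        congr 1
        refine lintegral_congr fun y => ?_
        congr 1
        calc ∫⁻ ω, g (Real.exp (-(r * t)) * y + Abar ω) ∂μ
            = ∫⁻ z, g (Real.exp (-(r * t)) * y + z) ∂(Measure.map Abar μ) :=
              (lintegral_map (hg.comp (measurable_id.const_add _)) hAbarmeas).symm
          _ = ∫⁻ z, g (Real.exp (-(r * t)) * y + z) ∂(Measure.map A'bar μ) := by rw [hmapbar]
          _ = ∫⁻ ω, g (Real.exp (-(r * t)) * y + A'bar ω) ∂μ :=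
              lintegral_map (hg.comp (measurable_id.const_add _)) hA'barmeas
    _ = ENNReal.ofReal (Real.exp (-(r * t))) *
          ∫⁻ x : ℝ, f x * ∫⁻ ω, g (Real.exp (-(r * t)) *
            (x + lsInt (fun s => Z s ω) (fun s => Real.exp (r * s)) t)) ∂μ := by
        congr 1
        refine lintegral_congr fun x => ?_
        rw [hR1 x]
end

section
/- (No confinement.) Assume ν((0,∞)) > 0. For every a ≥ 0 and every x ∈ ℝ, the OU-type risk process started at x satisfies P( X_t ∈ [−a, a] for all t ≥ 0 ) = 0. -/
open MeasureTheory ProbabilityTheory Filter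
open scoped ENNReal

set_option linter.unusedSectionVars false
set_option maxHeartbeats 1000000
section Aux
lemma path_incr_bound (r x a : ℝ) (hr : 0 < r) (g : ℝ → ℝ)
    (hg : Monotone g ∧ ∀ x, ContinuousWithinAt g (Set.Ici x) x)
    (hconf : ∀ t ≥ (0:ℝ), OU r x g t ∈ Set.Icc (-a) a) (u : ℝ) (hu : 0 ≤ u) :
    g (u + 1) - g u ≤ a * (Real.exp r + 1) := by
  set F : StieltjesFunction ℝ := ⟨g, hg.1, hg.2⟩ with hF
  have hst : stMeasure g = F.measure := by
    rw [stMeasure, dif_pos hg]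
  set f : ℝ → ℝ := fun s => Real.exp (-(r * s)) with hf
  -- integrability of f on bounded Ioc intervals
  have hfin : ∀ p q : ℝ, F.measure (Set.Ioc p q) ≠ ⊤ := by
    intro p q; rw [F.measure_Ioc]; exact ENNReal.ofReal_ne_top
  have hint : ∀ p q : ℝ, IntegrableOn f (Set.Ioc p q) F.measure := by
    intro p q
    have hc : IntegrableOn (fun _ : ℝ => Real.exp (-(r * p))) (Set.Ioc p q) F.measure := by
      refine integrableOn_const ?_
      exact (hfin p q)
    refine hc.mono' ?_ ?_
    · exact (Real.continuous_exp.comp (by continuity)).aestronglyMeasurable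
    · refine (ae_restrict_iff' measurableSet_Ioc).2 (ae_of_all _ fun s hs => ?_)
      rw [Real.norm_eq_abs, abs_of_pos (Real.exp_pos _)]
      exact Real.exp_le_exp.2 (by nlinarith [hs.1.le])
  have hmono01 : g u ≤ g (u + 1) := hg.1 (by linarith)
  -- the increment of the integral
  have hIadd : lsInt g f (u + 1) = lsInt g f u + ∫ s in Set.Ioc u (u+1), f s ∂F.measure := by
    rw [lsInt, lsInt, hst, ← setIntegral_union (Set.Ioc_disjoint_Ioc_of_le le_rfl) measurableSet_Ioc
      (hint 0 u) (hint u (u+1)), Set.Ioc_union_Ioc_eq_Ioc hu (by linarith)]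
  have hlow : Real.exp (-(r * (u+1))) * (g (u+1) - g u)
      ≤ ∫ s in Set.Ioc u (u+1), f s ∂F.measure := by
    have h1 : ∫ s in Set.Ioc u (u+1), (fun _ : ℝ => Real.exp (-(r*(u+1)))) s ∂F.measure
        ≤ ∫ s in Set.Ioc u (u+1), f s ∂F.measure := by
      refine setIntegral_mono_on (integrableOn_const (hfin u (u+1)))
        (hint u (u+1)) measurableSet_Ioc fun s hs => ?_
      exact Real.exp_le_exp.2 (by nlinarith [hs.2])
    rw [setIntegral_const, measureReal_def, F.measure_Ioc] at h1
    have hco : F (u+1) - F u = g (u+1) - g u := rfl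
    rw [hco, ENNReal.toReal_ofReal (by linarith)] at h1
    calc Real.exp (-(r * (u+1))) * (g (u+1) - g u)
        = (g (u+1) - g u) • Real.exp (-(r*(u+1))) := by rw [smul_eq_mul]; ring
      _ ≤ _ := h1
  -- confinement at times u and u+1
  have hu0 := hconf u hu
  have hu1 := hconf (u+1) (by linarith)
  rw [OU, Set.mem_Icc] at hu0 hu1
  set E := Real.exp (r * u) with hE
  set E' := Real.exp (r * (u+1)) with hE'
  have hEpos : 0 < E := Real.exp_pos _
  have hE'pos : 0 < E' := Real.exp_pos _
  have hEE : E' = E * Real.exp r := by rw [hE', hE, ← Real.exp_add]; ring_nf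
  have h4 : x - lsInt g f u ≤ a / E := by
    rw [le_div_iff₀ hEpos]; nlinarith [hu0.2]
  have h5 : -(a / E') ≤ x - lsInt g f (u+1) := by
    rw [neg_le, le_div_iff₀ hE'pos]; nlinarith [hu1.1]
  have h6 : (∫ s in Set.Ioc u (u+1), f s ∂F.measure) ≤ a / E + a / E' := by
    have : lsInt g f (u+1) - lsInt g f u ≤ a / E + a / E' := by linarith
    linarith [hIadd ▸ this]
  have hexpinv : Real.exp (-(r * (u+1))) = E'⁻¹ := by rw [Real.exp_neg]
  have h7 : (g (u+1) - g u) / E' ≤ a / E + a / E' := by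
    rw [div_eq_inv_mul]
    calc E'⁻¹ * (g (u+1) - g u) = Real.exp (-(r * (u+1))) * (g (u+1) - g u) := by
          rw [hexpinv]
      _ ≤ _ := le_trans hlow h6
  have h8 : g (u+1) - g u ≤ (a / E + a / E') * E' := by
    rw [← div_le_iff₀ hE'pos]; exact h7
  have h9 : (a / E + a / E') * E' = a * Real.exp r + a := by
    field_simp [hEE]; rw [hEE]; ring
  linarith [h9 ▸ h8]


variable {Ω : Type} [MeasurableSpace Ω] {μ : Measure Ω} [IsProbabilityMeasure μ]

/-- If two random variables have the same law, a.e. upper bounds transfer. -/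
lemma ae_le_of_map_eq {X X' : Ω → ℝ} (hX : Measurable X) (hX' : Measurable X')
    (h : Measure.map X μ = Measure.map X' μ) (c : ℝ)
    (hb : ∀ᵐ ω ∂μ, X' ω ≤ c) : ∀ᵐ ω ∂μ, X ω ≤ c := by
  rw [ae_iff] at hb ⊢
  have h1 : {ω | ¬ X ω ≤ c} = X ⁻¹' (Set.Ioi c) := by ext ω; simp [not_le]
  have h2 : {ω | ¬ X' ω ≤ c} = X' ⁻¹' (Set.Ioi c) := by ext ω; simp [not_le]
  rw [h1, ← Measure.map_apply hX measurableSet_Ioi, h,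
    Measure.map_apply hX' measurableSet_Ioi, ← h2, hb]

/-- Independence of the two half-interval increments. -/
lemma indep_incr (Z : ℝ → Ω → ℝ)
    (hZ0 : ∀ ω, ∀ s ≤ (0 : ℝ), Z s ω = 0)
    (hindep : ∀ n : ℕ, ∀ t : Fin (n + 1) → ℝ, Monotone t → (∀ i, 0 ≤ t i) →
      iIndepFun
        (fun i : Fin n => fun ω => Z (t i.succ) ω - Z (t i.castSucc) ω) μ)
    {T : ℝ} (hT : 0 < T) :
    IndepFun (fun ω => Z (T/2) ω) (fun ω => Z T ω - Z (T/2) ω) μ := by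
  set t : Fin 3 → ℝ := fun i => (i : ℕ) * (T / 2) with ht
  have hmono : Monotone t := by
    intro i j hij
    have : (i : ℕ) ≤ (j : ℕ) := hij
    have := (Nat.cast_le (α := ℝ)).2 this
    simp only [ht]
    nlinarith
  have hnn : ∀ i, 0 ≤ t i := fun i => by positivity
  have hI := hindep 2 t hmono hnn
  have hIF := hI.indepFun (i := 0) (j := 1) (by decide)
  have e1 : t ((0 : Fin 2).succ) = T / 2 := by norm_num [ht]
  have e2 : t ((0 : Fin 2).castSucc) = 0 := by norm_num [ht]
  have e3 : t ((1 : Fin 2).succ) = T := by norm_num [ht]; ring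
  have e4 : t ((1 : Fin 2).castSucc) = T / 2 := by norm_num [ht]
  rw [e1, e2, e3, e4] at hIF
  have e5 : (fun ω => Z 0 ω) = fun _ => (0:ℝ) := funext fun ω => hZ0 ω 0 le_rfl
  convert hIF using 2 with ω
  rw [show Z 0 ω = 0 from hZ0 ω 0 le_rfl]; ring

/-- Halving lemma: an a.s. bound on `Z T` forces the halved bound on `Z (T/2)`. -/
lemma half_bound (Z : ℝ → Ω → ℝ) (hZmeas : ∀ t, Measurable (Z t))
    (hZ0 : ∀ ω, ∀ s ≤ (0 : ℝ), Z s ω = 0)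
    (hindep : ∀ n : ℕ, ∀ t : Fin (n + 1) → ℝ, Monotone t → (∀ i, 0 ≤ t i) →
      iIndepFun
        (fun i : Fin n => fun ω => Z (t i.succ) ω - Z (t i.castSucc) ω) μ)
    (hstat : ∀ s t : ℝ, 0 ≤ s → s ≤ t →
      Measure.map (fun ω => Z t ω - Z s ω) μ = Measure.map (Z (t - s)) μ)
    {T B : ℝ} (hT : 0 < T) (hbd : ∀ᵐ ω ∂μ, Z T ω ≤ B) :
    ∀ᵐ ω ∂μ, Z (T/2) ω ≤ B/2 := by
  by_contra hcon
  rw [ae_iff] at hcon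
  simp only [not_le] at hcon
  have hU : {ω | B/2 < Z (T/2) ω}
      = ⋃ m : ℕ, {ω | B/2 + 1/((m:ℝ)+1) < Z (T/2) ω} := by
    ext ω
    simp only [Set.mem_setOf_eq, Set.mem_iUnion]
    constructor
    · intro h
      obtain ⟨m, hm⟩ := exists_nat_one_div_lt (sub_pos.2 h)
      exact ⟨m, by linarith⟩
    · rintro ⟨m, hm⟩
      have : (0:ℝ) < 1/((m:ℝ)+1) := by positivity
      linarith
  rw [hU] at hcon
  have : ∃ m : ℕ, μ {ω | B/2 + 1/((m:ℝ)+1) < Z (T/2) ω} ≠ 0 := by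
    by_contra hall
    push_neg at hall
    exact hcon (measure_iUnion_null fun m => hall m)
  obtain ⟨m, hm⟩ := this
  set ε : ℝ := 1/((m:ℝ)+1) with hε
  have hεpos : 0 < ε := by positivity
  set c : ℝ := B/2 + ε with hc
  have hIF := indep_incr Z hZ0 hindep hT
  have hpre : (fun ω => Z (T/2) ω) ⁻¹' (Set.Ioi c) = {ω | c < Z (T/2) ω} := rfl
  have hmul := hIF.measure_inter_preimage_eq_mul (s := Set.Ioi c) (t := Set.Ioi c)
    measurableSet_Ioi measurableSet_Ioi
  -- the second factor has the same law as the first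
  have hmap := hstat (T/2) T (by linarith) (by linarith)
  rw [show T - T/2 = T/2 by ring] at hmap
  have hlaw : μ ((fun ω => Z T ω - Z (T/2) ω) ⁻¹' (Set.Ioi c))
      = μ ((fun ω => Z (T/2) ω) ⁻¹' (Set.Ioi c)) := by
    rw [← Measure.map_apply (f := fun ω => Z T ω - Z (T/2) ω) ((hZmeas T).sub (hZmeas (T/2))) measurableSet_Ioi, hmap,
      Measure.map_apply (hZmeas (T/2)) measurableSet_Ioi]
  have hsub : (fun ω => Z (T/2) ω) ⁻¹' (Set.Ioi c) ∩
      (fun ω => Z T ω - Z (T/2) ω) ⁻¹' (Set.Ioi c) ⊆ {ω | ¬ Z T ω ≤ B} := by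
    rintro ω ⟨h1, h2⟩
    simp only [Set.mem_preimage, Set.mem_Ioi] at h1 h2
    simp only [Set.mem_setOf_eq, not_le]
    have : Z T ω = (Z T ω - Z (T/2) ω) + Z (T/2) ω := by ring
    rw [this]; simp only [hc] at h1 h2; linarith
  have hzero : μ {ω | ¬ Z T ω ≤ B} = 0 := by rwa [ae_iff] at hbd
  have : μ ((fun ω => Z (T/2) ω) ⁻¹' (Set.Ioi c)) *
      μ ((fun ω => Z T ω - Z (T/2) ω) ⁻¹' (Set.Ioi c)) = 0 := by
    rw [← hmul]
    exact measure_mono_null hsub hzero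
  rw [hlaw, hpre] at this
  exact hm (by
    have := mul_eq_zero.1 this
    rcases this with h | h <;> exact h)

/-- Dyadic bound by induction. -/
lemma dyadic_bound (Z : ℝ → Ω → ℝ) (hZmeas : ∀ t, Measurable (Z t))
    (hZ0 : ∀ ω, ∀ s ≤ (0 : ℝ), Z s ω = 0)
    (hindep : ∀ n : ℕ, ∀ t : Fin (n + 1) → ℝ, Monotone t → (∀ i, 0 ≤ t i) →
      iIndepFun
        (fun i : Fin n => fun ω => Z (t i.succ) ω - Z (t i.castSucc) ω) μ)
    (hstat : ∀ s t : ℝ, 0 ≤ s → s ≤ t →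
      Measure.map (fun ω => Z t ω - Z s ω) μ = Measure.map (Z (t - s)) μ)
    {C : ℝ} (hbd : ∀ᵐ ω ∂μ, Z 1 ω ≤ C) (k : ℕ) :
    ∀ᵐ ω ∂μ, Z (1/2^k) ω ≤ C/2^k := by
  induction k with
  | zero => simpa using hbd
  | succ k ih =>
    have h := half_bound Z hZmeas hZ0 hindep hstat (T := 1/2^k) (B := C/2^k)
      (by positivity) ih
    have e1 : (1:ℝ)/2^k/2 = 1/2^(k+1) := by rw [pow_succ]; ring
    have e2 : C/2^k/2 = C/2^(k+1) := by rw [pow_succ]; ring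
    rwa [e1, e2] at h

/-- Integrability of `1 - exp(-(β y))` (and of `β * min 1 y`) on `(0,∞)`. -/
lemma integrable_one_sub_exp (ν : Measure ℝ)
    (hν : ∫⁻ y in Set.Ioi (0 : ℝ), ENNReal.ofReal (min 1 y) ∂ν < ⊤)
    {β : ℝ} (hβ : 0 ≤ β) :
    IntegrableOn (fun y => 1 - Real.exp (-(β * y))) (Set.Ioi (0:ℝ)) ν := by
  have hdom : IntegrableOn (fun y => (1+β) * min 1 y) (Set.Ioi (0:ℝ)) ν := by
    constructor
    · exact ((continuous_const.mul (continuous_const.min continuous_id)).aestronglyMeasurable)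
    · rw [hasFiniteIntegral_iff_ofReal]
      · have : ∀ᵐ y ∂(ν.restrict (Set.Ioi (0:ℝ))),
            ENNReal.ofReal ((1+β) * min 1 y) = ENNReal.ofReal (1+β) * ENNReal.ofReal (min 1 y) :=
          ae_of_all _ fun y => ENNReal.ofReal_mul (by linarith)
        rw [lintegral_congr_ae this, lintegral_const_mul' _ _ ENNReal.ofReal_ne_top]
        exact ENNReal.mul_lt_top ENNReal.ofReal_lt_top hν
      · exact (ae_restrict_iff' measurableSet_Ioi).2 (ae_of_all _ fun y hy => by
          have : (0:ℝ) < y := hy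
          have : 0 ≤ min 1 y := le_min (by norm_num) this.le
          positivity)
  refine hdom.mono' ?_ ?_
  · exact (Continuous.aestronglyMeasurable (by continuity))
  · refine (ae_restrict_iff' measurableSet_Ioi).2 (ae_of_all _ fun y hy => ?_)
    have hy0 : (0:ℝ) < y := hy
    have hexp : Real.exp (-(β * y)) ≤ 1 := Real.exp_le_one_iff.2 (by nlinarith)
    have h1 : 1 - Real.exp (-(β * y)) ≤ β * y := by
      have := Real.add_one_le_exp (-(β * y)); linarith
    have h2 : 0 ≤ 1 - Real.exp (-(β * y)) := by linarith
    rw [Real.norm_eq_abs, abs_of_nonneg h2]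
    rcases le_or_gt y 1 with h | h
    · have : min 1 y = y := min_eq_right h
      rw [this]; nlinarith
    · have : min 1 y = 1 := min_eq_left h.le
      rw [this]; nlinarith [Real.exp_pos (-(β * y))]

lemma integrable_min_one (ν : Measure ℝ)
    (hν : ∫⁻ y in Set.Ioi (0 : ℝ), ENNReal.ofReal (min 1 y) ∂ν < ⊤) :
    IntegrableOn (fun y => min 1 y) (Set.Ioi (0:ℝ)) ν := by
  constructor
  · exact (continuous_const.min continuous_id).aestronglyMeasurable
  · rw [hasFiniteIntegral_iff_ofReal]
    · exact hν
    · exact (ae_restrict_iff' measurableSet_Ioi).2 (ae_of_all _ fun y hy =>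
        le_min (by norm_num) (le_of_lt hy))

lemma nu_fin (ν : Measure ℝ)
    (hν : ∫⁻ y in Set.Ioi (0 : ℝ), ENNReal.ofReal (min 1 y) ∂ν < ⊤)
    {δ : ℝ} (hδ : 0 < δ) : ν (Set.Ioi δ) < ⊤ := by
  by_contra htop
  push_neg at htop
  have htop' : ν (Set.Ioi δ) = ⊤ := top_le_iff.1 htop
  have h1 : ENNReal.ofReal (min 1 δ) * ν (Set.Ioi δ)
      ≤ ∫⁻ y in Set.Ioi δ, ENNReal.ofReal (min 1 y) ∂ν := by
    rw [← setLIntegral_const]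
    refine setLIntegral_mono ((measurable_const.min measurable_id).ennreal_ofReal)
      fun y hy => ?_
    exact ENNReal.ofReal_le_ofReal (min_le_min le_rfl (le_of_lt hy))
  have h2 : (∫⁻ y in Set.Ioi δ, ENNReal.ofReal (min 1 y) ∂ν)
      ≤ ∫⁻ y in Set.Ioi (0:ℝ), ENNReal.ofReal (min 1 y) ∂ν :=
    lintegral_mono_set (Set.Ioi_subset_Ioi hδ.le)
  rw [htop', ENNReal.mul_top (by simp [ENNReal.ofReal_eq_zero, lt_min_iff, hδ, not_le.2])] at h1
  · exact absurd (le_trans h1 h2) (not_le.2 hν)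

lemma exists_delta_pos (ν : Measure ℝ) (hνpos : 0 < ν (Set.Ioi (0 : ℝ))) :
    ∃ δ : ℝ, 0 < δ ∧ 0 < ν (Set.Ioi δ) := by
  by_contra h
  push_neg at h
  have hall : ∀ m : ℕ, ν (Set.Ioi (1/((m:ℝ)+1))) = 0 := fun m =>
    le_antisymm (h _ (by positivity)) (by simp)
  have hU : Set.Ioi (0:ℝ) ⊆ ⋃ m : ℕ, Set.Ioi (1/((m:ℝ)+1)) := by
    intro y hy
    obtain ⟨m, hm⟩ := exists_nat_one_div_lt (show (0:ℝ) < y from hy)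
    exact Set.mem_iUnion.2 ⟨m, hm⟩
  have : ν (Set.Ioi (0:ℝ)) = 0 :=
    measure_mono_null hU (measure_iUnion_null hall)
  exact absurd this hνpos.ne'

/-- The final contradiction: a linear Laplace exponent is impossible. -/
lemma nu_contra (ν : Measure ℝ) (φ : ℝ → ℝ)
    (hν : ∫⁻ y in Set.Ioi (0 : ℝ), ENNReal.ofReal (min 1 y) ∂ν < ⊤)
    (hφ : ∀ β ≥ (0 : ℝ), φ β = ∫ y in Set.Ioi (0 : ℝ), (1 - Real.exp (-(β * y))) ∂ν)
    (hνpos : 0 < ν (Set.Ioi (0 : ℝ)))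
    (lam : ℝ) (hphilin : ∀ β ≥ (0:ℝ), φ β = β * lam) : False := by
  obtain ⟨δ, hδ, hνδ⟩ := exists_delta_pos ν hνpos
  have hνδfin := nu_fin ν hν hδ
  -- Step 1: lam > 0
  have hlam : 0 < lam := by
    have h1 : φ 1 = lam := by have := hphilin 1 (by norm_num); linarith
    have h2 : φ 1 = ∫ y in Set.Ioi (0:ℝ), (1 - Real.exp (-(1 * y))) ∂ν := hφ 1 (by norm_num)
    have hint := integrable_one_sub_exp ν hν (β := 1) (by norm_num)
    have hmono : (∫ y in Set.Ioi δ, (1 - Real.exp (-(1 * y))) ∂ν)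
        ≤ ∫ y in Set.Ioi (0:ℝ), (1 - Real.exp (-(1 * y))) ∂ν := by
      refine setIntegral_mono_set hint ?_ (HasSubset.Subset.eventuallyLE (Set.Ioi_subset_Ioi hδ.le))
      refine (ae_restrict_iff' measurableSet_Ioi).2 (ae_of_all _ fun y hy => ?_)
      have hy0 : (0:ℝ) < y := hy
      have := Real.exp_le_one_iff.2 (show -(1*y) ≤ 0 by nlinarith)
      simp only [Pi.zero_apply]
      linarith
    have hconst : (1 - Real.exp (-δ)) * (ν (Set.Ioi δ)).toReal
        ≤ ∫ y in Set.Ioi δ, (1 - Real.exp (-(1 * y))) ∂ν := by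
      have h3 : ∫ y in Set.Ioi δ, (fun _ : ℝ => 1 - Real.exp (-δ)) y ∂ν
          ≤ ∫ y in Set.Ioi δ, (1 - Real.exp (-(1 * y))) ∂ν := by
        refine setIntegral_mono_on (integrableOn_const hνδfin.ne)
          (hint.mono_set (Set.Ioi_subset_Ioi hδ.le)) measurableSet_Ioi fun y hy => ?_
        have hy' : δ < y := hy
        have := Real.exp_le_exp.2 (show -(1*y) ≤ -δ by nlinarith)
        linarith
      rw [setIntegral_const, smul_eq_mul, measureReal_def] at h3
      linarith [h3]
    have hpos1 : 0 < 1 - Real.exp (-δ) := by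
      have := Real.exp_lt_one_iff.2 (show -δ < 0 by linarith)
      linarith
    have hpos2 : 0 < (ν (Set.Ioi δ)).toReal :=
      ENNReal.toReal_pos hνδ.ne' hνδfin.ne
    nlinarith
  -- Step 2: choose δ' ≤ 1 with small mass of min 1 y near 0
  set ρ : Measure ℝ := ν.withDensity (fun y => ENNReal.ofReal (min 1 y)) with hρdef
  have hρap : ∀ s : Set ℝ, MeasurableSet s →
      ρ s = ∫⁻ y in s, ENNReal.ofReal (min 1 y) ∂ν := fun s hs =>
    withDensity_apply _ hs
  have hρfin : ρ (Set.Ioi (0:ℝ)) ≠ ⊤ := by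
    rw [hρap _ measurableSet_Ioi]; exact hν.ne
  set s : ℕ → Set ℝ := fun m => Set.Ioc (0:ℝ) (1/((m:ℝ)+1)) with hs
  have hanti : Antitone s := by
    intro i j hij
    refine Set.Ioc_subset_Ioc_right ?_
    have : (i:ℝ) + 1 ≤ (j:ℝ) + 1 := by exact_mod_cast Nat.succ_le_succ hij
    exact one_div_le_one_div_of_le (by positivity) this
  have hiInter : ⋂ m, s m = ∅ := by
    ext y
    simp only [Set.mem_iInter, Set.mem_empty_iff_false, iff_false, not_forall]
    by_cases hy : 0 < y
    · obtain ⟨m, hm⟩ := exists_nat_one_div_lt hy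
      exact ⟨m, fun hmem => absurd hmem.2 (not_le.2 hm)⟩
    · exact ⟨0, fun hmem => hy hmem.1⟩
  have hten : Filter.Tendsto (ρ ∘ s) atTop (nhds 0) := by
    have := tendsto_measure_iInter_atTop (μ := ρ) (s := s)
      (fun m => measurableSet_Ioc.nullMeasurableSet) hanti
      ⟨0, by
        refine ne_top_of_le_ne_top hρfin (measure_mono ?_)
        intro y hy; exact hy.1⟩
    rwa [hiInter, measure_empty] at this
  have hev : ∀ᶠ m in atTop, ρ (s m) < ENNReal.ofReal (lam/2) := by
    refine hten.eventually_lt_const ?_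
    simp [ENNReal.ofReal_pos]; linarith
  obtain ⟨m, hm⟩ := hev.exists
  set δ' : ℝ := 1/((m:ℝ)+1) with hδ'
  have hδ'pos : 0 < δ' := by positivity
  have hδ'le : δ' ≤ 1 := by
    rw [hδ', div_le_one (by positivity)]
    simp
  have hν'fin := nu_fin ν hν hδ'pos
  set M : ℝ := (ν (Set.Ioi δ')).toReal with hM
  have hMnn : 0 ≤ M := ENNReal.toReal_nonneg
  -- Step 3: the contradiction at β large
  set β : ℝ := max 1 (2*(M+1)/lam) with hβ
  have hβ1 : (1:ℝ) ≤ β := le_max_left _ _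
  have hβ0 : (0:ℝ) ≤ β := by linarith
  have hβ2 : 2*(M+1)/lam ≤ β := le_max_right _ _
  have hint := integrable_one_sub_exp ν hν hβ0
  have hintmin : IntegrableOn (fun y => β * min 1 y) (Set.Ioi (0:ℝ)) ν := by
    have := (integrable_min_one ν hν).const_mul β
    exact this
  have hsplit : (∫ y in Set.Ioi (0:ℝ), (1 - Real.exp (-(β * y))) ∂ν)
      = (∫ y in Set.Ioc (0:ℝ) δ', (1 - Real.exp (-(β * y))) ∂ν)
      + ∫ y in Set.Ioi δ', (1 - Real.exp (-(β * y))) ∂ν := by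
    rw [← setIntegral_union (Set.Ioc_disjoint_Ioi le_rfl) measurableSet_Ioi
      (hint.mono_set (by rw [← Set.Ioc_union_Ioi_eq_Ioi hδ'pos.le]; exact Set.subset_union_left))
      (hint.mono_set (Set.Ioi_subset_Ioi hδ'pos.le)),
      Set.Ioc_union_Ioi_eq_Ioi hδ'pos.le]
  have hb1 : (∫ y in Set.Ioc (0:ℝ) δ', (1 - Real.exp (-(β * y))) ∂ν) ≤ β * (lam/2) := by
    have h1 : (∫ y in Set.Ioc (0:ℝ) δ', (1 - Real.exp (-(β * y))) ∂ν)
        ≤ ∫ y in Set.Ioc (0:ℝ) δ', β * min 1 y ∂ν := by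
      refine setIntegral_mono_on
        (hint.mono_set (by rw [← Set.Ioc_union_Ioi_eq_Ioi hδ'pos.le]; exact Set.subset_union_left))
        (hintmin.mono_set (by rw [← Set.Ioc_union_Ioi_eq_Ioi hδ'pos.le]; exact Set.subset_union_left))
        measurableSet_Ioc fun y hy => ?_
      have hy1 : 0 < y := hy.1
      have hy2 : y ≤ δ' := hy.2
      have hmin : min 1 y = y := min_eq_right (le_trans hy2 hδ'le)
      rw [hmin]
      have := Real.add_one_le_exp (-(β * y))
      linarith
    have h2 : (∫ y in Set.Ioc (0:ℝ) δ', β * min 1 y ∂ν)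
        = β * ∫ y in Set.Ioc (0:ℝ) δ', min 1 y ∂ν := integral_const_mul β _
    have hnn : (0 : ℝ → ℝ) ≤ᵐ[ν.restrict (Set.Ioc (0:ℝ) δ')] fun y => min 1 y :=
      (ae_restrict_iff' measurableSet_Ioc).2 (ae_of_all _ fun y hy => by
        simp only [Pi.zero_apply]
        exact le_min (by norm_num) hy.1.le)
    have hms : AEStronglyMeasurable (fun y : ℝ => min 1 y) (ν.restrict (Set.Ioc (0:ℝ) δ')) :=
      (continuous_const.min continuous_id).aestronglyMeasurable.restrict
    have hsm : s m = Set.Ioc (0:ℝ) δ' := rfl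
    have h3 : (∫ y in Set.Ioc (0:ℝ) δ', min 1 y ∂ν) = (ρ (s m)).toReal := by
      rw [integral_eq_lintegral_of_nonneg_ae hnn hms, hsm, hρap _ measurableSet_Ioc]
    have h4 : (ρ (s m)).toReal ≤ lam/2 :=
      ENNReal.toReal_le_of_le_ofReal (by linarith) hm.le
    calc (∫ y in Set.Ioc (0:ℝ) δ', (1 - Real.exp (-(β * y))) ∂ν)
        ≤ β * ∫ y in Set.Ioc (0:ℝ) δ', min 1 y ∂ν := by rw [← h2]; exact h1
      _ = β * (ρ (s m)).toReal := by rw [h3]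
      _ ≤ β * (lam/2) := by nlinarith
  have hb2 : (∫ y in Set.Ioi δ', (1 - Real.exp (-(β * y))) ∂ν) ≤ M := by
    have h1 : ∫ y in Set.Ioi δ', (1 - Real.exp (-(β * y))) ∂ν
        ≤ ∫ y in Set.Ioi δ', (fun _ : ℝ => (1:ℝ)) y ∂ν := by
      refine setIntegral_mono_on (hint.mono_set (Set.Ioi_subset_Ioi hδ'pos.le))
        (integrableOn_const hν'fin.ne) measurableSet_Ioi fun y hy => ?_
      have := Real.exp_pos (-(β * y))
      linarith
    rw [setIntegral_const, smul_eq_mul, mul_one] at h1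
    exact h1
  have hfinal : β * lam ≤ β * (lam/2) + M := by
    have h5 : φ β = β * lam := hphilin β hβ0
    have h6 : φ β = ∫ y in Set.Ioi (0:ℝ), (1 - Real.exp (-(β * y))) ∂ν := hφ β hβ0
    rw [h6, hsplit] at h5
    linarith
  have : 2*(M+1) ≤ β * lam := by
    rw [div_le_iff₀ hlam] at hβ2; linarith
  linarith

lemma Z_unbounded {Ω : Type} [MeasurableSpace Ω] (μ : Measure Ω) [IsProbabilityMeasure μ]
    (Z : ℝ → Ω → ℝ) (ν : Measure ℝ) (φ : ℝ → ℝ)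
    (hZmeas : ∀ t, Measurable (Z t))
    (hZ0 : ∀ ω, ∀ s ≤ (0 : ℝ), Z s ω = 0)
    (hpath : ∀ᵐ ω ∂μ, Monotone (fun s => Z s ω) ∧
      ∀ x, ContinuousWithinAt (fun s => Z s ω) (Set.Ici x) x)
    (hν : ∫⁻ y in Set.Ioi (0 : ℝ), ENNReal.ofReal (min 1 y) ∂ν < ⊤)
    (hφ : ∀ β ≥ (0 : ℝ), φ β = ∫ y in Set.Ioi (0 : ℝ), (1 - Real.exp (-(β * y))) ∂ν)
    (hLaplace : ∀ β ≥ (0 : ℝ), ∀ t ≥ (0 : ℝ),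
      ∫ ω, Real.exp (-(β * Z t ω)) ∂μ = Real.exp (-(t * φ β)))
    (hindep : ∀ n : ℕ, ∀ t : Fin (n + 1) → ℝ, Monotone t → (∀ i, 0 ≤ t i) →
      iIndepFun
        (fun i : Fin n => fun ω => Z (t i.succ) ω - Z (t i.castSucc) ω) μ)
    (hstat : ∀ s t : ℝ, 0 ≤ s → s ≤ t →
      Measure.map (fun ω => Z t ω - Z s ω) μ = Measure.map (Z (t - s)) μ)
    (hνpos : 0 < ν (Set.Ioi (0 : ℝ))) (C : ℝ) :
    ¬ ∀ᵐ ω ∂μ, Z 1 ω ≤ C := by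
  intro hbd
  have hmono : ∀ᵐ ω ∂μ, Monotone fun s => Z s ω := hpath.mono fun ω h => h.1
  set W : ℕ → Ω → ℝ := fun k ω => Z (1/2^k) ω with hW
  set Y : ℕ → Ω → ℝ := fun k ω => Z (1/2^k) ω - Z (1/2^(k+1)) ω with hY
  have hWmeas : ∀ k, Measurable (W k) := fun k => hZmeas _
  have hYmeas : ∀ k, Measurable (Y k) := fun k => (hZmeas _).sub (hZmeas _)
  have hWbd : ∀ k, ∀ᵐ ω ∂μ, W k ω ≤ C/2^k := fun k =>
    dyadic_bound Z hZmeas hZ0 hindep hstat hbd k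
  have hWnn : ∀ k, ∀ᵐ ω ∂μ, 0 ≤ W k ω := by
    intro k
    refine hmono.mono fun ω h => ?_
    have h0 : Z 0 ω = 0 := hZ0 ω 0 le_rfl
    have := h (show (0:ℝ) ≤ 1/2^k by positivity)
    simpa [hW, h0] using this
  have hWIcc : ∀ k, ∀ᵐ ω ∂μ, W k ω ∈ Set.Icc 0 (C/2^k) := fun k =>
    ((hWnn k).and (hWbd k)).mono fun ω h => ⟨h.1, h.2⟩
  have hWmem : ∀ k, MemLp (W k) 2 μ := fun k =>
    memLp_of_bounded (hWIcc k) (hWmeas k).aestronglyMeasurable 2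
  have hhalf : ∀ k : ℕ, (1:ℝ)/2^k - 1/2^(k+1) = 1/2^(k+1) := fun k => by
    rw [pow_succ]; ring
  have hle2 : ∀ k : ℕ, (1:ℝ)/2^(k+1) ≤ 1/2^k := fun k => by
    rw [pow_succ]
    rw [div_le_div_iff₀ (by positivity) (by positivity)]
    nlinarith [pow_pos (show (0:ℝ) < 2 by norm_num) k]
  have hmapY : ∀ k, Measure.map (Y k) μ = Measure.map (W (k+1)) μ := by
    intro k
    have := hstat (1/2^(k+1)) (1/2^k) (by positivity) (hle2 k)
    rwa [hhalf k] at this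
  have hYnn : ∀ k, ∀ᵐ ω ∂μ, 0 ≤ Y k ω := fun k =>
    hmono.mono fun ω h => sub_nonneg.2 (h (hle2 k))
  have hYbd : ∀ k, ∀ᵐ ω ∂μ, Y k ω ≤ C/2^(k+1) := fun k =>
    ae_le_of_map_eq (hYmeas k) (hWmeas (k+1)) (hmapY k) _ (hWbd (k+1))
  have hYmem : ∀ k, MemLp (Y k) 2 μ := fun k =>
    memLp_of_bounded (((hYnn k).and (hYbd k)).mono fun ω h => ⟨h.1, h.2⟩)
      (hYmeas k).aestronglyMeasurable 2
  have hindepk : ∀ k, IndepFun (W (k+1)) (Y k) μ := by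
    intro k
    have h := indep_incr Z hZ0 hindep (T := (1:ℝ)/2^k) (by positivity)
    have e : (1:ℝ)/2^k/2 = 1/2^(k+1) := by rw [pow_succ]; ring
    rw [e] at h
    exact h
  have hsum : ∀ k, W k = W (k+1) + Y k := by
    intro k; funext ω
    simp only [hW, hY, Pi.add_apply]; ring
  have hInt : ∀ k, Integrable (W k) μ := fun k => (hWmem k).integrable (by norm_num)
  have hIntY : ∀ k, Integrable (Y k) μ := fun k => (hYmem k).integrable (by norm_num)
  set lam : ℝ := ∫ ω, W 0 ω ∂μ with hlam
  have hEY : ∀ k, ∫ ω, Y k ω ∂μ = ∫ ω, W (k+1) ω ∂μ := by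
    intro k
    rw [← integral_map (φ := Y k) (f := fun y : ℝ => y) (hYmeas k).aemeasurable
        aestronglyMeasurable_id,
      hmapY k, integral_map (φ := W (k+1)) (f := fun y : ℝ => y) (hWmeas (k+1)).aemeasurable
        aestronglyMeasurable_id]
  have hEY2 : ∀ k, ∫ ω, (Y k ω)^2 ∂μ = ∫ ω, (W (k+1) ω)^2 ∂μ := by
    intro k
    rw [← integral_map (hYmeas k).aemeasurable
        (f := fun y : ℝ => y^2) (continuous_pow 2).aestronglyMeasurable,
      hmapY k, integral_map (hWmeas (k+1)).aemeasurable
        (continuous_pow 2).aestronglyMeasurable]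
  have hEhalf : ∀ k, ∫ ω, W k ω ∂μ = 2 * ∫ ω, W (k+1) ω ∂μ := by
    intro k
    rw [hsum k, integral_add' (hInt (k+1)) (hIntY k), hEY k]; ring
  have hEk : ∀ k, ∫ ω, W k ω ∂μ = lam / 2^k := by
    intro k
    induction k with
    | zero => simp [hlam]
    | succ k ih =>
      have := hEhalf k
      rw [ih] at this
      rw [show lam / 2^(k+1) = lam/2^k/2 by rw [pow_succ]; ring]
      linarith
  have hVarY : ∀ k, variance (Y k) μ = variance (W (k+1)) μ := by
    intro k
    rw [variance_eq_sub (hYmem k), variance_eq_sub (hWmem (k+1))]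
    simp only [Pi.pow_apply]
    rw [hEY k, hEY2 k]
  have hVark : ∀ k, variance (W 0) μ = 2^k * variance (W k) μ := by
    intro k
    induction k with
    | zero => simp
    | succ k ih =>
      have h1 : variance (W k) μ = 2 * variance (W (k+1)) μ := by
        rw [hsum k, IndepFun.variance_add (hWmem (k+1)) (hYmem k) (hindepk k), hVarY k]
        ring
      rw [ih, h1, pow_succ]; ring
  have hVarle : ∀ k, variance (W k) μ ≤ (C/2^k) * (lam/2^k) := by
    intro k
    have h1 : variance (W k) μ ≤ ∫ ω, (W k ω)^2 ∂μ := by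
      rw [variance_eq_sub (hWmem k)]
      simp only [Pi.pow_apply]
      nlinarith [sq_nonneg (∫ ω, W k ω ∂μ)]
    have h2 : ∫ ω, (W k ω)^2 ∂μ ≤ ∫ ω, (C/2^k) * W k ω ∂μ := by
      refine integral_mono_ae (hWmem k).integrable_sq ((hInt k).const_mul _) ?_
      refine (hWIcc k).mono fun ω h => ?_
      have h1 := h.1; have h2 := h.2
      nlinarith
    have h3 : ∫ ω, (C/2^k) * W k ω ∂μ = (C/2^k) * (lam/2^k) := by
      rw [integral_const_mul, hEk k]
    linarith
  have hlamnn : 0 ≤ lam := integral_nonneg_of_ae (hWnn 0)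
  have hC0 : 0 ≤ C := by
    haveI : (MeasureTheory.ae μ).NeBot := ae_neBot.2 (IsProbabilityMeasure.ne_zero μ)
    obtain ⟨ω, h1, h2⟩ := ((hWnn 0).and (hWbd 0)).exists
    have : (2:ℝ)^(0:ℕ) = 1 := by norm_num
    rw [this] at h2
    linarith [h2]
  have hvar0 : variance (W 0) μ = 0 := by
    refine le_antisymm ?_ (variance_nonneg _ _)
    by_contra hcon
    push_neg at hcon
    obtain ⟨k, hk⟩ := pow_unbounded_of_one_lt (C*lam/variance (W 0) μ) (one_lt_two (α := ℝ))
    have h2k : (0:ℝ) < 2^k := by positivity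
    have hle : variance (W 0) μ ≤ C*lam/2^k := by
      have := hVarle k
      rw [hVark k]
      calc (2:ℝ)^k * variance (W k) μ ≤ 2^k * ((C/2^k) * (lam/2^k)) := by nlinarith
        _ = C*lam/2^k := by field_simp
    have h3 : C*lam < variance (W 0) μ * 2^k := by
      rw [div_lt_iff₀ hcon] at hk; linarith
    have h4 : variance (W 0) μ * 2^k ≤ C*lam := (le_div_iff₀ h2k).1 hle
    linarith
  have hconstae : ∀ᵐ ω ∂μ, Z 1 ω = lam := by
    have hW2 : ∫ ω, (W 0 ω)^2 ∂μ = lam^2 := by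
      have := variance_eq_sub (hWmem 0)
      rw [hvar0] at this
      simp only [Pi.pow_apply] at this
      rw [hEk 0] at this
      have h20 : (2:ℝ)^(0:ℕ) = 1 := by norm_num
      rw [h20, div_one] at this
      linarith
    have hsq : Integrable (fun ω => (W 0 ω - lam)^2) μ :=
      ((hWmem 0).sub (memLp_const lam)).integrable_sq
    have hI2 : ∫ ω, (W 0 ω - lam)^2 ∂μ = 0 := by
      have he : (fun ω => (W 0 ω - lam)^2)
          = fun ω => ((W 0 ω)^2 - (2*lam) * W 0 ω) + lam^2 :=
        funext fun ω => by ring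
      have hint1 : Integrable (fun ω => W 0 ω ^ 2 - 2*lam * W 0 ω) μ :=
        ((hWmem 0).integrable_sq).sub ((hInt 0).const_mul (2*lam))
      have hint2 : Integrable (fun ω => W 0 ω ^ 2) μ := (hWmem 0).integrable_sq
      have hint3 : Integrable (fun ω => 2*lam * W 0 ω) μ := (hInt 0).const_mul (2*lam)
      rw [he, integral_add hint1 (integrable_const _), integral_sub hint2 hint3,
        integral_const_mul, integral_const]
      have hE0 : ∫ ω, W 0 ω ∂μ = lam := by rw [hEk 0]; norm_num
      simp only [measure_univ, ENNReal.toReal_one, one_smul, probReal_univ]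
      rw [hW2, hE0]; ring
    have hzero := (integral_eq_zero_iff_of_nonneg_ae
      (ae_of_all _ fun ω => sq_nonneg (W 0 ω - lam)) hsq).1 hI2
    have hW01 : ∀ ω, W 0 ω = Z 1 ω := fun ω => by norm_num [hW]
    refine hzero.mono fun ω h => ?_
    have h' : (W 0 ω - lam)^2 = 0 := h
    have := pow_eq_zero_iff (n := 2) (by norm_num) |>.1 h'
    rw [← hW01 ω]
    linarith [sub_eq_zero.1 this]
  have hphilin : ∀ β ≥ (0:ℝ), φ β = β * lam := by
    intro β hβ
    have hL := hLaplace β hβ 1 (by norm_num)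
    have hconst : ∫ ω, Real.exp (-(β * Z 1 ω)) ∂μ = Real.exp (-(β * lam)) := by
      rw [integral_congr_ae (hconstae.mono fun ω h => by rw [h]), integral_const]
      simp [measure_univ]
    rw [hconst] at hL
    have := Real.exp_eq_exp.1 hL
    linarith
  exact nu_contra ν φ hν hφ hνpos lam hphilin

end Aux

/-- no confinement. If `ν((0,∞)) > 0`, then for every `a ≥ 0` and
`x ∈ ℝ`, `P(X_t ∈ [-a,a] for all t ≥ 0) = 0`. -/
theorem stmt_10
    {Ω : Type} [MeasurableSpace Ω] (μ : Measure Ω) [IsProbabilityMeasure μ]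
    (Z : ℝ → Ω → ℝ) (ν : Measure ℝ) (φ : ℝ → ℝ) (r : ℝ) (hr : 0 < r)
    (hZmeas : ∀ t, Measurable (Z t))
    (hZ0 : ∀ ω, ∀ s ≤ (0 : ℝ), Z s ω = 0)
    (hpath : ∀ᵐ ω ∂μ, Monotone (fun s => Z s ω) ∧
      ∀ x, ContinuousWithinAt (fun s => Z s ω) (Set.Ici x) x)
    (hν : ∫⁻ y in Set.Ioi (0 : ℝ), ENNReal.ofReal (min 1 y) ∂ν < ⊤)
    (hφ : ∀ β ≥ (0 : ℝ), φ β = ∫ y in Set.Ioi (0 : ℝ), (1 - Real.exp (-(β * y))) ∂ν)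
    (hLaplace : ∀ β ≥ (0 : ℝ), ∀ t ≥ (0 : ℝ),
      ∫ ω, Real.exp (-(β * Z t ω)) ∂μ = Real.exp (-(t * φ β)))
    (hindep : ∀ n : ℕ, ∀ t : Fin (n + 1) → ℝ, Monotone t → (∀ i, 0 ≤ t i) →
      iIndepFun
        (fun i : Fin n => fun ω => Z (t i.succ) ω - Z (t i.castSucc) ω) μ)
    (hstat : ∀ s t : ℝ, 0 ≤ s → s ≤ t →
      Measure.map (fun ω => Z t ω - Z s ω) μ = Measure.map (Z (t - s)) μ)
    (hνpos : 0 < ν (Set.Ioi (0 : ℝ)))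
    (a x : ℝ) (ha : 0 ≤ a) :
    μ {ω | ∀ t ≥ (0 : ℝ), OU r x (fun s => Z s ω) t ∈ Set.Icc (-a) a} = 0 := by
  set C : ℝ := a * (Real.exp r + 1) with hC
  have hnb := Z_unbounded μ Z ν φ hZmeas hZ0 hpath hν hφ hLaplace hindep hstat hνpos C
  set p : ℝ≥0∞ := μ (Z 1 ⁻¹' Set.Iic C) with hp
  have hmeasZ1 : MeasurableSet (Z 1 ⁻¹' Set.Iic C) := (hZmeas 1) measurableSet_Iic
  have hplt : p < 1 := by
    rcases lt_or_ge p 1 with h | h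
    · exact h
    · exfalso
      have hp1 : p = 1 := le_antisymm prob_le_one h
      refine hnb ?_
      rw [ae_iff]
      have hcompl : {ω | ¬ Z 1 ω ≤ C} = (Z 1 ⁻¹' Set.Iic C)ᶜ := by
        ext ω; simp [not_le]
      rw [hcompl, prob_compl_eq_zero_iff hmeasZ1]
      exact hp ▸ hp1
  set G : Set Ω := {ω | Monotone (fun s => Z s ω) ∧
      ∀ x, ContinuousWithinAt (fun s => Z s ω) (Set.Ici x) x} with hG
  have hGc : μ Gᶜ = 0 := by
    rw [hG, Set.compl_setOf]
    exact ae_iff.1 hpath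
  set A : Set Ω := {ω | ∀ t ≥ (0 : ℝ), OU r x (fun s => Z s ω) t ∈ Set.Icc (-a) a} with hA
  have key : ∀ N : ℕ, μ A ≤ p ^ N := by
    intro N
    set t : Fin (N+1) → ℝ := fun i => ((i : ℕ) : ℝ) with ht
    have hmono : Monotone t := fun i j hij => by
      simp only [ht]
      exact_mod_cast (show (i:ℕ) ≤ (j:ℕ) from hij)
    have hnn : ∀ i, 0 ≤ t i := fun i => by positivity
    have he1 : ∀ i : Fin N, t i.succ = ((i:ℕ):ℝ) + 1 := by
      intro i; simp only [ht, Fin.val_succ]; push_cast; ring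
    have he2 : ∀ i : Fin N, t i.castSucc = ((i:ℕ):ℝ) := by
      intro i; simp only [ht, Fin.coe_castSucc]
    have hprod := (hindep N t hmono hnn).measure_inter_preimage_eq_mul Finset.univ
      (sets := fun _ => Set.Iic C) (fun i _ => measurableSet_Iic)
    have hfac : ∀ i : Fin N,
        μ ((fun ω => Z (t i.succ) ω - Z (t i.castSucc) ω) ⁻¹' Set.Iic C) = p := by
      intro i
      have hmap := hstat ((i:ℕ):ℝ) (((i:ℕ):ℝ)+1) (by positivity) (by linarith)
      rw [show ((i:ℕ):ℝ)+1 - ((i:ℕ):ℝ) = 1 by ring] at hmap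
      rw [he1 i, he2 i, ← Measure.map_apply (f := fun ω => Z (((i:ℕ):ℝ)+1) ω - Z ((i:ℕ):ℝ) ω) ((hZmeas _).sub (hZmeas _)) measurableSet_Iic,
        hmap, Measure.map_apply (hZmeas 1) measurableSet_Iic]
    have hsub : A ∩ G ⊆ ⋂ i ∈ (Finset.univ : Finset (Fin N)),
        (fun ω => Z (t i.succ) ω - Z (t i.castSucc) ω) ⁻¹' Set.Iic C := by
      rintro ω ⟨hAω, hGω⟩
      refine Set.mem_iInter₂.2 fun i _ => ?_
      have hb := path_incr_bound r x a hr (fun s => Z s ω) hGω hAω ((i:ℕ):ℝ)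
        (by positivity)
      simp only [Set.mem_preimage, Set.mem_Iic, he1 i, he2 i]
      exact hb
    calc μ A ≤ μ ((A ∩ G) ∪ Gᶜ) := measure_mono (by
          intro ω hω
          by_cases h : ω ∈ G
          · exact Or.inl ⟨hω, h⟩
          · exact Or.inr h)
      _ ≤ μ (A ∩ G) + μ Gᶜ := measure_union_le _ _
      _ = μ (A ∩ G) := by rw [hGc, add_zero]
      _ ≤ μ (⋂ i ∈ (Finset.univ : Finset (Fin N)),
            (fun ω => Z (t i.succ) ω - Z (t i.castSucc) ω) ⁻¹' Set.Iic C) :=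
          measure_mono hsub
      _ = ∏ i ∈ (Finset.univ : Finset (Fin N)),
            μ ((fun ω => Z (t i.succ) ω - Z (t i.castSucc) ω) ⁻¹' Set.Iic C) := hprod
      _ = p ^ N := by
          rw [Finset.prod_congr rfl (fun i _ => hfac i), Finset.prod_const,
            Finset.card_univ, Fintype.card_fin]
  have hten : Filter.Tendsto (fun N : ℕ => p ^ N) atTop (nhds 0) :=
    ENNReal.tendsto_pow_atTop_nhds_zero_of_lt_one hplt
  have hle0 : μ A ≤ 0 := ge_of_tendsto' hten key
  exact le_antisymm hle0 (by simp)
end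

section
/- (Log-moment dichotomy.) For every β > 0, the integral ∫_0^β φ(u)/u du is finite if and only if ∫_1^∞ log(y) ν(dy) < ∞. -/
open MeasureTheory ProbabilityTheory Filter
open scoped ENNReal

open MeasureTheory Set
open scoped ENNReal

namespace Stmt14

noncomputable def f (u y : ℝ) : ℝ := (1 - Real.exp (-(u * y))) / u

lemma f_nonneg {u y : ℝ} (hu : 0 ≤ u) (hy : 0 ≤ y) : 0 ≤ f u y := by
  apply div_nonneg _ hu
  have : Real.exp (-(u * y)) ≤ 1 := Real.exp_le_one_iff.mpr (by nlinarith)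
  linarith

lemma f_le_y {u y : ℝ} (hu : 0 < u) : f u y ≤ y := by
  rw [f, div_le_iff₀ hu]
  have h := Real.add_one_le_exp (-(u * y))
  nlinarith

lemma f_le_inv {u y : ℝ} (hu : 0 < u) : f u y ≤ 1 / u := by
  rw [f]
  gcongr
  have := Real.exp_pos (-(u * y)); linarith

lemma f_ge {u y : ℝ} (hu : 0 < u) (h1 : 1 ≤ u * y) :
    (1 - Real.exp (-1)) / u ≤ f u y := by
  rw [f]
  have h : Real.exp (-(u * y)) ≤ Real.exp (-1) := Real.exp_le_exp.mpr (by linarith)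
  gcongr

lemma measurable_f (u : ℝ) : Measurable (f u) := by
  unfold f; fun_prop

lemma measurable_f2 : Measurable (Function.uncurry fun u y => ENNReal.ofReal (f u y)) := by
  unfold f Function.uncurry; fun_prop

end Stmt14

namespace Stmt14
open scoped ENNReal

lemma lintegral_inv_Ioc {a b : ℝ} (ha : 0 < a) (hab : a ≤ b) :
    ∫⁻ u in Ioc a b, ENNReal.ofReal (1 / u) = ENNReal.ofReal (Real.log b - Real.log a) := by
  have hb : 0 < b := ha.trans_le hab
  have hint : IntegrableOn (fun u : ℝ => 1 / u) (Ioc a b) volume := by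
    apply (ContinuousOn.integrableOn_Icc ?_).mono_set Ioc_subset_Icc_self
    apply ContinuousOn.div continuousOn_const continuousOn_id
    intro x hx
    exact ne_of_gt (ha.trans_le hx.1)
  rw [← ofReal_integral_eq_lintegral_ofReal hint ?_]
  · congr 1
    have := intervalIntegral.integral_of_le (f := fun u : ℝ => u⁻¹) (μ := volume) hab
    simp only [one_div]
    rw [← this, integral_inv]
    · rw [Real.log_div hb.ne' ha.ne']
    · rw [uIcc_of_le hab]
      intro h
      exact absurd h.1 (not_le.mpr ha)
  · filter_upwards [ae_restrict_mem measurableSet_Ioc] with u hu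
    exact div_nonneg zero_le_one (ha.trans hu.1).le

lemma g_le_mul {β y : ℝ} (hβ : 0 < β) (hy : 0 ≤ y) :
    ∫⁻ u in Ioc 0 β, ENNReal.ofReal (f u y) ≤ ENNReal.ofReal (β * y) := by
  calc ∫⁻ u in Ioc 0 β, ENNReal.ofReal (f u y)
      ≤ ∫⁻ _ in Ioc (0:ℝ) β, ENNReal.ofReal y := by
        apply lintegral_mono_ae
        rw [ae_restrict_iff' measurableSet_Ioc]
        exact ae_of_all _ fun u hu => ENNReal.ofReal_le_ofReal (f_le_y hu.1)
    _ = ENNReal.ofReal y * volume (Ioc (0:ℝ) β) := setLIntegral_const _ _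
    _ = ENNReal.ofReal (β * y) := by
        rw [Real.volume_Ioc, sub_zero, ← ENNReal.ofReal_mul hy, mul_comm]

lemma g_le_log {β y : ℝ} (hβ : 0 < β) (hy1 : 1 < y) (hyβ : β⁻¹ < y) :
    ∫⁻ u in Ioc 0 β, ENNReal.ofReal (f u y)
      ≤ ENNReal.ofReal (1 + (Real.log β + Real.log y)) := by
  have hy0 : 0 < y := by linarith
  have ha : 0 < y⁻¹ := by positivity
  have haβ : y⁻¹ < β := by
    rw [inv_eq_one_div, div_lt_iff₀ hy0]
    calc (1:ℝ) = β * β⁻¹ := (mul_inv_cancel₀ hβ.ne').symm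
      _ < β * y := by exact mul_lt_mul_of_pos_left hyβ hβ
  have hlog : 0 ≤ Real.log β + Real.log y := by
    have := Real.log_le_log ha haβ.le
    rw [Real.log_inv] at this
    linarith
  have hsplit : Ioc (0:ℝ) β = Ioc 0 y⁻¹ ∪ Ioc y⁻¹ β :=
    (Ioc_union_Ioc_eq_Ioc ha.le haβ.le).symm
  rw [hsplit, lintegral_union measurableSet_Ioc (Ioc_disjoint_Ioc_of_le le_rfl)]
  have h2 : ∫⁻ u in Ioc (0:ℝ) y⁻¹, ENNReal.ofReal (f u y) ≤ ENNReal.ofReal 1 := by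
    calc ∫⁻ u in Ioc (0:ℝ) y⁻¹, ENNReal.ofReal (f u y)
        ≤ ∫⁻ _ in Ioc (0:ℝ) y⁻¹, ENNReal.ofReal y := by
          apply lintegral_mono_ae
          rw [ae_restrict_iff' measurableSet_Ioc]
          exact ae_of_all _ fun u hu => ENNReal.ofReal_le_ofReal (f_le_y hu.1)
      _ = ENNReal.ofReal y * volume (Ioc (0:ℝ) y⁻¹) := setLIntegral_const _ _
      _ = ENNReal.ofReal 1 := by
          rw [Real.volume_Ioc, sub_zero, ← ENNReal.ofReal_mul hy0.le,
            mul_inv_cancel₀ hy0.ne']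
  have h3 : ∫⁻ u in Ioc y⁻¹ β, ENNReal.ofReal (f u y)
      ≤ ENNReal.ofReal (Real.log β + Real.log y) := by
    calc ∫⁻ u in Ioc y⁻¹ β, ENNReal.ofReal (f u y)
        ≤ ∫⁻ u in Ioc y⁻¹ β, ENNReal.ofReal (1 / u) := by
          apply lintegral_mono_ae
          rw [ae_restrict_iff' measurableSet_Ioc]
          exact ae_of_all _ fun u hu => ENNReal.ofReal_le_ofReal (f_le_inv (ha.trans hu.1))
      _ = ENNReal.ofReal (Real.log β - Real.log y⁻¹) := lintegral_inv_Ioc ha haβ.le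
      _ = ENNReal.ofReal (Real.log β + Real.log y) := by rw [Real.log_inv]; ring_nf
  calc _ ≤ ENNReal.ofReal 1 + ENNReal.ofReal (Real.log β + Real.log y) := add_le_add h2 h3
    _ = ENNReal.ofReal (1 + (Real.log β + Real.log y)) :=
        (ENNReal.ofReal_add zero_le_one hlog).symm

lemma g_lower {β y : ℝ} (hβ : 0 < β) (hy : max 1 (β⁻¹ ^ 2) < y) :
    ENNReal.ofReal ((1 - Real.exp (-1)) / 2 * Real.log y)
      ≤ ∫⁻ u in Ioc 0 β, ENNReal.ofReal (f u y) := by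
  have hy1 : 1 < y := lt_of_le_of_lt (le_max_left _ _) hy
  have hy2 : β⁻¹ ^ 2 < y := lt_of_le_of_lt (le_max_right _ _) hy
  have hy0 : 0 < y := by linarith
  have hlogy : 0 < Real.log y := Real.log_pos hy1
  have hc : 0 < 1 - Real.exp (-1) := by
    have : Real.exp (-1) < 1 := Real.exp_lt_one_iff.mpr (by norm_num)
    linarith
  have hlogβ : -2 * Real.log β ≤ Real.log y := by
    have h := Real.log_le_log (by positivity) hy2.le
    rw [Real.log_pow, Real.log_inv] at h
    push_cast at h
    linarith
  have hyβ : β⁻¹ < y := by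
    rcases le_or_gt β⁻¹ 1 with h | h
    · linarith
    · nlinarith
  have ha : 0 < y⁻¹ := by positivity
  have haβ : y⁻¹ < β := by
    rw [inv_eq_one_div, div_lt_iff₀ hy0]
    calc (1:ℝ) = β * β⁻¹ := (mul_inv_cancel₀ hβ.ne').symm
      _ < β * y := by exact mul_lt_mul_of_pos_left hyβ hβ
  calc ENNReal.ofReal ((1 - Real.exp (-1)) / 2 * Real.log y)
      ≤ ENNReal.ofReal ((1 - Real.exp (-1)) * (Real.log β + Real.log y)) := by
        apply ENNReal.ofReal_le_ofReal
        nlinarith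
    _ = ENNReal.ofReal (1 - Real.exp (-1))
        * ENNReal.ofReal (Real.log β - Real.log y⁻¹) := by
        rw [← ENNReal.ofReal_mul hc.le, Real.log_inv]; ring_nf
    _ = ∫⁻ u in Ioc y⁻¹ β, ENNReal.ofReal (1 - Real.exp (-1)) * ENNReal.ofReal (1 / u) := by
        rw [lintegral_const_mul' _ _ ENNReal.ofReal_ne_top, lintegral_inv_Ioc ha haβ.le]
    _ ≤ ∫⁻ u in Ioc y⁻¹ β, ENNReal.ofReal (f u y) := by
        apply lintegral_mono_ae
        rw [ae_restrict_iff' measurableSet_Ioc]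
        refine ae_of_all _ fun u hu => ?_
        have hu0 : 0 < u := ha.trans hu.1
        rw [← ENNReal.ofReal_mul hc.le]
        apply ENNReal.ofReal_le_ofReal
        rw [mul_one_div]
        apply f_ge hu0
        rw [← inv_mul_cancel₀ hy0.ne', mul_comm y⁻¹ y, mul_comm u y]
        exact mul_le_mul_of_nonneg_left hu.1.le hy0.le
    _ ≤ ∫⁻ u in Ioc 0 β, ENNReal.ofReal (f u y) :=
        lintegral_mono_set (Ioc_subset_Ioc_left ha.le)

end Stmt14

namespace Stmt14

lemma finite_of_mul {c A B : ℝ≥0∞} (hc0 : c ≠ 0) (hct : c ≠ ⊤) (h : c * A ≤ B)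
    (hB : B < ⊤) : A < ⊤ := by
  have : A = c⁻¹ * (c * A) := by rw [← mul_assoc, ENNReal.inv_mul_cancel hc0 hct, one_mul]
  rw [this]
  exact lt_of_le_of_lt (mul_le_mul_right h _)
    (ENNReal.mul_lt_top (ENNReal.inv_lt_top.mpr (pos_iff_ne_zero.mpr hc0)) hB)

variable {ν : Measure ℝ}
  (hν : ∫⁻ y in Set.Ioi (0 : ℝ), ENNReal.ofReal (min 1 y) ∂ν < ⊤)

include hν

lemma nu_finite {a : ℝ} (ha : 0 < a) : ν (Ioi a) < ⊤ := by
  apply finite_of_mul (c := ENNReal.ofReal (min 1 a)) ?_ ENNReal.ofReal_ne_top ?_ hν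
  · simp only [ne_eq, ENNReal.ofReal_eq_zero, not_le]
    exact lt_min one_pos ha
  · calc ENNReal.ofReal (min 1 a) * ν (Ioi a)
        = ∫⁻ _ in Ioi a, ENNReal.ofReal (min 1 a) ∂ν := (setLIntegral_const _ _).symm
      _ ≤ ∫⁻ y in Ioi a, ENNReal.ofReal (min 1 y) ∂ν := by
          apply lintegral_mono_ae
          rw [ae_restrict_iff' measurableSet_Ioi]
          refine ae_of_all _ fun y hy => ENNReal.ofReal_le_ofReal ?_
          exact min_le_min le_rfl (le_of_lt hy)
      _ ≤ ∫⁻ y in Ioi 0, ENNReal.ofReal (min 1 y) ∂ν :=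
          lintegral_mono_set (Ioi_subset_Ioi ha.le)

lemma sigmaFinite_restrict : SigmaFinite (ν.restrict (Ioi 0)) := by
  refine ⟨⟨⟨fun n => Ioi ((n + 1 : ℝ)⁻¹) ∪ Iic 0, fun _ => trivial, fun n => ?_, ?_⟩⟩⟩
  · have hn : (0:ℝ) < (n + 1 : ℝ)⁻¹ := by positivity
    apply lt_of_le_of_lt (measure_union_le _ _)
    have h1 : (ν.restrict (Ioi 0)) (Ioi ((n + 1 : ℝ)⁻¹)) ≤ ν (Ioi ((n + 1 : ℝ)⁻¹)) :=
      Measure.restrict_le_self _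
    have h2 : (ν.restrict (Ioi 0)) (Iic 0) = 0 := by
      rw [Measure.restrict_apply measurableSet_Iic]
      have : Iic (0:ℝ) ∩ Ioi 0 = ∅ := by
        ext x; simp only [mem_inter_iff, mem_Iic, mem_Ioi, mem_empty_iff_false, iff_false]
        rintro ⟨h1, h2⟩; linarith
      rw [this, measure_empty]
    rw [h2]
    simpa using lt_of_le_of_lt h1 (nu_finite hν hn)
  · rw [iUnion_union_distrib]
    apply eq_univ_of_forall
    intro x
    rcases le_or_gt x 0 with h | h
    · exact Or.inr (mem_iUnion.mpr ⟨0, h⟩)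
    · left
      obtain ⟨n, hn⟩ := exists_nat_one_div_lt h
      exact mem_iUnion.mpr ⟨n, by rw [one_div] at hn; exact hn⟩

lemma integrable_min : Integrable (fun y => min 1 y) (ν.restrict (Ioi 0)) := by
  have hnn : 0 ≤ᶠ[ae (ν.restrict (Ioi 0))] fun y => min 1 y := by
    rw [Filter.EventuallyLE, ae_restrict_iff' measurableSet_Ioi]
    exact ae_of_all _ fun y hy => le_min zero_le_one (le_of_lt hy)
  refine ⟨(measurable_const.min measurable_id).aestronglyMeasurable, ?_⟩
  rw [hasFiniteIntegral_iff_ofReal hnn]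
  exact hν

end Stmt14

namespace Stmt14
variable {ν : Measure ℝ}
  (hν : ∫⁻ y in Set.Ioi (0 : ℝ), ENNReal.ofReal (min 1 y) ∂ν < ⊤)
include hν

lemma integrable_f {u : ℝ} (hu : 0 < u) :
    Integrable (fun y => f u y) (ν.restrict (Ioi 0)) := by
  apply Integrable.mono' ((integrable_min hν).const_mul (max 1 (1 / u)))
    ((measurable_f u).aestronglyMeasurable)
  rw [ae_restrict_iff' measurableSet_Ioi]
  refine ae_of_all _ fun y hy => ?_
  have hy0 : (0:ℝ) < y := hy
  rw [Real.norm_of_nonneg (f_nonneg hu.le hy0.le)]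
  rcases le_or_gt y 1 with h | h
  · calc f u y ≤ y := f_le_y hu
      _ = 1 * min 1 y := by rw [one_mul, min_eq_right h]
      _ ≤ max 1 (1 / u) * min 1 y := by
          apply mul_le_mul_of_nonneg_right (le_max_left _ _)
          exact le_min zero_le_one hy0.le
  · calc f u y ≤ 1 / u := f_le_inv hu
      _ = (1 / u) * min 1 y := by rw [min_eq_left h.le, mul_one]
      _ ≤ max 1 (1 / u) * min 1 y := by
          apply mul_le_mul_of_nonneg_right (le_max_right _ _)
          exact le_min zero_le_one hy0.le

lemma pointwise_ofReal {φ : ℝ → ℝ}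
    (hφ : ∀ β ≥ (0 : ℝ), φ β = ∫ y in Set.Ioi (0 : ℝ), (1 - Real.exp (-(β * y))) ∂ν)
    {u : ℝ} (hu : 0 < u) :
    ENNReal.ofReal (φ u / u) = ∫⁻ y in Ioi 0, ENNReal.ofReal (f u y) ∂ν := by
  have h1 : φ u / u = ∫ y in Ioi 0, f u y ∂ν := by
    rw [hφ u hu.le, ← integral_div]
    rfl
  rw [h1]
  apply ofReal_integral_eq_lintegral_ofReal (integrable_f hν hu)
  rw [Filter.EventuallyLE, ae_restrict_iff' measurableSet_Ioi]
  exact ae_of_all _ fun y hy => f_nonneg hu.le (le_of_lt hy)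

lemma key {φ : ℝ → ℝ}
    (hφ : ∀ β ≥ (0 : ℝ), φ β = ∫ y in Set.Ioi (0 : ℝ), (1 - Real.exp (-(β * y))) ∂ν)
    {β : ℝ} (hβ : 0 < β) :
    (∫⁻ u in Set.Ioc (0 : ℝ) β, ENNReal.ofReal (φ u / u))
      = ∫⁻ y in Ioi 0, (∫⁻ u in Ioc 0 β, ENNReal.ofReal (f u y)) ∂ν := by
  haveI := sigmaFinite_restrict hν
  rw [setLIntegral_congr_fun_ae measurableSet_Ioc
    (ae_of_all _ fun u (hu : u ∈ Ioc 0 β) => pointwise_ofReal hν hφ hu.1)]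
  exact lintegral_lintegral_swap measurable_f2.aemeasurable

end Stmt14

open Stmt14

/-- log-moment dichotomy. For every `β > 0`, `∫_0^β φ(u)/u du < ∞` if
and only if `∫_1^∞ log y ν(dy) < ∞`. -/
theorem stmt_14
    (ν : Measure ℝ) (φ : ℝ → ℝ)
    (hν : ∫⁻ y in Set.Ioi (0 : ℝ), ENNReal.ofReal (min 1 y) ∂ν < ⊤)
    (hφ : ∀ β ≥ (0 : ℝ), φ β = ∫ y in Set.Ioi (0 : ℝ), (1 - Real.exp (-(β * y))) ∂ν)
    (β : ℝ) (hβ : 0 < β) :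
    (∫⁻ u in Set.Ioc (0 : ℝ) β, ENNReal.ofReal (φ u / u)) < ⊤ ↔
      (∫⁻ y in Set.Ioi (1 : ℝ), ENNReal.ofReal (Real.log y) ∂ν) < ⊤ := by
  rw [key hν hφ hβ]
  constructor
  · -- forward
    intro h
    set M := max 1 (β⁻¹ ^ 2) with hM
    have hM1 : (1:ℝ) ≤ M := le_max_left _ _
    rw [← Ioc_union_Ioi_eq_Ioi hM1, lintegral_union measurableSet_Ioi (Ioc_disjoint_Ioi le_rfl)]
    apply ENNReal.add_lt_top.mpr
    constructor
    · calc ∫⁻ y in Ioc (1:ℝ) M, ENNReal.ofReal (Real.log y) ∂ν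
          ≤ ∫⁻ _ in Ioc (1:ℝ) M, ENNReal.ofReal (Real.log M) ∂ν := by
            apply lintegral_mono_ae
            rw [ae_restrict_iff' measurableSet_Ioc]
            refine ae_of_all _ fun y hy => ENNReal.ofReal_le_ofReal ?_
            exact Real.log_le_log (by linarith [hy.1]) hy.2
        _ = ENNReal.ofReal (Real.log M) * ν (Ioc 1 M) := setLIntegral_const _ _
        _ ≤ ENNReal.ofReal (Real.log M) * ν (Ioi 1) := by
            exact mul_le_mul_right (measure_mono Ioc_subset_Ioi_self) _
        _ < ⊤ := ENNReal.mul_lt_top ENNReal.ofReal_lt_top (nu_finite hν one_pos)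
    · have hc : (0:ℝ) < (1 - Real.exp (-1)) / 2 := by
        have : Real.exp (-1) < 1 := Real.exp_lt_one_iff.mpr (by norm_num)
        linarith
      apply finite_of_mul (c := ENNReal.ofReal ((1 - Real.exp (-1)) / 2))
        (by simp [hc]) ENNReal.ofReal_ne_top ?_ h
      calc ENNReal.ofReal ((1 - Real.exp (-1)) / 2)
            * ∫⁻ y in Ioi M, ENNReal.ofReal (Real.log y) ∂ν
          = ∫⁻ y in Ioi M, ENNReal.ofReal ((1 - Real.exp (-1)) / 2)
              * ENNReal.ofReal (Real.log y) ∂ν :=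
            (lintegral_const_mul' _ _ ENNReal.ofReal_ne_top).symm
        _ ≤ ∫⁻ y in Ioi M, (∫⁻ u in Ioc 0 β, ENNReal.ofReal (f u y)) ∂ν := by
            apply lintegral_mono_ae
            rw [ae_restrict_iff' measurableSet_Ioi]
            refine ae_of_all _ fun y hy => ?_
            rw [← ENNReal.ofReal_mul hc.le]
            exact g_lower hβ hy
        _ ≤ ∫⁻ y in Ioi 0, (∫⁻ u in Ioc 0 β, ENNReal.ofReal (f u y)) ∂ν :=
            lintegral_mono_set (Ioi_subset_Ioi (by linarith))
  · -- reverse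
    intro h
    set K := max 1 β⁻¹ with hK
    have hK1 : (1:ℝ) ≤ K := le_max_left _ _
    have hK0 : (0:ℝ) ≤ K := by linarith
    rw [show Ioi (0:ℝ) = Ioc 0 K ∪ Ioi K from (Ioc_union_Ioi_eq_Ioi hK0).symm,
      lintegral_union measurableSet_Ioi (Ioc_disjoint_Ioi le_rfl)]
    apply ENNReal.add_lt_top.mpr
    constructor
    · calc ∫⁻ y in Ioc (0:ℝ) K, (∫⁻ u in Ioc 0 β, ENNReal.ofReal (f u y)) ∂ν
          ≤ ∫⁻ y in Ioc (0:ℝ) K, ENNReal.ofReal (β * K) * ENNReal.ofReal (min 1 y) ∂ν := by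
            apply lintegral_mono_ae
            rw [ae_restrict_iff' measurableSet_Ioc]
            refine ae_of_all _ fun y hy => ?_
            refine (g_le_mul hβ hy.1.le).trans ?_
            rw [← ENNReal.ofReal_mul (by positivity)]
            apply ENNReal.ofReal_le_ofReal
            rcases le_or_gt y 1 with h1 | h1
            · rw [min_eq_right h1]
              nlinarith [mul_nonneg (mul_pos hβ hy.1).le (sub_nonneg.mpr hK1)]
            · rw [min_eq_left h1.le]
              nlinarith [hy.2]
        _ = ENNReal.ofReal (β * K) * ∫⁻ y in Ioc (0:ℝ) K, ENNReal.ofReal (min 1 y) ∂ν :=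
            lintegral_const_mul' _ _ ENNReal.ofReal_ne_top
        _ ≤ ENNReal.ofReal (β * K) * ∫⁻ y in Ioi (0:ℝ), ENNReal.ofReal (min 1 y) ∂ν :=
            mul_le_mul_right (lintegral_mono_set Ioc_subset_Ioi_self) _
        _ < ⊤ := ENNReal.mul_lt_top ENNReal.ofReal_lt_top hν
    · calc ∫⁻ y in Ioi K, (∫⁻ u in Ioc 0 β, ENNReal.ofReal (f u y)) ∂ν
          ≤ ∫⁻ y in Ioi K, (ENNReal.ofReal (1 + |Real.log β|)
              + ENNReal.ofReal (Real.log y)) ∂ν := by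
            apply lintegral_mono_ae
            rw [ae_restrict_iff' measurableSet_Ioi]
            refine ae_of_all _ fun y hy => ?_
            have hy1 : 1 < y := lt_of_le_of_lt hK1 hy
            have hyβ : β⁻¹ < y := lt_of_le_of_lt (le_max_right _ _) hy
            refine (g_le_log hβ hy1 hyβ).trans ?_
            calc ENNReal.ofReal (1 + (Real.log β + Real.log y))
                = ENNReal.ofReal ((1 + Real.log β) + Real.log y) := by ring_nf
              _ ≤ ENNReal.ofReal (1 + Real.log β) + ENNReal.ofReal (Real.log y) :=
                  ENNReal.ofReal_add_le
              _ ≤ ENNReal.ofReal (1 + |Real.log β|) + ENNReal.ofReal (Real.log y) := by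
                  gcongr
                  exact le_abs_self _
        _ = ENNReal.ofReal (1 + |Real.log β|) * ν (Ioi K)
            + ∫⁻ y in Ioi K, ENNReal.ofReal (Real.log y) ∂ν := by
            rw [lintegral_add_left measurable_const, setLIntegral_const]
        _ < ⊤ := by
            apply ENNReal.add_lt_top.mpr
            refine ⟨ENNReal.mul_lt_top ENNReal.ofReal_lt_top (nu_finite hν (by linarith)), ?_⟩
            exact lt_of_le_of_lt (lintegral_mono_set (Ioi_subset_Ioi hK1)) h
end
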